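/- arXiv:0809.1052 — 4 statements merged into one kernel-verified Lean document; each statement's English description precedes it below -/
import Mathlib

section
/- The Terwilliger algebra T of the one-class association scheme K_m is isomorphic as a ℂ-algebra to M_2(ℂ) if m = 2, and to M_2(ℂ) × ℂ (i.e., M_2(ℂ) ⊕ M_1(ℂ)) if m ≥ 3. In particular dim_ℂ T = 4 if m = 2 and dim_ℂ T = 5 if m ≥ 3. -/
open scoped Classical

noncomputable section

/-- The adjacency matrix `A_1 = J - I` of the complete graph `K_m`. -/
def kA1 (m : ℕ) : Matrix (Fin m) (Fin m) ℂ :=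
  Matrix.of fun x y => if x ≠ y then 1 else 0

/-- The dual idempotent `E_0^*` with respect to the base vertex `x₀ = 1`
(0-indexed: `0`). -/
def kE0 (m : ℕ) (hm : 2 ≤ m) : Matrix (Fin m) (Fin m) ℂ :=
  Matrix.of fun x y => if x = y ∧ x = (⟨0, by omega⟩ : Fin m) then 1 else 0

/-- The Terwilliger algebra of the one-class scheme `K_m`: the unital
subalgebra of `Matrix (Fin m) (Fin m) ℂ` generated by
`A_0 = 1`, `A_1 = J - I`, `E_0^*` and `E_1^* = 1 - E_0^*`. -/
def kT (m : ℕ) (hm : 2 ≤ m) : Subalgebra ℂ (Matrix (Fin m) (Fin m) ℂ) :=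
  Algebra.adjoin ℂ {1, kA1 m, kE0 m hm, 1 - kE0 m hm}

namespace TerwAux

open Matrix

lemma vecMulVec_mul_vecMulVec {n : ℕ} (a b c d : Fin n → ℂ) :
    Matrix.vecMulVec a b * Matrix.vecMulVec c d = (b ⬝ᵥ c) • Matrix.vecMulVec a d := by
  ext x y
  simp only [Matrix.mul_apply, Matrix.vecMulVec_apply, Matrix.smul_apply, dotProduct,
    smul_eq_mul, Finset.sum_mul, Finset.mul_sum]
  refine Finset.sum_congr rfl fun k _ => by ring

variable (m : ℕ) (hm : 2 ≤ m)

def z0 : Fin m := ⟨0, Nat.lt_of_lt_of_le Nat.zero_lt_two hm⟩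

def uvec : Fin m → ℂ := fun x => if x = z0 m hm then 1 else 0
def wvec : Fin m → ℂ := fun x => if x = z0 m hm then 0 else 1

def κ : ℂ := ((m : ℂ) - 1)⁻¹

include hm

lemma m1_ne : ((m : ℂ) - 1) ≠ 0 := by
  intro h
  have h1 : (m : ℂ) = ((1 : ℕ) : ℂ) := by push_cast; linear_combination h
  have : m = 1 := Nat.cast_injective h1
  omega

lemma κ_mul : κ m * ((m : ℂ) - 1) = 1 := inv_mul_cancel₀ (m1_ne m hm)

lemma uu : uvec m hm ⬝ᵥ uvec m hm = 1 := by
  simp [dotProduct, uvec, ite_and, mul_ite]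
lemma uw : uvec m hm ⬝ᵥ wvec m hm = 0 := by
  refine Finset.sum_eq_zero fun x _ => ?_
  by_cases h : x = z0 m hm <;> simp [uvec, wvec, h]
lemma wu : wvec m hm ⬝ᵥ uvec m hm = 0 := by
  refine Finset.sum_eq_zero fun x _ => ?_
  by_cases h : x = z0 m hm <;> simp [uvec, wvec, h]
lemma ww : wvec m hm ⬝ᵥ wvec m hm = (m : ℂ) - 1 := by
  have : ∀ x : Fin m, wvec m hm x * wvec m hm x
      = 1 - (if x = z0 m hm then (1:ℂ) else 0) := by
    intro x; by_cases h : x = z0 m hm <;> simp [wvec, h]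
  simp only [dotProduct, this, Finset.sum_sub_distrib, Finset.sum_const,
    Finset.card_univ, Fintype.card_fin, nsmul_eq_mul, mul_one, Finset.sum_ite_eq',
    Finset.mem_univ, if_true]

def E : Matrix (Fin m) (Fin m) ℂ := Matrix.vecMulVec (uvec m hm) (uvec m hm)
def F01 : Matrix (Fin m) (Fin m) ℂ := κ m • Matrix.vecMulVec (uvec m hm) (wvec m hm)
def F10 : Matrix (Fin m) (Fin m) ℂ := Matrix.vecMulVec (wvec m hm) (uvec m hm)
def F11 : Matrix (Fin m) (Fin m) ℂ := κ m • Matrix.vecMulVec (wvec m hm) (wvec m hm)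
def P : Matrix (Fin m) (Fin m) ℂ := 1 - E m hm - F11 m hm

-- product lemmas
lemma EE : E m hm * E m hm = E m hm := by
  simp [E, vecMulVec_mul_vecMulVec, uu m hm]
lemma EF01 : E m hm * F01 m hm = F01 m hm := by
  simp [E, F01, Matrix.mul_smul, vecMulVec_mul_vecMulVec, uu m hm]
lemma EF10 : E m hm * F10 m hm = 0 := by
  simp only [E, F10, vecMulVec_mul_vecMulVec, uw m hm, zero_smul]
lemma EF11 : E m hm * F11 m hm = 0 := by
  simp only [E, F11, Matrix.mul_smul, vecMulVec_mul_vecMulVec, uw m hm, zero_smul, smul_zero]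
lemma F01E : F01 m hm * E m hm = 0 := by
  simp only [E, F01, Matrix.smul_mul, vecMulVec_mul_vecMulVec, wu m hm, zero_smul, smul_zero]
lemma F01F01 : F01 m hm * F01 m hm = 0 := by
  simp only [F01, Matrix.smul_mul, Matrix.mul_smul, vecMulVec_mul_vecMulVec, wu m hm,
    zero_smul, smul_zero]
lemma F01F10 : F01 m hm * F10 m hm = E m hm := by
  simp only [F01, F10, E, Matrix.smul_mul, vecMulVec_mul_vecMulVec, ww m hm, smul_smul]
  rw [κ_mul m hm, one_smul]
lemma F01F11 : F01 m hm * F11 m hm = F01 m hm := by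
  simp only [F01, F11, Matrix.smul_mul, Matrix.mul_smul, vecMulVec_mul_vecMulVec,
    ww m hm, smul_smul]
  rw [κ_mul m hm, mul_one]
lemma F10E : F10 m hm * E m hm = F10 m hm := by
  simp [F10, E, vecMulVec_mul_vecMulVec, uu m hm]
lemma F10F01 : F10 m hm * F01 m hm = F11 m hm := by
  simp [F10, F01, F11, Matrix.mul_smul, vecMulVec_mul_vecMulVec, uu m hm]
lemma F10F10 : F10 m hm * F10 m hm = 0 := by
  simp only [F10, vecMulVec_mul_vecMulVec, uw m hm, zero_smul]
lemma F10F11 : F10 m hm * F11 m hm = 0 := by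
  simp only [F10, F11, Matrix.mul_smul, vecMulVec_mul_vecMulVec, uw m hm, zero_smul, smul_zero]
lemma F11E : F11 m hm * E m hm = 0 := by
  simp only [F11, E, Matrix.smul_mul, vecMulVec_mul_vecMulVec, wu m hm, zero_smul, smul_zero]
lemma F11F01 : F11 m hm * F01 m hm = 0 := by
  simp only [F11, F01, Matrix.smul_mul, Matrix.mul_smul, vecMulVec_mul_vecMulVec, wu m hm,
    zero_smul, smul_zero]
lemma F11F10 : F11 m hm * F10 m hm = F10 m hm := by
  simp only [F11, F10, Matrix.smul_mul, vecMulVec_mul_vecMulVec, ww m hm, smul_smul]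
  rw [κ_mul m hm, one_smul]
lemma F11F11 : F11 m hm * F11 m hm = F11 m hm := by
  simp only [F11, Matrix.smul_mul, Matrix.mul_smul, vecMulVec_mul_vecMulVec, ww m hm, smul_smul]
  rw [κ_mul m hm, mul_one]

lemma EP : E m hm * P m hm = 0 := by
  simp [P, mul_sub, EE m hm, EF11 m hm]
lemma F01P : F01 m hm * P m hm = 0 := by
  simp [P, mul_sub, F01E m hm, F01F11 m hm]
lemma F10P : F10 m hm * P m hm = 0 := by
  simp [P, mul_sub, F10E m hm, F10F11 m hm]
lemma F11P : F11 m hm * P m hm = 0 := by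
  simp [P, mul_sub, F11E m hm, F11F11 m hm]
lemma PE : P m hm * E m hm = 0 := by
  simp [P, sub_mul, EE m hm, F11E m hm]
lemma PF01 : P m hm * F01 m hm = 0 := by
  simp [P, sub_mul, EF01 m hm, F11F01 m hm]
lemma PF10 : P m hm * F10 m hm = 0 := by
  simp [P, sub_mul, EF10 m hm, F11F10 m hm]
lemma PF11 : P m hm * F11 m hm = 0 := by
  simp [P, sub_mul, EF11 m hm, F11F11 m hm]
lemma PP : P m hm * P m hm = P m hm := by
  simp [P, mul_sub, PE m hm, PF11 m hm, sub_mul, EE m hm, EF11 m hm, F11E m hm, F11F11 m hm]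

def psi (M : Matrix (Fin 2) (Fin 2) ℂ) (c : ℂ) : Matrix (Fin m) (Fin m) ℂ :=
  M 0 0 • E m hm + M 0 1 • F01 m hm + M 1 0 • F10 m hm + M 1 1 • F11 m hm + c • P m hm

def Psi : (Matrix (Fin 2) (Fin 2) ℂ × ℂ) →ₐ[ℂ] Matrix (Fin m) (Fin m) ℂ where
  toFun p := psi m hm p.1 p.2
  map_one' := by
    simp only [Prod.fst_one, Prod.snd_one, psi, Matrix.one_apply_eq,
      Matrix.one_apply_ne (show (0:Fin 2) ≠ 1 by decide),
      Matrix.one_apply_ne (show (1:Fin 2) ≠ 0 by decide), one_smul, zero_smul,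
      add_zero, zero_add, P]
    abel
  map_mul' p q := by
    obtain ⟨M, c⟩ := p; obtain ⟨N, d⟩ := q
    show psi m hm (M * N) (c * d) = psi m hm M c * psi m hm N d
    simp only [psi, Matrix.mul_apply, Fin.sum_univ_two, add_mul, mul_add,
      Matrix.smul_mul, Matrix.mul_smul, smul_smul,
      EE m hm, EF01 m hm, EF10 m hm, EF11 m hm, EP m hm,
      F01E m hm, F01F01 m hm, F01F10 m hm, F01F11 m hm, F01P m hm,
      F10E m hm, F10F01 m hm, F10F10 m hm, F10F11 m hm, F10P m hm,
      F11E m hm, F11F01 m hm, F11F10 m hm, F11F11 m hm, F11P m hm,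
      PE m hm, PF01 m hm, PF10 m hm, PF11 m hm, PP m hm,
      smul_zero, add_zero, zero_add]
    module
  map_zero' := by
    show psi m hm 0 0 = 0
    simp [psi]
  map_add' p q := by
    obtain ⟨M, c⟩ := p; obtain ⟨N, d⟩ := q
    show psi m hm (M + N) (c + d) = psi m hm M c + psi m hm N d
    simp only [psi, Matrix.add_apply, add_smul]
    abel
  commutes' r := by
    show psi m hm (algebraMap ℂ _ r) r = algebraMap ℂ _ r
    rw [Algebra.algebraMap_eq_smul_one (A := Matrix (Fin m) (Fin m) ℂ)]
    simp only [psi, Matrix.algebraMap_matrix_apply, if_pos rfl,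
      if_neg (show (0:Fin 2) ≠ 1 by decide), if_neg (show (1:Fin 2) ≠ 0 by decide),
      Algebra.algebraMap_self_apply, zero_smul, add_zero, zero_add, P, smul_sub, if_true,
      eq_self_iff_true]
    module

end TerwAux

namespace TerwAux2
open Matrix TerwAux

variable (m : ℕ) (hm : 2 ≤ m)

include hm

lemma κ_ne : κ m ≠ 0 := inv_ne_zero (m1_ne m hm)

lemma psi_apply (M : Matrix (Fin 2) (Fin 2) ℂ) (c : ℂ) (x y : Fin m) :
    psi m hm M c x y =
      M 0 0 * (uvec m hm x * uvec m hm y) + M 0 1 * (κ m * (uvec m hm x * wvec m hm y))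
      + M 1 0 * (wvec m hm x * uvec m hm y) + M 1 1 * (κ m * (wvec m hm x * wvec m hm y))
      + c * ((if x = y then 1 else 0) - uvec m hm x * uvec m hm y
          - κ m * (wvec m hm x * wvec m hm y)) := by
  simp [psi, P, E, F01, F10, F11, Matrix.vecMulVec_apply, Matrix.one_apply, Matrix.sub_apply,
    mul_assoc]

lemma uvec_z0 : uvec m hm (z0 m hm) = 1 := by simp [uvec]
lemma wvec_z0 : wvec m hm (z0 m hm) = 0 := by simp [wvec]

lemma Psi_inj (hm3 : 3 ≤ m) : Function.Injective (Psi m hm) := by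
  rw [injective_iff_map_eq_zero]
  rintro ⟨M, c⟩ h
  have hent : ∀ x y, psi m hm M c x y = 0 := by
    intro x y
    have : psi m hm M c = 0 := h
    rw [this]; rfl
  set x0 : Fin m := z0 m hm with hx0
  set x1 : Fin m := ⟨1, by omega⟩ with hx1
  set x2 : Fin m := ⟨2, by omega⟩ with hx2
  have h10 : x1 ≠ x0 := by simp [hx0, hx1, z0, Fin.ext_iff]
  have h20 : x2 ≠ x0 := by simp [hx0, hx2, z0, Fin.ext_iff]
  have h12 : x1 ≠ x2 := by simp [hx1, hx2, Fin.ext_iff]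
  have hu0 : uvec m hm x0 = 1 := by simp [hx0, uvec]
  have hw0 : wvec m hm x0 = 0 := by simp [hx0, wvec]
  have hu1 : uvec m hm x1 = 0 := by simp [uvec, show x1 ≠ z0 m hm from h10]
  have hu2 : uvec m hm x2 = 0 := by simp [uvec, show x2 ≠ z0 m hm from h20]
  have hw1 : wvec m hm x1 = 1 := by simp [wvec, show x1 ≠ z0 m hm from h10]
  have hw2 : wvec m hm x2 = 1 := by simp [wvec, show x2 ≠ z0 m hm from h20]
  have e00 := hent x0 x0
  rw [psi_apply] at e00
  simp only [hu0, hw0, mul_one, mul_zero, zero_mul, one_mul, sub_zero, if_pos rfl,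
    sub_self, add_zero, zero_add] at e00
  have e01 := hent x0 x1
  rw [psi_apply] at e01
  simp only [hu0, hw0, hu1, hw1, mul_one, mul_zero, zero_mul, one_mul, sub_zero, zero_sub,
    if_neg (Ne.symm h10), sub_self, add_zero, zero_add, neg_zero] at e01
  have e10 := hent x1 x0
  rw [psi_apply] at e10
  simp only [hu0, hw0, hu1, hw1, mul_one, mul_zero, zero_mul, one_mul, sub_zero, zero_sub,
    if_neg h10, sub_self, add_zero, zero_add, neg_zero] at e10
  have e11 := hent x1 x1
  rw [psi_apply] at e11
  simp only [hu1, hw1, mul_one, mul_zero, zero_mul, one_mul, sub_zero, zero_sub,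
    if_pos rfl, add_zero, zero_add] at e11
  have e12 := hent x1 x2
  rw [psi_apply] at e12
  simp only [hu1, hu2, hw1, hw2, mul_one, mul_zero, zero_mul, one_mul, sub_zero, zero_sub,
    if_neg h12, add_zero, zero_add] at e12
  have hc : c = 0 := by
    have := sub_eq_zero.mpr (e11.trans e12.symm)
    ring_nf at this
    simpa using this
  have hM01 : M 0 1 = 0 := by
    rcases mul_eq_zero.mp e01 with h' | h'
    · exact h'
    · exact absurd h' (κ_ne m hm)
  have hM11 : M 1 1 = 0 := by
    rw [hc] at e11
    simp at e11
    rcases e11 with h' | h'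
    · exact h'
    · exact absurd h' (κ_ne m hm)
  refine Prod.ext ?_ hc
  ext i j
  fin_cases i <;> fin_cases j <;>
    simp_all
end TerwAux2

namespace TerwAux3
open Matrix TerwAux TerwAux2

variable (m : ℕ) (hm : 2 ≤ m)

include hm

lemma kE0_apply (x y : Fin m) : kE0 m hm x y = if x = y ∧ x = z0 m hm then 1 else 0 := rfl
lemma kA1_apply (x y : Fin m) : kA1 m x y = if x ≠ y then 1 else 0 := rfl

lemma E_eq : E m hm = kE0 m hm := by
  ext x y
  rw [kE0_apply m hm, E, Matrix.vecMulVec_apply]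
  by_cases hx : x = z0 m hm <;> by_cases hy : y = z0 m hm
  · subst hx; subst hy; simp [uvec]
  · subst hx
    have h1 : z0 m hm ≠ y := fun h => hy h.symm
    simp [uvec, hy, h1]
  · subst hy; simp [uvec, hx]
  · simp [uvec, hx, hy]

lemma UW_eq : Matrix.vecMulVec (uvec m hm) (wvec m hm) = kE0 m hm * kA1 m := by
  ext x y
  rw [Matrix.mul_apply]
  have hterm : ∀ k : Fin m, kE0 m hm x k * kA1 m k y
      = if x = k then (if x = z0 m hm then kA1 m k y else 0) else 0 := by
    intro k
    rw [kE0_apply m hm]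
    by_cases h1 : x = k <;> by_cases h2 : x = z0 m hm <;> simp [h1, h2]
  rw [Finset.sum_congr rfl fun k _ => hterm k, Finset.sum_ite_eq]
  simp only [Finset.mem_univ, if_true]
  by_cases hx : x = z0 m hm <;> by_cases hy : y = z0 m hm
  · subst hx; subst hy; simp [uvec, wvec, kA1_apply m hm, Matrix.vecMulVec_apply]
  · subst hx
    have h1 : z0 m hm ≠ y := fun h => hy h.symm
    simp [uvec, wvec, kA1_apply m hm, Matrix.vecMulVec_apply, hy, h1]
  · subst hy; simp [uvec, wvec, kA1_apply m hm, Matrix.vecMulVec_apply, hx]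
  · simp [uvec, wvec, kA1_apply m hm, Matrix.vecMulVec_apply, hx, hy]

lemma WU_eq : Matrix.vecMulVec (wvec m hm) (uvec m hm) = kA1 m * kE0 m hm := by
  ext x y
  rw [Matrix.mul_apply]
  have hterm : ∀ k : Fin m, kA1 m x k * kE0 m hm k y
      = if k = y then (if y = z0 m hm then kA1 m x k else 0) else 0 := by
    intro k
    rw [kE0_apply m hm]
    by_cases h1 : k = y <;> by_cases h2 : y = z0 m hm <;> simp [h1, h2]
  rw [Finset.sum_congr rfl fun k _ => hterm k, Finset.sum_ite_eq']
  simp only [Finset.mem_univ, if_true]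
  by_cases hx : x = z0 m hm <;> by_cases hy : y = z0 m hm
  · subst hx; subst hy; simp [uvec, wvec, kA1_apply m hm, Matrix.vecMulVec_apply]
  · subst hx
    have h1 : z0 m hm ≠ y := fun h => hy h.symm
    simp [uvec, wvec, kA1_apply m hm, Matrix.vecMulVec_apply, hy, h1]
  · subst hy
    have h1 : x ≠ z0 m hm := hx
    simp [uvec, wvec, kA1_apply m hm, Matrix.vecMulVec_apply, hx, h1]
  · simp [uvec, wvec, kA1_apply m hm, Matrix.vecMulVec_apply, hx, hy]

lemma WW_eq : Matrix.vecMulVec (wvec m hm) (wvec m hm) = kA1 m * kE0 m hm * (kE0 m hm * kA1 m) := by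
  rw [← UW_eq m hm, ← WU_eq m hm, vecMulVec_mul_vecMulVec, uu m hm, one_smul]

lemma E_mem : E m hm ∈ kT m hm := by
  rw [E_eq m hm]
  exact Algebra.subset_adjoin (by simp)

lemma A1_mem : kA1 m ∈ kT m hm :=
  Algebra.subset_adjoin (by simp)

lemma E0_mem : kE0 m hm ∈ kT m hm :=
  Algebra.subset_adjoin (by simp)

lemma F01_mem : F01 m hm ∈ kT m hm := by
  rw [F01, UW_eq m hm]
  exact Subalgebra.smul_mem _ (mul_mem (E0_mem m hm) (A1_mem m hm)) _

lemma F10_mem : F10 m hm ∈ kT m hm := by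
  rw [F10, WU_eq m hm]
  exact mul_mem (A1_mem m hm) (E0_mem m hm)

lemma F11_mem : F11 m hm ∈ kT m hm := by
  rw [F11, WW_eq m hm]
  exact Subalgebra.smul_mem _
    (mul_mem (mul_mem (A1_mem m hm) (E0_mem m hm)) (mul_mem (E0_mem m hm) (A1_mem m hm))) _

lemma P_mem : P m hm ∈ kT m hm := by
  rw [P]
  exact sub_mem (sub_mem (one_mem _) (E_mem m hm)) (F11_mem m hm)

lemma A1_decomp :
    kA1 m = ((m:ℂ)-1) • F01 m hm + F10 m hm + ((m:ℂ)-2) • F11 m hm - P m hm := by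
  have hUW : ((m:ℂ)-1) • F01 m hm = Matrix.vecMulVec (uvec m hm) (wvec m hm) := by
    rw [F01, smul_smul, mul_comm, κ_mul m hm, one_smul]
  have hWW : ((m:ℂ)-2) • F11 m hm + F11 m hm
      = Matrix.vecMulVec (wvec m hm) (wvec m hm) := by
    rw [F11, smul_smul, ← add_smul]
    have h : ((m:ℂ)-2) * κ m + κ m = κ m * ((m:ℂ)-1) := by ring
    rw [h, κ_mul m hm, one_smul]
  rw [P]
  have : ((m:ℂ)-1) • F01 m hm + F10 m hm + ((m:ℂ)-2) • F11 m hm - (1 - E m hm - F11 m hm)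
      = ((m:ℂ)-1) • F01 m hm + F10 m hm + (((m:ℂ)-2) • F11 m hm + F11 m hm) + E m hm - 1 := by
    abel
  rw [this, hUW, hWW]
  ext x y
  rw [kA1_apply m hm x y]
  simp only [Matrix.add_apply, Matrix.sub_apply, Matrix.one_apply,
    Matrix.vecMulVec_apply, E, F10, uvec, wvec]
  by_cases hx : x = z0 m hm <;> by_cases hy : y = z0 m hm
  · subst hx; subst hy; simp [uvec, wvec]
  · subst hx
    have h1 : z0 m hm ≠ y := fun h => hy h.symm
    simp [uvec, wvec, hy, h1]
  · subst hy
    have h1 : x ≠ z0 m hm := hx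
    simp [uvec, wvec, hx, h1]
  · by_cases hxy : x = y
    · subst hxy; simp [uvec, wvec, hx]
    · simp [uvec, wvec, hx, hy, hxy]

lemma range_Psi : (Psi m hm).range = kT m hm := by
  apply le_antisymm
  · rintro X ⟨⟨M, c⟩, rfl⟩
    show psi m hm M c ∈ kT m hm
    rw [psi]
    exact add_mem (add_mem (add_mem (add_mem
      (Subalgebra.smul_mem _ (E_mem m hm) _)
      (Subalgebra.smul_mem _ (F01_mem m hm) _))
      (Subalgebra.smul_mem _ (F10_mem m hm) _))
      (Subalgebra.smul_mem _ (F11_mem m hm) _))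
      (Subalgebra.smul_mem _ (P_mem m hm) _)
  · rw [kT]
    apply Algebra.adjoin_le
    rintro X (rfl | rfl | rfl | rfl)
    · exact ⟨1, map_one _⟩
    · refine ⟨(!![0, (m:ℂ)-1; 1, (m:ℂ)-2], -1), ?_⟩
      show psi m hm _ _ = _
      rw [psi, A1_decomp m hm]
      norm_num [Matrix.of_apply, Matrix.cons_val', Matrix.cons_val_zero, Matrix.cons_val_one,
        Matrix.head_cons, Matrix.empty_val', Matrix.cons_val_fin_one, Matrix.head_fin_const]
      module
    · refine ⟨(!![1, 0; 0, 0], 0), ?_⟩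
      show psi m hm _ _ = _
      rw [psi, ← E_eq m hm]
      norm_num [Matrix.of_apply, Matrix.cons_val', Matrix.cons_val_zero, Matrix.cons_val_one,
        Matrix.head_cons, Matrix.empty_val', Matrix.cons_val_fin_one, Matrix.head_fin_const]
    · refine ⟨(!![0, 0; 0, 1], 1), ?_⟩
      show psi m hm _ _ = _
      rw [psi, ← E_eq m hm, P]
      norm_num [Matrix.of_apply, Matrix.cons_val', Matrix.cons_val_zero, Matrix.cons_val_one,
        Matrix.head_cons, Matrix.empty_val', Matrix.cons_val_fin_one, Matrix.head_fin_const]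

end TerwAux3

namespace TerwTwo
open Matrix

lemma e00_eq (hm : 2 ≤ 2) : Matrix.single (0 : Fin 2) 0 (1:ℂ) = kE0 2 hm := by
  ext a b
  fin_cases a <;> fin_cases b <;>
    simp [kE0, Matrix.single_apply]

lemma e01_eq (hm : 2 ≤ 2) : Matrix.single (0 : Fin 2) 1 (1:ℂ) = kE0 2 hm * kA1 2 := by
  ext a b
  fin_cases a <;> fin_cases b <;>
    simp [kE0, kA1, Matrix.single_apply, Matrix.mul_apply, Fin.sum_univ_two]

lemma e10_eq (hm : 2 ≤ 2) : Matrix.single (1 : Fin 2) 0 (1:ℂ) = kA1 2 * kE0 2 hm := by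
  ext a b
  fin_cases a <;> fin_cases b <;>
    simp [kE0, kA1, Matrix.single_apply, Matrix.mul_apply, Fin.sum_univ_two]

lemma e11_eq (hm : 2 ≤ 2) :
    Matrix.single (1 : Fin 2) 1 (1:ℂ) = kA1 2 * kE0 2 hm * (kE0 2 hm * kA1 2) := by
  ext a b
  fin_cases a <;> fin_cases b <;>
    simp [kE0, kA1, Matrix.single_apply, Matrix.mul_apply, Fin.sum_univ_two]

lemma kT_two_top (hm : 2 ≤ 2) : kT 2 hm = ⊤ := by
  rw [eq_top_iff]
  intro X _
  have hE0 : kE0 2 hm ∈ kT 2 hm := Algebra.subset_adjoin (by simp)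
  have hA1 : kA1 2 ∈ kT 2 hm := Algebra.subset_adjoin (by simp)
  rw [Matrix.matrix_eq_sum_single X]
  refine Subalgebra.sum_mem _ fun i _ => Subalgebra.sum_mem _ fun j _ => ?_
  have hsm : Matrix.single i j (X i j) = X i j • Matrix.single i j (1:ℂ) := by
    rw [Matrix.smul_single, smul_eq_mul, mul_one]
  rw [hsm]
  refine Subalgebra.smul_mem _ ?_ _
  fin_cases i <;> fin_cases j
  · show Matrix.single (0:Fin 2) 0 (1:ℂ) ∈ kT 2 hm
    rw [e00_eq hm]; exact hE0
  · show Matrix.single (0:Fin 2) 1 (1:ℂ) ∈ kT 2 hm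
    rw [e01_eq hm]; exact mul_mem hE0 hA1
  · show Matrix.single (1:Fin 2) 0 (1:ℂ) ∈ kT 2 hm
    rw [e10_eq hm]; exact mul_mem hA1 hE0
  · show Matrix.single (1:Fin 2) 1 (1:ℂ) ∈ kT 2 hm
    rw [e11_eq hm]; exact mul_mem (mul_mem hA1 hE0) (mul_mem hE0 hA1)

end TerwTwo

/-- The Terwilliger algebra of `K_m` is isomorphic to `M_2(ℂ)`
if `m = 2` and to `M_2(ℂ) × ℂ` if `m ≥ 3`; in particular its dimension is
`4` if `m = 2` and `5` if `m ≥ 3`. -/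
theorem terwilliger_Km (m : ℕ) (hm : 2 ≤ m) :
    (m = 2 → Nonempty (↥(kT m hm) ≃ₐ[ℂ] Matrix (Fin 2) (Fin 2) ℂ)) ∧
      (3 ≤ m → Nonempty (↥(kT m hm) ≃ₐ[ℂ] Matrix (Fin 2) (Fin 2) ℂ × ℂ)) ∧
      (m = 2 → Module.finrank ℂ ↥(kT m hm) = 4) ∧
      (3 ≤ m → Module.finrank ℂ ↥(kT m hm) = 5) := by
  have case2 : m = 2 → (kT m hm ≃ₐ[ℂ] Matrix (Fin m) (Fin m) ℂ) := by
    intro h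
    subst h
    exact (Subalgebra.equivOfEq _ ⊤ (TerwTwo.kT_two_top hm)).trans Subalgebra.topEquiv
  have case3 : 3 ≤ m → ((Matrix (Fin 2) (Fin 2) ℂ × ℂ) ≃ₐ[ℂ] kT m hm) := fun h3 =>
    (AlgEquiv.ofInjective (TerwAux.Psi m hm) (TerwAux2.Psi_inj m hm h3)).trans
      (Subalgebra.equivOfEq _ _ (TerwAux3.range_Psi m hm))
  have hrank2 : Module.finrank ℂ (Matrix (Fin 2) (Fin 2) ℂ) = 4 := by
    rw [Module.finrank_matrix]
    simp
  refine ⟨?_, ?_, ?_, ?_⟩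
  · intro h
    subst h
    exact ⟨case2 rfl⟩
  · intro h3
    exact ⟨(case3 h3).symm⟩
  · intro h
    subst h
    rw [(case2 rfl).toLinearEquiv.finrank_eq, hrank2]
  · intro h3
    rw [← (case3 h3).toLinearEquiv.finrank_eq, Module.finrank_prod, hrank2,
      Module.finrank_self]
end
end

section
/- For the wreath square (K_m)^{≀2}: (1) if v ∈ ℂ^X satisfies v_y = 0 for all y ∉ R_2(x₀) = {y : (x₀,y) ∈ R_2}, Σ_{y∈X} v_y = 0, and A_2 v = θ v for some θ ∈ ℂ, then the line span_ℂ{v} is invariant under every matrix in the Terwilliger algebra T (so if v ≠ 0 it spans a thin irreducible T-module of dimension 1); (2) if v ∈ ℂ^X satisfies v_y = 0 for all y ∉ R_1(x₀) = {y : (x₀,y) ∈ R_1} and Σ_{y∈X} v_y = 0, then span_ℂ{v} is invariant under every matrix in T. -/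
open scoped Classical

noncomputable section

/-- Relation `R i` of the wreath product scheme `K_{n 1} ≀ ⋯ ≀ K_{n d}`
(coordinates 0-indexed): `R 0` is the identity relation; for `1 ≤ i ≤ d`,
`(x, y) ∈ R i` iff coordinate `i - 1` is the largest coordinate where `x`
and `y` differ. -/
def wRel (d : ℕ) (n : Fin d → ℕ) (i : ℕ) (x y : ∀ k : Fin d, Fin (n k)) : Prop :=
  if h : 1 ≤ i ∧ i ≤ d then
    x ⟨i - 1, by omega⟩ ≠ y ⟨i - 1, by omega⟩ ∧
      ∀ k : Fin d, i - 1 < (k : ℕ) → x k = y k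
  else x = y

/-- Adjacency matrix `A i`. -/
def wA (d : ℕ) (n : Fin d → ℕ) (i : ℕ) :
    Matrix (∀ k : Fin d, Fin (n k)) (∀ k : Fin d, Fin (n k)) ℂ :=
  Matrix.of fun x y => if wRel d n i x y then 1 else 0

/-- The base vertex `(1, 1, …, 1)` (0-indexed: all coordinates `0`). -/
def wBase (d : ℕ) (n : Fin d → ℕ) (hn : ∀ k, 2 ≤ n k) : ∀ k : Fin d, Fin (n k) :=
  fun k => ⟨0, by have := hn k; omega⟩

/-- Dual idempotent `E_i^*` with respect to the base vertex. -/
def wE (d : ℕ) (n : Fin d → ℕ) (hn : ∀ k, 2 ≤ n k) (i : ℕ) :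
    Matrix (∀ k : Fin d, Fin (n k)) (∀ k : Fin d, Fin (n k)) ℂ :=
  Matrix.of fun y z => if y = z ∧ wRel d n i (wBase d n hn) y then 1 else 0

/-- `T₀`: the linear span of the triple products `E_i^* A_j E_h^*`. -/
def wT0 (d : ℕ) (n : Fin d → ℕ) (hn : ∀ k, 2 ≤ n k) :
    Submodule ℂ (Matrix (∀ k : Fin d, Fin (n k)) (∀ k : Fin d, Fin (n k)) ℂ) :=
  Submodule.span ℂ
    {M | ∃ i j h : ℕ, i ≤ d ∧ j ≤ d ∧ h ≤ d ∧
      M = wE d n hn i * wA d n j * wE d n hn h}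

/-- The Terwilliger algebra: the unital subalgebra generated by the `A i`
and the `E_i^*`. -/
def wT (d : ℕ) (n : Fin d → ℕ) (hn : ∀ k, 2 ≤ n k) :
    Subalgebra ℂ (Matrix (∀ k : Fin d, Fin (n k)) (∀ k : Fin d, Fin (n k)) ℂ) :=
  Algebra.adjoin ℂ
    ({M | ∃ i ≤ d, M = wA d n i} ∪ {M | ∃ i ≤ d, M = wE d n hn i})

/-- The constant family for the wreath square: `n_1 = n_2 = m`. -/
abbrev n2 (m : ℕ) : Fin 2 → ℕ := fun _ => m

/-- The Terwilliger algebra of `(K_m)^{≀2}`. -/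
def T2 (m : ℕ) (hm : 2 ≤ m) :
    Subalgebra ℂ (Matrix (∀ k : Fin 2, Fin (n2 m k)) (∀ k : Fin 2, Fin (n2 m k)) ℂ) :=
  wT 2 (n2 m) fun _ => hm


section AuxLemmas

variable {m : ℕ}

lemma pair_ext {x y : ∀ k : Fin 2, Fin (n2 m k)} (h0 : x 0 = y 0) (h1 : x 1 = y 1) : x = y := by
  funext k; fin_cases k <;> assumption

lemma rel0_iff (x y : ∀ k : Fin 2, Fin (n2 m k)) : wRel 2 (n2 m) 0 x y ↔ x = y := by
  unfold wRel; rw [dif_neg (by omega)]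

lemma rel1_iff (x y : ∀ k : Fin 2, Fin (n2 m k)) :
    wRel 2 (n2 m) 1 x y ↔ x 0 ≠ y 0 ∧ x 1 = y 1 := by
  unfold wRel; rw [dif_pos (by omega)]
  simp [Fin.forall_fin_two]

lemma rel2_iff (x y : ∀ k : Fin 2, Fin (n2 m k)) :
    wRel 2 (n2 m) 2 x y ↔ x 1 ≠ y 1 := by
  unfold wRel; rw [dif_pos (by omega)]
  simp [Fin.forall_fin_two]

lemma wA_mulVec (i : ℕ) (v : (∀ k : Fin 2, Fin (n2 m k)) → ℂ) (x) :
    (wA 2 (n2 m) i).mulVec v x = ∑ y, if wRel 2 (n2 m) i x y then v y else 0 := by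
  simp [wA, Matrix.mulVec, dotProduct, ite_mul]

lemma wE_mulVec (hm : 2 ≤ m) (i : ℕ) (v : (∀ k : Fin 2, Fin (n2 m k)) → ℂ) (x) :
    (wE 2 (n2 m) (fun _ => hm) i).mulVec v x
      = if wRel 2 (n2 m) i (wBase 2 (n2 m) fun _ => hm) x then v x else 0 := by
  by_cases hr : wRel 2 (n2 m) i (wBase 2 (n2 m) fun _ => hm) x <;>
    simp [wE, Matrix.mulVec, dotProduct, hr, ite_and, ite_mul]

lemma wA0_apply (v : (∀ k : Fin 2, Fin (n2 m k)) → ℂ) (x) :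
    (wA 2 (n2 m) 0).mulVec v x = v x := by
  rw [wA_mulVec]
  rw [Finset.sum_congr rfl fun y _ => if_congr (rel0_iff x y) rfl rfl]
  simp [Finset.sum_ite_eq]

lemma wA1_apply (v : (∀ k : Fin 2, Fin (n2 m k)) → ℂ) (x) :
    (wA 2 (n2 m) 1).mulVec v x
      = (∑ y, if y 1 = x 1 then v y else 0) - v x := by
  rw [wA_mulVec]
  rw [Finset.sum_congr rfl fun y _ => if_congr (rel1_iff x y) rfl rfl]
  have hvx : v x = ∑ y, if y = x then v y else 0 := by
    rw [Finset.sum_ite_eq' Finset.univ x v]; simp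
  rw [hvx, ← Finset.sum_sub_distrib]
  refine Finset.sum_congr rfl fun y _ => ?_
  by_cases h1 : y 1 = x 1
  · by_cases h0 : y 0 = x 0
    · have hyx : y = x := pair_ext h0 h1
      simp [hyx]
    · have hyx : y ≠ x := fun h => h0 (by rw [h])
      have hx0 : x 0 ≠ y 0 := fun h => h0 h.symm
      rw [if_pos ⟨hx0, h1.symm⟩, if_pos h1, if_neg hyx, sub_zero]
  · have hyx : y ≠ x := fun h => h1 (by rw [h])
    have hx1 : ¬ x 1 = y 1 := fun h => h1 h.symm
    rw [if_neg (fun hc => hx1 hc.2), if_neg h1, if_neg hyx, sub_zero]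

lemma wA2_apply (v : (∀ k : Fin 2, Fin (n2 m k)) → ℂ) (x) :
    (wA 2 (n2 m) 2).mulVec v x
      = (∑ y, v y) - ∑ y, if y 1 = x 1 then v y else 0 := by
  rw [wA_mulVec]
  rw [Finset.sum_congr rfl fun y _ => if_congr (rel2_iff x y) rfl rfl]
  rw [← Finset.sum_sub_distrib]
  refine Finset.sum_congr rfl fun y _ => ?_
  by_cases h1 : y 1 = x 1
  · rw [if_neg (fun hc => hc h1.symm), if_pos h1, sub_self]
  · rw [if_pos (fun hc => h1 hc.symm), if_neg h1, sub_zero]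

lemma adjoin_line_invariant {X : Type*} [Fintype X] [DecidableEq X]
    (S : Set (Matrix X X ℂ)) (v : X → ℂ)
    (h : ∀ G ∈ S, ∃ c : ℂ, G.mulVec v = c • v) :
    ∀ M ∈ Algebra.adjoin ℂ S, ∀ w ∈ Submodule.span ℂ {v},
      M.mulVec w ∈ Submodule.span ℂ {v} := by
  have key : ∀ M ∈ Algebra.adjoin ℂ S, ∃ c : ℂ, M.mulVec v = c • v := by
    intro M hM
    induction hM using Algebra.adjoin_induction with
    | mem x hx => exact h x hx
    | algebraMap r =>
        exact ⟨r, by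
          rw [Algebra.algebraMap_eq_smul_one, Matrix.smul_mulVec, Matrix.one_mulVec]⟩
    | add x y hx hy ihx ihy =>
        obtain ⟨a, ha⟩ := ihx; obtain ⟨b, hb⟩ := ihy
        exact ⟨a + b, by rw [Matrix.add_mulVec, ha, hb, add_smul]⟩
    | mul x y hx hy ihx ihy =>
        obtain ⟨a, ha⟩ := ihx; obtain ⟨b, hb⟩ := ihy
        exact ⟨b * a, by rw [← Matrix.mulVec_mulVec, hb, Matrix.mulVec_smul, ha, smul_smul]⟩
  intro M hM w hw
  obtain ⟨a, rfl⟩ := Submodule.mem_span_singleton.mp hw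
  obtain ⟨c, hc⟩ := key M hM
  rw [Matrix.mulVec_smul, hc]
  exact Submodule.smul_mem _ _ (Submodule.smul_mem _ _ (Submodule.mem_span_singleton_self v))

end AuxLemmas

/-- For the wreath square `(K_m)^{≀2}`:
(1) if `v` is supported on `R_2(x₀)`, `Σ_y v_y = 0`, and `A_2 v = θ v`, then
the line `span ℂ {v}` is invariant under every matrix in the Terwilliger
algebra `T`;
(2) if `v` is supported on `R_1(x₀)` and `Σ_y v_y = 0`, then `span ℂ {v}`
is invariant under every matrix in `T`. -/
theorem line_invariant_wreath_square (m : ℕ) (hm : 2 ≤ m) :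
    (∀ v : (∀ k : Fin 2, Fin (n2 m k)) → ℂ,
      (∀ y, ¬ wRel 2 (n2 m) 2 (wBase 2 (n2 m) fun _ => hm) y → v y = 0) →
      (∑ y, v y = 0) →
      ∀ θ : ℂ, (wA 2 (n2 m) 2).mulVec v = θ • v →
      ∀ M ∈ T2 m hm, ∀ w ∈ Submodule.span ℂ {v},
        M.mulVec w ∈ Submodule.span ℂ {v}) ∧
    (∀ v : (∀ k : Fin 2, Fin (n2 m k)) → ℂ,
      (∀ y, ¬ wRel 2 (n2 m) 1 (wBase 2 (n2 m) fun _ => hm) y → v y = 0) →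
      (∑ y, v y = 0) →
      ∀ M ∈ T2 m hm, ∀ w ∈ Submodule.span ℂ {v},
        M.mulVec w ∈ Submodule.span ℂ {v}) := by
  constructor
  · intro v hsupp hsum θ heig
    have vsupp : ∀ y, y 1 = wBase 2 (n2 m) (fun _ => hm) 1 → v y = 0 := by
      intro y h
      exact hsupp y (fun hr => ((rel2_iff _ y).mp hr) h.symm)
    have hs : ∀ x : (∀ k : Fin 2, Fin (n2 m k)),
        (∑ y, if y 1 = x 1 then v y else 0) = -(θ * v x) := by
      intro x
      have h1 := congrFun heig x
      rw [wA2_apply, hsum, zero_sub] at h1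
      simp only [Pi.smul_apply, smul_eq_mul] at h1
      exact neg_eq_iff_eq_neg.mp h1
    refine adjoin_line_invariant _ v ?_
    rintro G (⟨i, hi, rfl⟩ | ⟨i, hi, rfl⟩)
    · interval_cases i
      · exact ⟨1, funext fun x => by rw [wA0_apply]; simp⟩
      · refine ⟨-(θ + 1), funext fun x => ?_⟩
        rw [wA1_apply, hs x]
        simp only [Pi.smul_apply, smul_eq_mul]
        ring
      · exact ⟨θ, heig⟩
    · interval_cases i
      · refine ⟨0, funext fun x => ?_⟩
        rw [wE_mulVec]
        by_cases h : wRel 2 (n2 m) 0 (wBase 2 (n2 m) fun _ => hm) x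
        · have hx : wBase 2 (n2 m) (fun _ => hm) = x := (rel0_iff _ x).mp h
          rw [if_pos h, ← hx, vsupp _ rfl]; simp
        · rw [if_neg h]; simp
      · refine ⟨0, funext fun x => ?_⟩
        rw [wE_mulVec]
        by_cases h : wRel 2 (n2 m) 1 (wBase 2 (n2 m) fun _ => hm) x
        · rw [if_pos h, vsupp x ((rel1_iff _ x).mp h).2.symm]; simp
        · rw [if_neg h]; simp
      · refine ⟨1, funext fun x => ?_⟩
        rw [wE_mulVec]
        by_cases h : wRel 2 (n2 m) 2 (wBase 2 (n2 m) fun _ => hm) x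
        · rw [if_pos h]; simp
        · have hx : x 1 = wBase 2 (n2 m) (fun _ => hm) 1 := by
            by_contra hc
            exact h ((rel2_iff _ x).mpr (fun he => hc he.symm))
          rw [if_neg h]; simp only [Pi.smul_apply, one_smul]
          exact (vsupp x hx).symm
  · intro v hsupp hsum
    have vsupp : ∀ y,
        ¬ (wBase 2 (n2 m) (fun _ => hm) 0 ≠ y 0 ∧ wBase 2 (n2 m) (fun _ => hm) 1 = y 1) →
        v y = 0 :=
      fun y h => hsupp y (fun hr => h ((rel1_iff _ y).mp hr))
    have hs : ∀ x : (∀ k : Fin 2, Fin (n2 m k)),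
        (∑ y, if y 1 = x 1 then v y else 0) = 0 := by
      intro x
      by_cases hx : x 1 = wBase 2 (n2 m) (fun _ => hm) 1
      · refine (Finset.sum_congr rfl fun y _ => ?_).trans hsum
        by_cases hy : y 1 = x 1
        · rw [if_pos hy]
        · rw [if_neg hy]
          exact (vsupp y (fun hc => hy (hc.2.symm.trans hx.symm))).symm
      · refine Finset.sum_eq_zero fun y _ => ?_
        by_cases hy : y 1 = x 1
        · rw [if_pos hy]
          exact vsupp y (fun hc => hx (hy.symm.trans hc.2.symm))
        · rw [if_neg hy]
    refine adjoin_line_invariant _ v ?_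
    rintro G (⟨i, hi, rfl⟩ | ⟨i, hi, rfl⟩)
    · interval_cases i
      · exact ⟨1, funext fun x => by rw [wA0_apply]; simp⟩
      · refine ⟨-1, funext fun x => ?_⟩
        rw [wA1_apply, hs x, zero_sub]
        simp
      · refine ⟨0, funext fun x => ?_⟩
        rw [wA2_apply, hs x, hsum, sub_self]
        simp
    · interval_cases i
      · refine ⟨0, funext fun x => ?_⟩
        rw [wE_mulVec]
        by_cases h : wRel 2 (n2 m) 0 (wBase 2 (n2 m) fun _ => hm) x
        · have hx : wBase 2 (n2 m) (fun _ => hm) = x := (rel0_iff _ x).mp h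
          rw [if_pos h, ← hx, vsupp _ (fun hc => hc.1 rfl)]; simp
        · rw [if_neg h]; simp
      · refine ⟨1, funext fun x => ?_⟩
        rw [wE_mulVec]
        by_cases h : wRel 2 (n2 m) 1 (wBase 2 (n2 m) fun _ => hm) x
        · rw [if_pos h]; simp
        · rw [if_neg h]; simp only [Pi.smul_apply, one_smul]
          exact (vsupp x (fun hc => h ((rel1_iff _ x).mpr hc))).symm
      · refine ⟨0, funext fun x => ?_⟩
        rw [wE_mulVec]
        by_cases h : wRel 2 (n2 m) 2 (wBase 2 (n2 m) fun _ => hm) x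
        · have hne := (rel2_iff _ x).mp h
          rw [if_pos h, vsupp x (fun hc => hne hc.2)]; simp
        · rw [if_neg h]; simp
end
end

section
/- For the wreath square (K_m)^{≀2}, the standard module ℂ^X decomposes as an orthogonal direct sum (with respect to the standard Hermitian inner product) of m^2 − 2 subspaces, each invariant under every matrix in the Terwilliger algebra T, exactly one of which has dimension 3 and the remaining m^2 − 3 of which have dimension 1; moreover the 3-dimensional subspace has no T-invariant subspace other than {0} and itself. -/
open scoped Classical

noncomputable section

namespace WS

variable {m : ℕ}

abbrev XX (m : ℕ) := ∀ k : Fin 2, Fin (n2 m k)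

/-- point constructor -/
def pt {m : ℕ} (r c : Fin m) : XX m := fun k => if k = 0 then r else c

lemma pt_zero (r c : Fin m) : pt r c 0 = r := if_pos rfl
lemma pt_one (r c : Fin m) : pt r c 1 = c := if_neg (by decide)
lemma pt_eta (x : XX m) : pt (x 0) (x 1) = x := by
  funext k
  fin_cases k
  · exact pt_zero _ _
  · exact pt_one _ _

def ptEquiv (m : ℕ) : Fin m × Fin m ≃ XX m where
  toFun p := pt p.1 p.2
  invFun x := (x 0, x 1)
  left_inv p := by
    ext
    · exact congrArg Fin.val (pt_zero p.1 p.2)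
    · exact congrArg Fin.val (pt_one p.1 p.2)
  right_inv x := pt_eta x

lemma sum_XX (f : XX m → ℂ) : ∑ x, f x = ∑ r : Fin m, ∑ c : Fin m, f (pt r c) := by
  rw [← Equiv.sum_comp (ptEquiv m) f, Fintype.sum_prod_type]
  rfl

/-- Helmert vector `t` (orthogonal basis of sum-zero space). -/
def helm (t a : ℕ) : ℂ := if a < t then 1 else if a = t then -(t : ℂ) else 0

/-- shifted Helmert vector (supported on positive indices) -/
def hsh (t a : ℕ) : ℂ := if a = 0 then 0 else helm t (a - 1)

def dl (c : ℕ) : ℕ → ℂ := fun a => if a = c then 1 else 0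
def u1 : ℕ → ℂ := fun a => if a = 0 then 0 else 1
def onef : ℕ → ℂ := fun _ => 1

lemma sum_helm {t k : ℕ} (h : t < k) : ∑ a ∈ Finset.range k, helm t a = 0 := by
  rw [Finset.range_eq_Ico, ← Finset.sum_Ico_consecutive _ (Nat.zero_le t) h.le]
  have h1 : ∑ a ∈ Finset.Ico 0 t, helm t a = t := by
    rw [← Finset.range_eq_Ico]
    have h1' : ∀ a ∈ Finset.range t, helm t a = 1 := fun a ha => if_pos (Finset.mem_range.mp ha)
    rw [Finset.sum_congr rfl h1', Finset.sum_const, Finset.card_range, nsmul_eq_mul, mul_one]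
  have h2 : ∑ a ∈ Finset.Ico t k, helm t a = -(t : ℂ) := by
    have : ∀ a ∈ Finset.Ico t k, helm t a = if a = t then -(t:ℂ) else 0 := by
      intro a ha
      have := (Finset.mem_Ico.mp ha).1
      unfold helm
      rw [if_neg (by omega)]
    rw [Finset.sum_congr rfl this, Finset.sum_ite_eq' (Finset.Ico t k) t (fun _ => -(t:ℂ))]
    rw [if_pos (Finset.mem_Ico.mpr ⟨le_refl t, h⟩)]
  rw [h1, h2]
  ring

lemma helm_mul_helm {t s : ℕ} (hts : t < s) (a : ℕ) : helm t a * helm s a = helm t a := by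
  unfold helm
  rcases lt_trichotomy a t with h | h | h
  · rw [if_pos h, if_pos (h.trans hts), one_mul]
  · subst h
    rw [if_neg (lt_irrefl a), if_pos hts, if_pos rfl, mul_one]
  · rw [if_neg (by omega), if_neg (by omega), zero_mul]

lemma sum_helm_mul {t s k : ℕ} (hts : t ≠ s) (ht : t < k) (hs : s < k) :
    ∑ a ∈ Finset.range k, helm t a * helm s a = 0 := by
  rcases Nat.lt_or_ge t s with h | h
  · rw [Finset.sum_congr rfl (fun a _ => helm_mul_helm h a)]
    exact sum_helm ht
  · have h' : s < t := by omega
    rw [Finset.sum_congr rfl (fun a _ => (mul_comm (helm t a) (helm s a)).trans (helm_mul_helm h' a))]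
    exact sum_helm hs

lemma sum_helm_sq {t k : ℕ} (ht : t < k) :
    ∑ a ∈ Finset.range k, helm t a * helm t a = (t : ℂ) + (t : ℂ) ^ 2 := by
  rw [Finset.range_eq_Ico, ← Finset.sum_Ico_consecutive _ (Nat.zero_le t) ht.le]
  have h1 : ∑ a ∈ Finset.Ico 0 t, helm t a * helm t a = t := by
    rw [← Finset.range_eq_Ico]
    have h1' : ∀ a ∈ Finset.range t, helm t a * helm t a = 1 := by
      intro a ha
      have := Finset.mem_range.mp ha
      unfold helm
      rw [if_pos this, one_mul]
    rw [Finset.sum_congr rfl h1', Finset.sum_const, Finset.card_range, nsmul_eq_mul, mul_one]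
  have h2 : ∑ a ∈ Finset.Ico t k, helm t a * helm t a = (t:ℂ)^2 := by
    have : ∀ a ∈ Finset.Ico t k, helm t a * helm t a = if a = t then (t:ℂ)^2 else 0 := by
      intro a ha
      have := (Finset.mem_Ico.mp ha).1
      unfold helm
      rw [if_neg (by omega)]
      by_cases h : a = t
      · rw [if_pos h, if_pos h]; ring
      · rw [if_neg h, if_neg h, mul_zero]
    rw [Finset.sum_congr rfl this, Finset.sum_ite_eq' (Finset.Ico t k) t (fun _ => (t:ℂ)^2)]
    rw [if_pos (Finset.mem_Ico.mpr ⟨le_refl t, ht⟩)]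
  rw [h1, h2]

lemma sum_shift {k : ℕ} (F : ℕ → ℂ) (h0 : F 0 = 0) :
    ∑ a ∈ Finset.range (k + 1), F a = ∑ a ∈ Finset.range k, F (a + 1) := by
  rw [Finset.sum_range_succ' F k, h0, add_zero]

lemma hsh_succ (t a : ℕ) : hsh t (a + 1) = helm t a := by
  unfold hsh
  rw [if_neg (Nat.succ_ne_zero a)]
  simp

lemma sum_hsh {t k : ℕ} (h : t < k) : ∑ a ∈ Finset.range (k + 1), hsh t a = 0 := by
  rw [sum_shift _ (by simp [hsh]), Finset.sum_congr rfl (fun a _ => hsh_succ t a)]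
  exact sum_helm h

lemma sum_hsh_mul {t s k : ℕ} (hts : t ≠ s) (ht : t < k) (hs : s < k) :
    ∑ a ∈ Finset.range (k + 1), hsh t a * hsh s a = 0 := by
  rw [sum_shift _ (by simp [hsh])]
  simp only [hsh_succ]
  exact sum_helm_mul hts ht hs

lemma sum_hsh_sq {t k : ℕ} (ht : t < k) :
    ∑ a ∈ Finset.range (k + 1), hsh t a * hsh t a = (t : ℂ) + (t : ℂ) ^ 2 := by
  rw [sum_shift _ (by simp [hsh])]
  simp only [hsh_succ]
  exact sum_helm_sq ht


lemma wRel_zero_iff (x y : XX m) : wRel 2 (n2 m) 0 x y ↔ x = y := by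
  unfold wRel
  rw [dif_neg (by omega)]

lemma wRel_one_iff (x y : XX m) :
    wRel 2 (n2 m) 1 x y ↔ ((x 0 : ℕ) ≠ (y 0 : ℕ) ∧ (x 1 : ℕ) = (y 1 : ℕ)) := by
  unfold wRel
  rw [dif_pos (by omega)]
  constructor
  · rintro ⟨h1, h2⟩
    refine ⟨fun h => h1 (Fin.ext h), congrArg Fin.val (h2 1 (by norm_num))⟩
  · rintro ⟨h1, h2⟩
    refine ⟨fun h => h1 (congrArg Fin.val h), fun k hk => ?_⟩
    have : k = 1 := Fin.ext (by have := k.isLt; omega)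
    subst this
    exact Fin.ext h2

lemma wRel_two_iff (x y : XX m) :
    wRel 2 (n2 m) 2 x y ↔ (x 1 : ℕ) ≠ (y 1 : ℕ) := by
  unfold wRel
  rw [dif_pos (by omega)]
  constructor
  · rintro ⟨h1, _⟩
    exact fun h => h1 (Fin.ext h)
  · intro h
    refine ⟨fun h' => h (congrArg Fin.val h'), fun k hk => ?_⟩
    have := k.isLt
    omega

lemma mulVec_eq (M : Matrix (XX m) (XX m) ℂ) (v : XX m → ℂ) (x : XX m) :
    M.mulVec v x = ∑ y, M x y * v y := rfl

lemma A0_mulVec (v : XX m → ℂ) : (wA 2 (n2 m) 0).mulVec v = v := by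
  funext x
  rw [mulVec_eq]
  have : ∀ y : XX m, wA 2 (n2 m) 0 x y * v y = if y = x then v y else 0 := by
    intro y
    rw [show wA 2 (n2 m) 0 x y = if wRel 2 (n2 m) 0 x y then 1 else 0 from rfl]
    by_cases h : x = y
    · rw [if_pos ((wRel_zero_iff x y).mpr h), if_pos h.symm, one_mul]
    · rw [if_neg (fun hc => h ((wRel_zero_iff x y).mp hc)), if_neg (fun hc => h hc.symm), zero_mul]
  rw [Finset.sum_congr rfl (fun y _ => this y), Finset.sum_ite_eq' Finset.univ x v,
    if_pos (Finset.mem_univ x)]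

lemma sum_row (v : XX m → ℂ) (x : XX m) :
    ∑ y : XX m, (if (x 1 : ℕ) = (y 1 : ℕ) then v y else 0) = ∑ r : Fin m, v (pt r (x 1)) := by
  rw [sum_XX (fun y => if (x 1 : ℕ) = (y 1 : ℕ) then v y else 0)]
  refine Finset.sum_congr rfl (fun r _ => ?_)
  have : ∀ c : Fin m, (if (x 1 : ℕ) = ((pt r c 1) : ℕ) then v (pt r c) else 0)
      = if c = x 1 then v (pt r c) else 0 := by
    intro c
    rw [pt_one]
    by_cases h : c = x 1
    · rw [if_pos (by rw [h]), if_pos h]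
    · rw [if_neg (fun hc => h (Fin.ext hc.symm)), if_neg h]
  rw [Finset.sum_congr rfl (fun c _ => this c),
    Finset.sum_ite_eq' Finset.univ (x 1) (fun c => v (pt r c)), if_pos (Finset.mem_univ _)]

lemma A1_mulVec (v : XX m → ℂ) (x : XX m) :
    (wA 2 (n2 m) 1).mulVec v x = (∑ r : Fin m, v (pt r (x 1))) - v x := by
  rw [mulVec_eq]
  have key : ∀ y : XX m, wA 2 (n2 m) 1 x y * v y
      = (if (x 1 : ℕ) = (y 1 : ℕ) then v y else 0) - (if y = x then v y else 0) := by
    intro y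
    rw [show wA 2 (n2 m) 1 x y = if wRel 2 (n2 m) 1 x y then 1 else 0 from rfl]
    by_cases h1 : (x 1 : ℕ) = (y 1 : ℕ)
    · by_cases h0 : (x 0 : ℕ) = (y 0 : ℕ)
      · have hxy : y = x := by
          rw [← pt_eta x, ← pt_eta y]
          rw [show x 0 = y 0 from Fin.ext h0, show x 1 = y 1 from Fin.ext h1]
        rw [if_neg (fun hc => (((wRel_one_iff x y).mp hc).1) h0), if_pos h1, if_pos hxy,
          zero_mul, sub_self]
      · rw [if_pos ((wRel_one_iff x y).mpr ⟨h0, h1⟩), if_pos h1,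
          if_neg (fun hc => h0 (by rw [hc])), one_mul, sub_zero]
    · have : ¬ y = x := fun hc => h1 (by rw [hc])
      rw [if_neg (fun hc => h1 (((wRel_one_iff x y).mp hc).2)), if_neg h1, if_neg this,
        zero_mul, sub_zero]
  rw [Finset.sum_congr rfl (fun y _ => key y), Finset.sum_sub_distrib, sum_row,
    Finset.sum_ite_eq' Finset.univ x v, if_pos (Finset.mem_univ x)]

lemma A2_mulVec (v : XX m → ℂ) (x : XX m) :
    (wA 2 (n2 m) 2).mulVec v x = (∑ y, v y) - ∑ r : Fin m, v (pt r (x 1)) := by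
  rw [mulVec_eq]
  have key : ∀ y : XX m, wA 2 (n2 m) 2 x y * v y
      = v y - (if (x 1 : ℕ) = (y 1 : ℕ) then v y else 0) := by
    intro y
    rw [show wA 2 (n2 m) 2 x y = if wRel 2 (n2 m) 2 x y then 1 else 0 from rfl]
    by_cases h1 : (x 1 : ℕ) = (y 1 : ℕ)
    · rw [if_neg (fun hc => ((wRel_two_iff x y).mp hc) h1), if_pos h1, zero_mul, sub_self]
    · rw [if_pos ((wRel_two_iff x y).mpr h1), if_neg h1, one_mul, sub_zero]
  rw [Finset.sum_congr rfl (fun y _ => key y), Finset.sum_sub_distrib, sum_row]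

lemma E_mulVec (hm : 2 ≤ m) (i : ℕ) (v : XX m → ℂ) (x : XX m) :
    (wE 2 (n2 m) (fun _ => hm) i).mulVec v x
      = if wRel 2 (n2 m) i (wBase 2 (n2 m) (fun _ => hm)) x then v x else 0 := by
  rw [mulVec_eq]
  have key : ∀ y : XX m, wE 2 (n2 m) (fun _ => hm) i x y * v y
      = if y = x then (if wRel 2 (n2 m) i (wBase 2 (n2 m) (fun _ => hm)) x then v x else 0)
        else 0 := by
    intro y
    rw [show wE 2 (n2 m) (fun _ => hm) i x y
      = if x = y ∧ wRel 2 (n2 m) i (wBase 2 (n2 m) (fun _ => hm)) x then 1 else 0 from rfl]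
    by_cases h : y = x
    · subst h
      by_cases h2 : wRel 2 (n2 m) i (wBase 2 (n2 m) (fun _ => hm)) y
      · rw [if_pos ⟨rfl, h2⟩, if_pos rfl, if_pos h2, one_mul]
      · rw [if_neg (fun hc => h2 hc.2), if_pos rfl, if_neg h2, zero_mul]
    · rw [if_neg (fun hc => h hc.1.symm), if_neg h, zero_mul]
  rw [Finset.sum_congr rfl (fun y _ => key y), Finset.sum_ite_eq' Finset.univ x _,
    if_pos (Finset.mem_univ x)]

lemma base_coord (hm : 2 ≤ m) (k : Fin 2) : ((wBase 2 (n2 m) (fun _ => hm)) k : ℕ) = 0 := rfl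

lemma E0_cond (hm : 2 ≤ m) (x : XX m) :
    wRel 2 (n2 m) 0 (wBase 2 (n2 m) (fun _ => hm)) x ↔ ((x 0 : ℕ) = 0 ∧ (x 1 : ℕ) = 0) := by
  rw [wRel_zero_iff]
  constructor
  · rintro rfl
    exact ⟨rfl, rfl⟩
  · rintro ⟨h0, h1⟩
    rw [← pt_eta x, show x 0 = ⟨0, by omega⟩ from Fin.ext h0, show x 1 = ⟨0, by omega⟩ from
      Fin.ext h1]
    funext k
    fin_cases k
    · exact (pt_zero _ _).symm
    · exact (pt_one _ _).symm

lemma E1_cond (hm : 2 ≤ m) (x : XX m) :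
    wRel 2 (n2 m) 1 (wBase 2 (n2 m) (fun _ => hm)) x ↔ ((x 0 : ℕ) ≠ 0 ∧ (x 1 : ℕ) = 0) := by
  rw [wRel_one_iff]
  rw [base_coord hm 0, base_coord hm 1]
  constructor
  · rintro ⟨h0, h1⟩
    exact ⟨fun h => h0 h.symm, h1.symm⟩
  · rintro ⟨h0, h1⟩
    exact ⟨fun h => h0 h.symm, h1.symm⟩

lemma E2_cond (hm : 2 ≤ m) (x : XX m) :
    wRel 2 (n2 m) 2 (wBase 2 (n2 m) (fun _ => hm)) x ↔ (x 1 : ℕ) ≠ 0 := by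
  rw [wRel_two_iff, base_coord hm 1]
  exact ⟨fun h hc => h hc.symm, fun h hc => h hc.symm⟩
/-- rank-one (tensor product) vector -/
def tens {m : ℕ} (f g : ℕ → ℂ) : XX m → ℂ := fun x => f (x 0 : ℕ) * g (x 1 : ℕ)

lemma tens_pt (f g : ℕ → ℂ) (r c : Fin m) :
    tens f g (pt r c) = f (r : ℕ) * g (c : ℕ) := by
  unfold tens
  rw [pt_zero, pt_one]

lemma sum_row_tens (f g : ℕ → ℂ) (c : Fin m) :
    ∑ r : Fin m, tens f g (pt r c) = (∑ a ∈ Finset.range m, f a) * g (c : ℕ) := by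
  rw [Finset.sum_congr rfl (fun r _ => tens_pt f g r c), ← Finset.sum_mul]
  rw [Fin.sum_univ_eq_sum_range (fun a => f a) m]

lemma tot_tens (f g : ℕ → ℂ) :
    ∑ x : XX m, tens f g x
      = (∑ a ∈ Finset.range m, f a) * (∑ a ∈ Finset.range m, g a) := by
  rw [sum_XX (tens f g)]
  have : ∀ r : Fin m, ∑ c : Fin m, tens f g (pt r c)
      = f (r : ℕ) * (∑ a ∈ Finset.range m, g a) := by
    intro r
    rw [Finset.sum_congr rfl (fun c _ => tens_pt f g r c), ← Finset.mul_sum]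
    rw [Fin.sum_univ_eq_sum_range (fun a => g a) m]
  rw [Finset.sum_congr rfl (fun r _ => this r), ← Finset.sum_mul]
  rw [Fin.sum_univ_eq_sum_range (fun a => f a) m]

lemma A1_tens (f g : ℕ → ℂ) (x : XX m) :
    (wA 2 (n2 m) 1).mulVec (tens f g) x
      = (∑ a ∈ Finset.range m, f a) * g (x 1 : ℕ) - tens f g x := by
  rw [A1_mulVec, sum_row_tens]

lemma A2_tens (f g : ℕ → ℂ) (x : XX m) :
    (wA 2 (n2 m) 2).mulVec (tens f g) x
      = (∑ a ∈ Finset.range m, f a) * (∑ a ∈ Finset.range m, g a)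
        - (∑ a ∈ Finset.range m, f a) * g (x 1 : ℕ) := by
  rw [A2_mulVec, sum_row_tens, tot_tens]

/-- the basic sums -/
lemma sum_dl {c : ℕ} (h : c < m) : ∑ a ∈ Finset.range m, dl c a = 1 := by
  unfold dl
  rw [Finset.sum_ite_eq' (Finset.range m) c (fun _ => (1:ℂ)), if_pos (Finset.mem_range.mpr h)]

lemma sum_u1 (hm : 2 ≤ m) : ∑ a ∈ Finset.range m, u1 a = (m : ℂ) - 1 := by
  have : ∀ a ∈ Finset.range m, u1 a = 1 - dl 0 a := by
    intro a _
    unfold u1 dl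
    by_cases h : a = 0 <;> simp [h]
  rw [Finset.sum_congr rfl this, Finset.sum_sub_distrib, sum_dl (by omega),
    Finset.sum_const, Finset.card_range, nsmul_eq_mul, mul_one]

lemma sum_onef : ∑ a ∈ Finset.range m, onef a = (m : ℂ) := by
  unfold onef
  rw [Finset.sum_const, Finset.card_range, nsmul_eq_mul, mul_one]
lemma sum_hsh_m (hm : 2 ≤ m) {t : ℕ} (h : t < m - 1) :
    ∑ a ∈ Finset.range m, hsh t a = 0 := by
  obtain ⟨k, rfl⟩ : ∃ k, m = k + 1 := ⟨m - 1, by omega⟩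
  exact sum_hsh (by omega)

lemma sum_hsh_mul_m (hm : 2 ≤ m) {t s : ℕ} (hts : t ≠ s) (ht : t < m - 1) (hs : s < m - 1) :
    ∑ a ∈ Finset.range m, hsh t a * hsh s a = 0 := by
  obtain ⟨k, rfl⟩ : ∃ k, m = k + 1 := ⟨m - 1, by omega⟩
  exact sum_hsh_mul hts (by omega) (by omega)

lemma sum_hsh_sq_m (hm : 2 ≤ m) {t : ℕ} (ht : t < m - 1) :
    ∑ a ∈ Finset.range m, hsh t a * hsh t a = (t : ℂ) + (t : ℂ) ^ 2 := by
  obtain ⟨k, rfl⟩ : ∃ k, m = k + 1 := ⟨m - 1, by omega⟩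
  exact sum_hsh_sq (by omega)

def vA0 (m : ℕ) : XX m → ℂ := tens (dl 0) (dl 0)
def vA1 (m : ℕ) : XX m → ℂ := tens u1 (dl 0)
def vA2 (m : ℕ) : XX m → ℂ := tens onef u1
def vB (m t : ℕ) : XX m → ℂ := tens (hsh t) (dl 0)
def vC (m t c : ℕ) : XX m → ℂ := tens (helm t) (dl c)
def vD (m t : ℕ) : XX m → ℂ := tens onef (hsh t)

lemma a1_vA0 (hm : 2 ≤ m) : (wA 2 (n2 m) 1).mulVec (vA0 m) = vA1 m := by
  funext x
  unfold vA0 vA1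
  rw [A1_tens, sum_dl (by omega)]
  by_cases h0 : (x 0 : ℕ) = 0 <;> by_cases h1 : (x 1 : ℕ) = 0 <;>
    simp [tens, dl, u1, h0, h1]

lemma a1_vA1 (hm : 2 ≤ m) : (wA 2 (n2 m) 1).mulVec (vA1 m)
    = ((m : ℂ) - 1) • vA0 m + ((m : ℂ) - 2) • vA1 m := by
  funext x
  unfold vA0 vA1
  rw [Pi.add_apply, Pi.smul_apply, Pi.smul_apply, smul_eq_mul, smul_eq_mul, A1_tens,
    sum_u1 hm]
  by_cases h0 : (x 0 : ℕ) = 0 <;> by_cases h1 : (x 1 : ℕ) = 0 <;>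
    simp [tens, dl, u1, h0, h1] <;> ring

lemma a1_vA2 (hm : 2 ≤ m) : (wA 2 (n2 m) 2) = (wA 2 (n2 m) 2) := rfl

lemma a1_vA2' (hm : 2 ≤ m) : (wA 2 (n2 m) 1).mulVec (vA2 m) = ((m : ℂ) - 1) • vA2 m := by
  funext x
  unfold vA2
  rw [Pi.smul_apply, smul_eq_mul, A1_tens, sum_onef]
  by_cases h1 : (x 1 : ℕ) = 0 <;> simp [tens, onef, u1, h1] <;> ring

lemma a2_vA0 (hm : 2 ≤ m) : (wA 2 (n2 m) 2).mulVec (vA0 m) = vA2 m := by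
  funext x
  unfold vA0 vA2
  rw [A2_tens, sum_dl (by omega)]
  by_cases h1 : (x 1 : ℕ) = 0 <;> simp [tens, dl, u1, onef, h1]

lemma a2_vA1 (hm : 2 ≤ m) : (wA 2 (n2 m) 2).mulVec (vA1 m) = ((m : ℂ) - 1) • vA2 m := by
  funext x
  unfold vA1 vA2
  rw [Pi.smul_apply, smul_eq_mul, A2_tens, sum_u1 hm, sum_dl (by omega)]
  by_cases h1 : (x 1 : ℕ) = 0 <;> simp [tens, dl, u1, onef, h1] <;> ring

lemma a2_vA2 (hm : 2 ≤ m) : (wA 2 (n2 m) 2).mulVec (vA2 m)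
    = ((m : ℂ) * ((m : ℂ) - 1)) • vA0 m + ((m : ℂ) * ((m : ℂ) - 1)) • vA1 m
      + ((m : ℂ) * ((m : ℂ) - 2)) • vA2 m := by
  funext x
  unfold vA0 vA1 vA2
  rw [Pi.add_apply, Pi.add_apply, Pi.smul_apply, Pi.smul_apply, Pi.smul_apply,
    smul_eq_mul, smul_eq_mul, smul_eq_mul, A2_tens, sum_onef, sum_u1 hm]
  by_cases h0 : (x 0 : ℕ) = 0 <;> by_cases h1 : (x 1 : ℕ) = 0 <;>
    simp [tens, dl, u1, onef, h0, h1] <;> ring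

lemma a1_vB (hm : 2 ≤ m) {t : ℕ} (ht : t < m - 1) :
    (wA 2 (n2 m) 1).mulVec (vB m t) = (-1 : ℂ) • vB m t := by
  funext x
  unfold vB
  rw [Pi.smul_apply, smul_eq_mul, A1_tens, sum_hsh_m hm ht]
  ring

lemma a2_vB (hm : 2 ≤ m) {t : ℕ} (ht : t < m - 1) :
    (wA 2 (n2 m) 2).mulVec (vB m t) = 0 := by
  funext x
  unfold vB
  rw [A2_tens, sum_hsh_m hm ht]
  simp

lemma a1_vC (hm : 2 ≤ m) {t c : ℕ} (ht : t < m) :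
    (wA 2 (n2 m) 1).mulVec (vC m t c) = (-1 : ℂ) • vC m t c := by
  funext x
  unfold vC
  rw [Pi.smul_apply, smul_eq_mul, A1_tens, sum_helm ht]
  ring

lemma a2_vC (hm : 2 ≤ m) {t c : ℕ} (ht : t < m) :
    (wA 2 (n2 m) 2).mulVec (vC m t c) = 0 := by
  funext x
  unfold vC
  rw [A2_tens, sum_helm ht]
  simp

lemma a1_vD (hm : 2 ≤ m) {t : ℕ} :
    (wA 2 (n2 m) 1).mulVec (vD m t) = ((m : ℂ) - 1) • vD m t := by
  funext x
  unfold vD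
  rw [Pi.smul_apply, smul_eq_mul, A1_tens, sum_onef]
  simp only [tens, onef]
  ring

lemma a2_vD (hm : 2 ≤ m) {t : ℕ} (ht : t < m - 1) :
    (wA 2 (n2 m) 2).mulVec (vD m t) = (-(m : ℂ)) • vD m t := by
  funext x
  unfold vD
  rw [Pi.smul_apply, smul_eq_mul, A2_tens, sum_onef, sum_hsh_m hm ht]
  simp only [tens, onef]
  ring

/-- E₀* acts on any vector as a rank one projection onto vA0. -/
lemma e0_any (hm : 2 ≤ m) (v : XX m → ℂ) :
    (wE 2 (n2 m) (fun _ => hm) 0).mulVec v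
      = (v (wBase 2 (n2 m) (fun _ => hm))) • vA0 m := by
  funext x
  rw [Pi.smul_apply, smul_eq_mul, E_mulVec]
  by_cases h : wRel 2 (n2 m) 0 (wBase 2 (n2 m) (fun _ => hm)) x
  · have hb : wBase 2 (n2 m) (fun _ => hm) = x := (wRel_zero_iff _ _).mp h
    have hc := (E0_cond hm x).mp h
    rw [if_pos h, hb]
    unfold vA0 tens dl
    rw [if_pos hc.1, if_pos hc.2, mul_one, mul_one]
  · have hc : ¬ ((x 0 : ℕ) = 0 ∧ (x 1 : ℕ) = 0) := fun hc => h ((E0_cond hm x).mpr hc)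
    rw [if_neg h]
    unfold vA0 tens dl
    push_neg at hc
    by_cases h0 : (x 0 : ℕ) = 0
    · rw [if_neg (hc h0)]
      simp
    · rw [if_neg h0]
      simp
lemma E1_apply (hm : 2 ≤ m) (v : XX m → ℂ) (x : XX m) :
    (wE 2 (n2 m) (fun _ => hm) 1).mulVec v x
      = if ((x 0 : ℕ) ≠ 0 ∧ (x 1 : ℕ) = 0) then v x else 0 := by
  rw [E_mulVec]
  exact if_congr (E1_cond hm x) rfl rfl

lemma E2_apply (hm : 2 ≤ m) (v : XX m → ℂ) (x : XX m) :
    (wE 2 (n2 m) (fun _ => hm) 2).mulVec v x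
      = if ((x 1 : ℕ) ≠ 0) then v x else 0 := by
  rw [E_mulVec]
  exact if_congr (E2_cond hm x) rfl rfl

lemma e1_vA0 (hm : 2 ≤ m) : (wE 2 (n2 m) (fun _ => hm) 1).mulVec (vA0 m) = 0 := by
  funext x
  rw [E1_apply]
  by_cases h0 : (x 0 : ℕ) = 0 <;> by_cases h1 : (x 1 : ℕ) = 0 <;>
    simp [vA0, tens, dl, h0, h1]

lemma e1_vA1 (hm : 2 ≤ m) : (wE 2 (n2 m) (fun _ => hm) 1).mulVec (vA1 m) = vA1 m := by
  funext x
  rw [E1_apply]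
  by_cases h0 : (x 0 : ℕ) = 0 <;> by_cases h1 : (x 1 : ℕ) = 0 <;>
    simp [vA1, tens, dl, u1, h0, h1]

lemma e1_vA2 (hm : 2 ≤ m) : (wE 2 (n2 m) (fun _ => hm) 1).mulVec (vA2 m) = 0 := by
  funext x
  rw [E1_apply]
  by_cases h0 : (x 0 : ℕ) = 0 <;> by_cases h1 : (x 1 : ℕ) = 0 <;>
    simp [vA2, tens, u1, onef, h0, h1]

lemma e1_vB (hm : 2 ≤ m) (t : ℕ) :
    (wE 2 (n2 m) (fun _ => hm) 1).mulVec (vB m t) = vB m t := by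
  funext x
  rw [E1_apply]
  by_cases h0 : (x 0 : ℕ) = 0 <;> by_cases h1 : (x 1 : ℕ) = 0 <;>
    simp [vB, tens, dl, hsh, h0, h1]

lemma e1_vC (hm : 2 ≤ m) {t c : ℕ} (hc : 1 ≤ c) :
    (wE 2 (n2 m) (fun _ => hm) 1).mulVec (vC m t c) = 0 := by
  funext x
  rw [E1_apply]
  have hc' : ¬ (0 : ℕ) = c := by omega
  by_cases h0 : (x 0 : ℕ) = 0 <;> by_cases h1 : (x 1 : ℕ) = 0 <;>
    simp [vC, tens, dl, h0, h1, hc']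

lemma e1_vD (hm : 2 ≤ m) (t : ℕ) :
    (wE 2 (n2 m) (fun _ => hm) 1).mulVec (vD m t) = 0 := by
  funext x
  rw [E1_apply]
  by_cases h0 : (x 0 : ℕ) = 0 <;> by_cases h1 : (x 1 : ℕ) = 0 <;>
    simp [vD, tens, onef, hsh, h0, h1]

lemma e2_vA0 (hm : 2 ≤ m) : (wE 2 (n2 m) (fun _ => hm) 2).mulVec (vA0 m) = 0 := by
  funext x
  rw [E2_apply]
  by_cases h1 : (x 1 : ℕ) = 0 <;> simp [vA0, tens, dl, h1]

lemma e2_vA1 (hm : 2 ≤ m) : (wE 2 (n2 m) (fun _ => hm) 2).mulVec (vA1 m) = 0 := by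
  funext x
  rw [E2_apply]
  by_cases h1 : (x 1 : ℕ) = 0 <;> simp [vA1, tens, dl, u1, h1]

lemma e2_vA2 (hm : 2 ≤ m) : (wE 2 (n2 m) (fun _ => hm) 2).mulVec (vA2 m) = vA2 m := by
  funext x
  rw [E2_apply]
  by_cases h1 : (x 1 : ℕ) = 0 <;> simp [vA2, tens, u1, onef, h1]

lemma e2_vB (hm : 2 ≤ m) (t : ℕ) :
    (wE 2 (n2 m) (fun _ => hm) 2).mulVec (vB m t) = 0 := by
  funext x
  rw [E2_apply]
  by_cases h1 : (x 1 : ℕ) = 0 <;> simp [vB, tens, dl, hsh, h1]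

lemma e2_vC (hm : 2 ≤ m) {t c : ℕ} (hc : 1 ≤ c) :
    (wE 2 (n2 m) (fun _ => hm) 2).mulVec (vC m t c) = vC m t c := by
  funext x
  rw [E2_apply]
  have hc' : ¬ (0 : ℕ) = c := by omega
  by_cases h1 : (x 1 : ℕ) = 0 <;> simp [vC, tens, dl, h1, hc']

lemma e2_vD (hm : 2 ≤ m) (t : ℕ) :
    (wE 2 (n2 m) (fun _ => hm) 2).mulVec (vD m t) = vD m t := by
  funext x
  rw [E2_apply]
  by_cases h1 : (x 1 : ℕ) = 0 <;> simp [vD, tens, onef, hsh, h1]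
def IP {m : ℕ} (u w : XX m → ℂ) : ℂ := ∑ y, u y * (starRingEnd ℂ) (w y)

lemma conj_dl (c a : ℕ) : (starRingEnd ℂ) (dl c a) = dl c a := by
  unfold dl
  split <;> simp

lemma conj_u1 (a : ℕ) : (starRingEnd ℂ) (u1 a) = u1 a := by
  unfold u1
  split <;> simp

lemma conj_onef (a : ℕ) : (starRingEnd ℂ) (onef a) = onef a := by
  unfold onef
  simp

lemma conj_helm (t a : ℕ) : (starRingEnd ℂ) (helm t a) = helm t a := by
  unfold helm
  split
  · simp
  · split <;> simp

lemma conj_hsh (t a : ℕ) : (starRingEnd ℂ) (hsh t a) = hsh t a := by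
  unfold hsh
  split
  · simp
  · exact conj_helm _ _

lemma IP_tens {f g f' g' : ℕ → ℂ} (hf' : ∀ a, (starRingEnd ℂ) (f' a) = f' a)
    (hg' : ∀ a, (starRingEnd ℂ) (g' a) = g' a) :
    IP (tens f g : XX m → ℂ) (tens f' g')
      = (∑ a ∈ Finset.range m, f a * f' a) * (∑ a ∈ Finset.range m, g a * g' a) := by
  unfold IP
  have key : ∀ x : XX m, tens f g x * (starRingEnd ℂ) (tens f' g' x)
      = tens (fun a => f a * f' a) (fun a => g a * g' a) x := by
    intro x
    unfold tens
    rw [map_mul, hf', hg']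
    ring
  rw [Finset.sum_congr rfl (fun x _ => key x), tot_tens]

lemma S_swap {f g : ℕ → ℂ} (h : ∑ a ∈ Finset.range m, f a * g a = 0) :
    ∑ a ∈ Finset.range m, g a * f a = 0 := by
  rw [Finset.sum_congr rfl (fun a _ => mul_comm (g a) (f a))]
  exact h

lemma S_zero {f g : ℕ → ℂ} (h : ∀ a, f a * g a = 0) :
    ∑ a ∈ Finset.range m, f a * g a = 0 := by
  rw [Finset.sum_congr rfl (fun a _ => h a)]
  exact Finset.sum_const_zero

lemma S_dl_dl {c c' : ℕ} (h : c ≠ c') :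
    ∑ a ∈ Finset.range m, dl c a * dl c' a = 0 := by
  refine S_zero (fun a => ?_)
  unfold dl
  by_cases h1 : a = c
  · subst h1
    rw [if_pos rfl, if_neg h, mul_zero]
  · rw [if_neg h1, zero_mul]

lemma S_dl0_u1 : ∑ a ∈ Finset.range m, dl 0 a * u1 a = 0 := by
  refine S_zero (fun a => ?_)
  unfold dl u1
  by_cases h : a = 0 <;> simp [h]

lemma S_dl0_hsh (t : ℕ) : ∑ a ∈ Finset.range m, dl 0 a * hsh t a = 0 := by
  refine S_zero (fun a => ?_)
  unfold dl hsh
  by_cases h : a = 0 <;> simp [h]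

lemma S_u1_hsh (hm : 2 ≤ m) {t : ℕ} (ht : t < m - 1) :
    ∑ a ∈ Finset.range m, u1 a * hsh t a = 0 := by
  have key : ∀ a, u1 a * hsh t a = hsh t a := by
    intro a
    unfold u1 hsh
    by_cases h : a = 0 <;> simp [h]
  rw [Finset.sum_congr rfl (fun a _ => key a)]
  exact sum_hsh_m hm ht

lemma S_onef_hsh (hm : 2 ≤ m) {t : ℕ} (ht : t < m - 1) :
    ∑ a ∈ Finset.range m, onef a * hsh t a = 0 := by
  have key : ∀ a, onef a * hsh t a = hsh t a := fun a => one_mul _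
  rw [Finset.sum_congr rfl (fun a _ => key a)]
  exact sum_hsh_m hm ht

lemma S_onef_helm {t : ℕ} (ht : t < m) :
    ∑ a ∈ Finset.range m, onef a * helm t a = 0 := by
  have key : ∀ a, onef a * helm t a = helm t a := fun a => one_mul _
  rw [Finset.sum_congr rfl (fun a _ => key a)]
  exact sum_helm ht

lemma S_dl_sq {c : ℕ} (h : c < m) : ∑ a ∈ Finset.range m, dl c a * dl c a = 1 := by
  have key : ∀ a, dl c a * dl c a = dl c a := by
    intro a
    unfold dl
    by_cases h1 : a = c <;> simp [h1]
  rw [Finset.sum_congr rfl (fun a _ => key a)]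
  exact sum_dl h

lemma S_u1_sq (hm : 2 ≤ m) : ∑ a ∈ Finset.range m, u1 a * u1 a = (m : ℂ) - 1 := by
  have key : ∀ a, u1 a * u1 a = u1 a := by
    intro a
    unfold u1
    by_cases h1 : a = 0 <;> simp [h1]
  rw [Finset.sum_congr rfl (fun a _ => key a)]
  exact sum_u1 hm

lemma S_onef_sq : ∑ a ∈ Finset.range m, onef a * onef a = (m : ℂ) := by
  have key : ∀ a, onef a * onef a = onef a := fun a => one_mul _
  rw [Finset.sum_congr rfl (fun a _ => key a)]
  exact sum_onef

lemma m_sub_one_ne (hm : 2 ≤ m) : (m : ℂ) - 1 ≠ 0 := by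
  have : ((m - 1 : ℕ) : ℂ) ≠ 0 := Nat.cast_ne_zero.mpr (by omega)
  have he : ((m - 1 : ℕ) : ℂ) = (m : ℂ) - 1 := by
    push_cast [Nat.cast_sub (by omega : 1 ≤ m)]
    ring
  rw [he] at this
  exact this

lemma m_ne (hm : 2 ≤ m) : (m : ℂ) ≠ 0 := Nat.cast_ne_zero.mpr (by omega)

lemma t_norm_ne {t : ℕ} (ht : 1 ≤ t) : (t : ℂ) + (t : ℂ) ^ 2 ≠ 0 := by
  have : ((t + t ^ 2 : ℕ) : ℂ) ≠ 0 := Nat.cast_ne_zero.mpr (by positivity)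
  push_cast at this
  exact this
abbrev U3 := Unit ⊕ Unit ⊕ Unit

abbrev IFt (m : ℕ) := U3 ⊕ (Fin (m - 2) ⊕ ((Fin (m - 1) × Fin (m - 1)) ⊕ Fin (m - 2)))

def gvec (m : ℕ) : IFt m → XX m → ℂ
  | .inl (.inl _) => vA0 m
  | .inl (.inr (.inl _)) => vA1 m
  | .inl (.inr (.inr _)) => vA2 m
  | .inr (.inl t) => vB m ((t : ℕ) + 1)
  | .inr (.inr (.inl p)) => vC m ((p.1 : ℕ) + 1) ((p.2 : ℕ) + 1)
  | .inr (.inr (.inr t)) => vD m ((t : ℕ) + 1)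

lemma gvec_orth (hm : 2 ≤ m) : ∀ a b : IFt m, a ≠ b → IP (gvec m a) (gvec m b) = 0 := by
  intro a b hab
  rcases a with ((u | u | u) | (t | (p | t))) <;>
    rcases b with ((u' | u' | u') | (t' | (p' | t'))) <;>
    simp only [gvec, vA0, vA1, vA2, vB, vC, vD] <;>
    rw [IP_tens
      (by intro a; first |exact conj_dl _ a|exact conj_u1 a|exact conj_onef a|exact conj_helm _ a|exact conj_hsh _ a)
      (by intro a; first |exact conj_dl _ a|exact conj_u1 a|exact conj_onef a|exact conj_helm _ a|exact conj_hsh _ a)]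
  · exact absurd rfl hab
  · rw [S_dl0_u1, zero_mul]
  · rw [S_dl0_u1, mul_zero]
  · rw [S_dl0_hsh _, zero_mul]
  · rw [S_dl_dl (by omega), mul_zero]
  · rw [S_dl0_hsh _, mul_zero]
  · rw [S_swap S_dl0_u1, zero_mul]
  · exact absurd rfl hab
  · rw [S_dl0_u1, mul_zero]
  · rw [S_u1_hsh hm (by have := t'.isLt; omega), zero_mul]
  · rw [S_dl_dl (by omega), mul_zero]
  · rw [S_dl0_hsh _, mul_zero]
  · rw [S_swap S_dl0_u1, mul_zero]
  · rw [S_swap S_dl0_u1, mul_zero]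
  · exact absurd rfl hab
  · rw [S_onef_hsh hm (by have := t'.isLt; omega), zero_mul]
  · rw [S_onef_helm (by have := p'.1.isLt; omega), zero_mul]
  · rw [S_u1_hsh hm (by have := t'.isLt; omega), mul_zero]
  · rw [S_swap (S_dl0_hsh _), zero_mul]
  · rw [S_swap (S_u1_hsh hm (by have := t.isLt; omega)), zero_mul]
  · rw [S_dl0_u1, mul_zero]
  · have hv : (t : ℕ) + 1 ≠ (t' : ℕ) + 1 := by
      intro h
      exact hab (by rw [show t = t' from Fin.ext (by omega)])
    rw [sum_hsh_mul_m hm hv (by have := t.isLt; omega) (by have := t'.isLt; omega), zero_mul]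
  · rw [S_dl_dl (by omega), mul_zero]
  · rw [S_dl0_hsh _, mul_zero]
  · rw [S_dl_dl (by omega), mul_zero]
  · rw [S_dl_dl (by omega), mul_zero]
  · rw [S_swap (S_onef_helm (by have := p.1.isLt; omega)), zero_mul]
  · rw [S_dl_dl (by omega), mul_zero]
  · by_cases h2 : p.2 = p'.2
    · have h1 : (p.1 : ℕ) + 1 ≠ (p'.1 : ℕ) + 1 := by
        intro h
        exact hab (by rw [show p = p' from Prod.ext (Fin.ext (by omega)) h2])
      rw [sum_helm_mul h1 (by have := p.1.isLt; omega) (by have := p'.1.isLt; omega), zero_mul]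
    · have h2' : (p.2 : ℕ) + 1 ≠ (p'.2 : ℕ) + 1 := by
        intro h
        exact h2 (Fin.ext (by omega))
      rw [S_dl_dl h2', mul_zero]
  · rw [S_swap (S_onef_helm (by have := p.1.isLt; omega)), zero_mul]
  · rw [S_swap (S_dl0_hsh _), mul_zero]
  · rw [S_swap (S_dl0_hsh _), mul_zero]
  · rw [S_swap (S_u1_hsh hm (by have := t.isLt; omega)), mul_zero]
  · rw [S_swap (S_dl0_hsh _), mul_zero]
  · rw [S_onef_helm (by have := p'.1.isLt; omega), zero_mul]
  · have hv : (t : ℕ) + 1 ≠ (t' : ℕ) + 1 := by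
      intro h
      exact hab (by rw [show t = t' from Fin.ext (by omega)])
    rw [sum_hsh_mul_m hm hv (by have := t.isLt; omega) (by have := t'.isLt; omega), mul_zero]

lemma gvec_norm (hm : 2 ≤ m) : ∀ a : IFt m, IP (gvec m a) (gvec m a) ≠ 0 := by
  intro a
  rcases a with ((u | u | u) | (t | (p | t))) <;>
    simp only [gvec, vA0, vA1, vA2, vB, vC, vD] <;>
    rw [IP_tens
      (by intro a; first |exact conj_dl _ a|exact conj_u1 a|exact conj_onef a|exact conj_helm _ a|exact conj_hsh _ a)
      (by intro a; first |exact conj_dl _ a|exact conj_u1 a|exact conj_onef a|exact conj_helm _ a|exact conj_hsh _ a)]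
  · rw [S_dl_sq (by omega)]
    norm_num
  · rw [S_u1_sq hm, S_dl_sq (by omega), mul_one]
    exact m_sub_one_ne hm
  · rw [S_onef_sq, S_u1_sq hm]
    exact mul_ne_zero (m_ne hm) (m_sub_one_ne hm)
  · rw [sum_hsh_sq_m hm (by have := t.isLt; omega), S_dl_sq (by omega), mul_one]
    exact t_norm_ne (by omega)
  · rw [sum_helm_sq (by have := p.1.isLt; omega), S_dl_sq (by have := p.2.isLt; omega), mul_one]
    exact t_norm_ne (by omega)
  · rw [S_onef_sq, sum_hsh_sq_m hm (by have := t.isLt; omega)]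
    exact mul_ne_zero (m_ne hm) (t_norm_ne (by omega))
lemma IP_zero_left (w : XX m → ℂ) : IP 0 w = 0 := by simp [IP]

lemma IP_add_left (u u' w : XX m → ℂ) : IP (u + u') w = IP u w + IP u' w := by
  unfold IP
  rw [← Finset.sum_add_distrib]
  refine Finset.sum_congr rfl (fun y _ => ?_)
  rw [Pi.add_apply]
  ring

lemma IP_smul_left (c : ℂ) (u w : XX m → ℂ) : IP (c • u) w = c * IP u w := by
  unfold IP
  rw [Finset.mul_sum]
  refine Finset.sum_congr rfl (fun y _ => ?_)
  rw [Pi.smul_apply, smul_eq_mul]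
  ring

lemma IP_zero_right (u : XX m → ℂ) : IP u 0 = 0 := by simp [IP]

lemma IP_add_right (u w w' : XX m → ℂ) : IP u (w + w') = IP u w + IP u w' := by
  unfold IP
  rw [← Finset.sum_add_distrib]
  refine Finset.sum_congr rfl (fun y _ => ?_)
  rw [Pi.add_apply, map_add]
  ring

lemma IP_smul_right (c : ℂ) (u w : XX m → ℂ) :
    IP u (c • w) = (starRingEnd ℂ) c * IP u w := by
  unfold IP
  rw [Finset.mul_sum]
  refine Finset.sum_congr rfl (fun y _ => ?_)
  rw [Pi.smul_apply, smul_eq_mul, map_mul]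
  ring

lemma IP_span_right {u : XX m → ℂ} {T : Set (XX m → ℂ)} (h : ∀ w ∈ T, IP u w = 0) :
    ∀ w ∈ Submodule.span ℂ T, IP u w = 0 := by
  intro w hw
  induction hw using Submodule.span_induction with
  | mem x hx => exact h x hx
  | zero => exact IP_zero_right u
  | add x y _ _ hx hy => rw [IP_add_right, hx, hy, add_zero]
  | smul c x _ hx => rw [IP_smul_right, hx, mul_zero]

lemma IP_span {S T : Set (XX m → ℂ)} (h : ∀ u ∈ S, ∀ w ∈ T, IP u w = 0) :
    ∀ u ∈ Submodule.span ℂ S, ∀ w ∈ Submodule.span ℂ T, IP u w = 0 := by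
  intro u hu
  induction hu using Submodule.span_induction with
  | mem x hx => exact IP_span_right (h x hx)
  | zero => intro w _; exact IP_zero_left w
  | add x y _ _ hx hy =>
    intro w hw
    rw [IP_add_left, hx w hw, hy w hw, add_zero]
  | smul c x _ hx =>
    intro w hw
    rw [IP_smul_left, hx w hw, mul_zero]

lemma IP_sum_left {ι : Type*} (s : Finset ι) (v : ι → XX m → ℂ) (w : XX m → ℂ) :
    IP (∑ i ∈ s, v i) w = ∑ i ∈ s, IP (v i) w := by
  induction s using Finset.induction_on with
  | empty => simp [IP]
  | insert _ _ hni ih =>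
    rw [Finset.sum_insert hni, Finset.sum_insert hni, IP_add_left, ih]

lemma li_of_orth {ι : Type*} [Fintype ι] (v : ι → XX m → ℂ)
    (horth : ∀ i j, i ≠ j → IP (v i) (v j) = 0) (hnorm : ∀ i, IP (v i) (v i) ≠ 0) :
    LinearIndependent ℂ v := by
  rw [Fintype.linearIndependent_iff]
  intro g hg j
  have h1 : IP (∑ i, g i • v i) (v j) = 0 := by
    rw [hg, IP_zero_left]
  rw [IP_sum_left] at h1
  have h2 : ∀ i ∈ Finset.univ, i ≠ j → IP (g i • v i) (v j) = 0 := by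
    intro i _ hij
    rw [IP_smul_left, horth i j hij, mul_zero]
  rw [Finset.sum_eq_single_of_mem j (Finset.mem_univ j) h2, IP_smul_left] at h1
  rcases mul_eq_zero.mp h1 with h | h
  · exact h
  · exact absurd h (hnorm j)

lemma gvec_ne_zero (hm : 2 ≤ m) (a : IFt m) : gvec m a ≠ 0 := by
  intro h
  apply gvec_norm hm a
  rw [h, IP_zero_left]

lemma gvec_li (hm : 2 ≤ m) : LinearIndependent ℂ (gvec m) :=
  li_of_orth (gvec m) (gvec_orth hm) (gvec_norm hm)

lemma card_XX : Fintype.card (XX m) = m ^ 2 := by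
  rw [Fintype.card_pi]
  simp [Finset.prod_const]

lemma card_IFt (hm : 2 ≤ m) : Fintype.card (IFt m) = m ^ 2 := by
  obtain ⟨k, rfl⟩ : ∃ k, m = k + 2 := ⟨m - 2, by omega⟩
  simp only [Fintype.card_sum, Fintype.card_prod, Fintype.card_fin, Fintype.card_unit]
  have h1 : k + 2 - 2 = k := by omega
  have h2 : k + 2 - 1 = k + 1 := by omega
  rw [h1, h2]
  ring

lemma gvec_span (hm : 2 ≤ m) : Submodule.span ℂ (Set.range (gvec m)) = ⊤ := by
  haveI : Nonempty (IFt m) := ⟨Sum.inl (Sum.inl ())⟩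
  refine (gvec_li hm).span_eq_top_of_card_eq_finrank ?_
  rw [card_IFt hm, Module.finrank_fintype_fun_eq_card, card_XX]

lemma mulVec_mem_span {M : Matrix (XX m) (XX m) ℂ} {S : Set (XX m → ℂ)}
    (h : ∀ v ∈ S, M.mulVec v ∈ Submodule.span ℂ S) :
    ∀ u ∈ Submodule.span ℂ S, M.mulVec u ∈ Submodule.span ℂ S := by
  intro u hu
  induction hu using Submodule.span_induction with
  | mem x hx => exact h x hx
  | zero => rw [Matrix.mulVec_zero]; exact Submodule.zero_mem _
  | add x y _ _ hx hy => rw [Matrix.mulVec_add]; exact Submodule.add_mem _ hx hy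
  | smul c x _ hx => rw [Matrix.mulVec_smul]; exact Submodule.smul_mem _ _ hx

lemma line_inv {M : Matrix (XX m) (XX m) ℂ} {v : XX m → ℂ} {lam : ℂ}
    (h : M.mulVec v = lam • v) :
    ∀ u ∈ Submodule.span ℂ {v}, M.mulVec u ∈ Submodule.span ℂ {v} := by
  refine mulVec_mem_span (fun w hw => ?_)
  rw [Set.mem_singleton_iff.mp hw, h]
  exact Submodule.smul_mem _ _ (Submodule.mem_span_singleton_self v)

def genSet (m : ℕ) (hm : 2 ≤ m) : Set (Matrix (XX m) (XX m) ℂ) :=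
  {M | ∃ i ≤ 2, M = wA 2 (n2 m) i} ∪ {M | ∃ i ≤ 2, M = wE 2 (n2 m) (fun _ => hm) i}

lemma T2_inv_of_gen {hm : 2 ≤ m} (U : Submodule ℂ (XX m → ℂ))
    (h : ∀ M ∈ genSet m hm, ∀ v ∈ U, M.mulVec v ∈ U) :
    ∀ M ∈ T2 m hm, ∀ v ∈ U, M.mulVec v ∈ U := by
  intro M hM
  have hM' : M ∈ Algebra.adjoin ℂ (genSet m hm) := hM
  clear hM
  induction hM' using Algebra.adjoin_induction with
  | mem x hx => exact h x hx
  | algebraMap r =>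
    intro v hv
    rw [Algebra.algebraMap_eq_smul_one, Matrix.smul_mulVec, Matrix.one_mulVec]
    exact U.smul_mem r hv
  | add x y hx hy ihx ihy =>
    intro v hv
    rw [Matrix.add_mulVec]
    exact U.add_mem (ihx v hv) (ihy v hv)
  | mul x y hx hy ihx ihy =>
    intro v hv
    rw [← Matrix.mulVec_mulVec]
    exact ihx _ (ihy v hv)
abbrev It (m : ℕ) := Unit ⊕ (Fin (m - 2) ⊕ ((Fin (m - 1) × Fin (m - 1)) ⊕ Fin (m - 2)))

def Sset (m : ℕ) : It m → Set (XX m → ℂ)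
  | .inl _ => {vA0 m, vA1 m, vA2 m}
  | .inr s => {gvec m (.inr s)}

def Wfam (m : ℕ) (i : It m) : Submodule ℂ (XX m → ℂ) := Submodule.span ℂ (Sset m i)

def proj (m : ℕ) : IFt m → It m := Sum.map (fun _ => ()) id

lemma Sset_char (i : It m) (u : XX m → ℂ) (hu : u ∈ Sset m i) :
    ∃ a : IFt m, proj m a = i ∧ gvec m a = u := by
  rcases i with u' | s
  · rcases u'
    simp only [Sset, Set.mem_insert_iff, Set.mem_singleton_iff] at hu
    rcases hu with rfl | rfl | rfl
    · exact ⟨.inl (.inl ()), rfl, rfl⟩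
    · exact ⟨.inl (.inr (.inl ())), rfl, rfl⟩
    · exact ⟨.inl (.inr (.inr ())), rfl, rfl⟩
  · simp only [Sset, Set.mem_singleton_iff] at hu
    exact ⟨.inr s, rfl, hu.symm⟩

lemma Wfam_orth (hm : 2 ≤ m) {i j : It m} (hij : i ≠ j) :
    ∀ u ∈ Wfam m i, ∀ w ∈ Wfam m j, IP u w = 0 := by
  refine IP_span (fun u hu w hw => ?_)
  obtain ⟨a, ha, rfl⟩ := Sset_char i u hu
  obtain ⟨b, hb, rfl⟩ := Sset_char j w hw
  exact gvec_orth hm a b (fun h => hij (by rw [← ha, ← hb, h]))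

lemma vA0_mem' : vA0 m ∈ Submodule.span ℂ {vA0 m, vA1 m, vA2 m} :=
  Submodule.subset_span (by simp)
lemma vA1_mem' : vA1 m ∈ Submodule.span ℂ {vA0 m, vA1 m, vA2 m} :=
  Submodule.subset_span (by simp)
lemma vA2_mem' : vA2 m ∈ Submodule.span ℂ {vA0 m, vA1 m, vA2 m} :=
  Submodule.subset_span (by simp)

lemma gvec_mem (a : IFt m) : gvec m a ∈ Wfam m (proj m a) := by
  rcases a with ((u | u | u) | s)
  · exact vA0_mem'
  · exact vA1_mem'
  · exact vA2_mem'
  · exact Submodule.mem_span_singleton_self _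

lemma Wfam_sup (hm : 2 ≤ m) : (⨆ i, Wfam m i) = ⊤ := by
  refine le_antisymm le_top ?_
  rw [← gvec_span hm, Submodule.span_le]
  rintro _ ⟨a, rfl⟩
  exact Submodule.mem_iSup_of_mem (proj m a) (gvec_mem a)

lemma mem_W0 (i : Fin 3) :
    (if i = 0 then vA0 m else if i = 1 then vA1 m else vA2 m)
      ∈ Submodule.span ℂ {vA0 m, vA1 m, vA2 m} := by
  refine Submodule.subset_span ?_
  split
  · simp
  · split <;> simp

lemma vA0_mem : vA0 m ∈ Submodule.span ℂ {vA0 m, vA1 m, vA2 m} :=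
  Submodule.subset_span (by simp)
lemma vA1_mem : vA1 m ∈ Submodule.span ℂ {vA0 m, vA1 m, vA2 m} :=
  Submodule.subset_span (by simp)
lemma vA2_mem : vA2 m ∈ Submodule.span ℂ {vA0 m, vA1 m, vA2 m} :=
  Submodule.subset_span (by simp)

lemma gvec_base_zero (hm : 2 ≤ m)
    (s : Fin (m - 2) ⊕ ((Fin (m - 1) × Fin (m - 1)) ⊕ Fin (m - 2))) :
    gvec m (.inr s) (wBase 2 (n2 m) (fun _ => hm)) = 0 := by
  rcases s with t | (p | t)
  · show hsh ((t : ℕ) + 1) 0 * dl 0 0 = 0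
    simp [hsh, dl]
  · show helm ((p.1 : ℕ) + 1) 0 * dl ((p.2 : ℕ) + 1) 0 = 0
    simp [dl]
  · show onef 0 * hsh ((t : ℕ) + 1) 0 = 0
    simp [onef, hsh]

lemma vA0_base (hm : 2 ≤ m) : vA0 m (wBase 2 (n2 m) (fun _ => hm)) = 1 := by
  show dl 0 0 * dl 0 0 = 1
  simp [dl]

lemma vA1_base (hm : 2 ≤ m) : vA1 m (wBase 2 (n2 m) (fun _ => hm)) = 0 := by
  show u1 0 * dl 0 0 = 0
  simp [u1]

lemma vA2_base (hm : 2 ≤ m) : vA2 m (wBase 2 (n2 m) (fun _ => hm)) = 0 := by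
  show onef 0 * u1 0 = 0
  simp [onef, u1]

lemma Wfam_inv (hm : 2 ≤ m) (i : It m) :
    ∀ M ∈ T2 m hm, ∀ v ∈ Wfam m i, M.mulVec v ∈ Wfam m i := by
  apply T2_inv_of_gen
  rintro M (⟨j, hj, rfl⟩ | ⟨j, hj, rfl⟩)
  · -- adjacency generators
    interval_cases j
    · intro v hv
      rw [A0_mulVec]
      exact hv
    · -- A1
      rcases i with u | (t | (p | t))
      · refine mulVec_mem_span (fun w hw => ?_)
        simp only [Sset, Set.mem_insert_iff, Set.mem_singleton_iff] at hw
        rcases hw with rfl | rfl | rfl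
        · rw [a1_vA0 hm]; exact vA1_mem
        · rw [a1_vA1 hm]
          exact Submodule.add_mem _ (Submodule.smul_mem _ _ vA0_mem)
            (Submodule.smul_mem _ _ vA1_mem)
        · rw [a1_vA2' hm]
          exact Submodule.smul_mem _ _ vA2_mem
      · exact line_inv (a1_vB hm (by have := t.isLt; omega))
      · exact line_inv (a1_vC hm (by have := p.1.isLt; omega))
      · exact line_inv (a1_vD hm)
    · -- A2
      rcases i with u | (t | (p | t))
      · refine mulVec_mem_span (fun w hw => ?_)
        simp only [Sset, Set.mem_insert_iff, Set.mem_singleton_iff] at hw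
        rcases hw with rfl | rfl | rfl
        · rw [a2_vA0 hm]; exact vA2_mem
        · rw [a2_vA1 hm]
          exact Submodule.smul_mem _ _ vA2_mem
        · rw [a2_vA2 hm]
          exact Submodule.add_mem _ (Submodule.add_mem _ (Submodule.smul_mem _ _ vA0_mem)
            (Submodule.smul_mem _ _ vA1_mem)) (Submodule.smul_mem _ _ vA2_mem)
      · exact line_inv (show (wA 2 (n2 m) 2).mulVec (vB m ((t:ℕ)+1)) = (0:ℂ) • vB m ((t:ℕ)+1) by
          rw [a2_vB hm (by have := t.isLt; omega), zero_smul])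
      · exact line_inv (show (wA 2 (n2 m) 2).mulVec (vC m ((p.1:ℕ)+1) ((p.2:ℕ)+1))
            = (0:ℂ) • vC m ((p.1:ℕ)+1) ((p.2:ℕ)+1) by
          rw [a2_vC hm (by have := p.1.isLt; omega), zero_smul])
      · exact line_inv (a2_vD hm (by have := t.isLt; omega))
  · -- dual idempotent generators
    interval_cases j
    · -- E0
      rcases i with u | s
      · refine mulVec_mem_span (fun w hw => ?_)
        rw [e0_any hm w]
        exact Submodule.smul_mem _ _ vA0_mem
      · exact line_inv (show _ = (0:ℂ) • gvec m (.inr s) by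
          rw [e0_any hm, gvec_base_zero hm s, zero_smul, zero_smul])
    · -- E1
      rcases i with u | (t | (p | t))
      · refine mulVec_mem_span (fun w hw => ?_)
        simp only [Sset, Set.mem_insert_iff, Set.mem_singleton_iff] at hw
        rcases hw with rfl | rfl | rfl
        · rw [e1_vA0 hm]; exact Submodule.zero_mem _
        · rw [e1_vA1 hm]; exact vA1_mem
        · rw [e1_vA2 hm]; exact Submodule.zero_mem _
      · exact line_inv (show (wE 2 (n2 m) (fun _ => hm) 1).mulVec (vB m ((t:ℕ)+1))
            = (1:ℂ) • vB m ((t:ℕ)+1) by rw [e1_vB hm, one_smul])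
      · exact line_inv (show (wE 2 (n2 m) (fun _ => hm) 1).mulVec (vC m ((p.1:ℕ)+1) ((p.2:ℕ)+1))
            = (0:ℂ) • vC m ((p.1:ℕ)+1) ((p.2:ℕ)+1) by
          rw [e1_vC hm (by omega), zero_smul])
      · exact line_inv (show (wE 2 (n2 m) (fun _ => hm) 1).mulVec (vD m ((t:ℕ)+1))
            = (0:ℂ) • vD m ((t:ℕ)+1) by rw [e1_vD hm, zero_smul])
    · -- E2
      rcases i with u | (t | (p | t))
      · refine mulVec_mem_span (fun w hw => ?_)
        simp only [Sset, Set.mem_insert_iff, Set.mem_singleton_iff] at hw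
        rcases hw with rfl | rfl | rfl
        · rw [e2_vA0 hm]; exact Submodule.zero_mem _
        · rw [e2_vA1 hm]; exact Submodule.zero_mem _
        · rw [e2_vA2 hm]; exact vA2_mem
      · exact line_inv (show (wE 2 (n2 m) (fun _ => hm) 2).mulVec (vB m ((t:ℕ)+1))
            = (0:ℂ) • vB m ((t:ℕ)+1) by rw [e2_vB hm, zero_smul])
      · exact line_inv (show (wE 2 (n2 m) (fun _ => hm) 2).mulVec (vC m ((p.1:ℕ)+1) ((p.2:ℕ)+1))
            = (1:ℂ) • vC m ((p.1:ℕ)+1) ((p.2:ℕ)+1) by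
          rw [e2_vC hm (by omega), one_smul])
      · exact line_inv (show (wE 2 (n2 m) (fun _ => hm) 2).mulVec (vD m ((t:ℕ)+1))
            = (1:ℂ) • vD m ((t:ℕ)+1) by rw [e2_vD hm, one_smul])
lemma range_triple :
    Set.range ![vA0 m, vA1 m, vA2 m] = {vA0 m, vA1 m, vA2 m} := by
  ext u
  constructor
  · rintro ⟨i, rfl⟩
    fin_cases i <;> simp
  · rintro (rfl | rfl | rfl)
    exacts [⟨0, rfl⟩, ⟨1, rfl⟩, ⟨2, rfl⟩]

lemma li_triple (hm : 2 ≤ m) : LinearIndependent ℂ ![vA0 m, vA1 m, vA2 m] := by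
  apply li_of_orth
  · intro i j hij
    fin_cases i <;> fin_cases j <;> simp_all
    · exact gvec_orth hm (.inl (.inl ())) (.inl (.inr (.inl ()))) (by simp)
    · exact gvec_orth hm (.inl (.inl ())) (.inl (.inr (.inr ()))) (by simp)
    · exact gvec_orth hm (.inl (.inr (.inl ()))) (.inl (.inl ())) (by simp)
    · exact gvec_orth hm (.inl (.inr (.inl ()))) (.inl (.inr (.inr ()))) (by simp)
    · exact gvec_orth hm (.inl (.inr (.inr ()))) (.inl (.inl ())) (by simp)
    · exact gvec_orth hm (.inl (.inr (.inr ()))) (.inl (.inr (.inl ()))) (by simp)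
  · intro i
    fin_cases i <;> simp
    · exact gvec_norm hm (.inl (.inl ()))
    · exact gvec_norm hm (.inl (.inr (.inl ())))
    · exact gvec_norm hm (.inl (.inr (.inr ())))

lemma finrank_W0 (hm : 2 ≤ m) : Module.finrank ℂ (Wfam m (Sum.inl ())) = 3 := by
  have h : Wfam m (Sum.inl ())
      = Submodule.span ℂ (Set.range ![vA0 m, vA1 m, vA2 m]) := by
    rw [range_triple]
    rfl
  rw [h, finrank_span_eq_card (li_triple hm)]
  simp

lemma finrank_line (hm : 2 ≤ m)
    (s : Fin (m - 2) ⊕ ((Fin (m - 1) × Fin (m - 1)) ⊕ Fin (m - 2))) :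
    Module.finrank ℂ (Wfam m (Sum.inr s)) = 1 :=
  finrank_span_singleton (gvec_ne_zero hm (.inr s))

lemma mem_span_triple {u : XX m → ℂ}
    (hu : u ∈ Submodule.span ℂ {vA0 m, vA1 m, vA2 m}) :
    ∃ a b c : ℂ, u = a • vA0 m + b • vA1 m + c • vA2 m := by
  induction hu using Submodule.span_induction with
  | mem x hx =>
    simp only [Set.mem_insert_iff, Set.mem_singleton_iff] at hx
    rcases hx with rfl | rfl | rfl
    · exact ⟨1, 0, 0, by simp⟩
    · exact ⟨0, 1, 0, by simp⟩
    · exact ⟨0, 0, 1, by simp⟩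
  | zero => exact ⟨0, 0, 0, by simp⟩
  | add x y _ _ hx hy =>
    obtain ⟨a, b, c, rfl⟩ := hx
    obtain ⟨a', b', c', rfl⟩ := hy
    exact ⟨a + a', b + b', c + c', by module⟩
  | smul r x _ hx =>
    obtain ⟨a, b, c, rfl⟩ := hx
    exact ⟨r * a, r * b, r * c, by module⟩

lemma e1_combo (hm : 2 ≤ m) (a b c : ℂ) :
    (wE 2 (n2 m) (fun _ => hm) 1).mulVec (a • vA0 m + b • vA1 m + c • vA2 m)
      = b • vA1 m := by
  rw [Matrix.mulVec_add, Matrix.mulVec_add, Matrix.mulVec_smul, Matrix.mulVec_smul,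
    Matrix.mulVec_smul, e1_vA0 hm, e1_vA1 hm, e1_vA2 hm]
  simp

lemma e2_combo (hm : 2 ≤ m) (a b c : ℂ) :
    (wE 2 (n2 m) (fun _ => hm) 2).mulVec (a • vA0 m + b • vA1 m + c • vA2 m)
      = c • vA2 m := by
  rw [Matrix.mulVec_add, Matrix.mulVec_add, Matrix.mulVec_smul, Matrix.mulVec_smul,
    Matrix.mulVec_smul, e2_vA0 hm, e2_vA1 hm, e2_vA2 hm]
  simp

lemma W0_irred (hm : 2 ≤ m) (U : Submodule ℂ (XX m → ℂ))
    (hle : U ≤ Wfam m (Sum.inl ()))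
    (hinv : ∀ M ∈ T2 m hm, ∀ v ∈ U, M.mulVec v ∈ U) :
    U = ⊥ ∨ U = Wfam m (Sum.inl ()) := by
  by_cases hU : U = ⊥
  · exact Or.inl hU
  right
  have hgA1 : wA 2 (n2 m) 1 ∈ T2 m hm :=
    Algebra.subset_adjoin (Set.mem_union_left _ ⟨1, by omega, rfl⟩)
  have hgA2 : wA 2 (n2 m) 2 ∈ T2 m hm :=
    Algebra.subset_adjoin (Set.mem_union_left _ ⟨2, by omega, rfl⟩)
  have hgE0 : wE 2 (n2 m) (fun _ => hm) 0 ∈ T2 m hm :=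
    Algebra.subset_adjoin (Set.mem_union_right _ ⟨0, by omega, rfl⟩)
  have hgE1 : wE 2 (n2 m) (fun _ => hm) 1 ∈ T2 m hm :=
    Algebra.subset_adjoin (Set.mem_union_right _ ⟨1, by omega, rfl⟩)
  have hgE2 : wE 2 (n2 m) (fun _ => hm) 2 ∈ T2 m hm :=
    Algebra.subset_adjoin (Set.mem_union_right _ ⟨2, by omega, rfl⟩)
  have smul_cancel : ∀ (z : ℂ) (v : XX m → ℂ), z ≠ 0 → z • v ∈ U → v ∈ U := by
    intro z v hz h
    have h2 := U.smul_mem z⁻¹ h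
    rwa [smul_smul, inv_mul_cancel₀ hz, one_smul] at h2
  have step1 : vA1 m ∈ U → vA0 m ∈ U := by
    intro h1
    have h2 := hinv _ hgA1 _ h1
    rw [a1_vA1 hm] at h2
    have h3 := hinv _ hgE0 _ h2
    rw [e0_any hm] at h3
    have hval : (((m : ℂ) - 1) • vA0 m + ((m : ℂ) - 2) • vA1 m)
        (wBase 2 (n2 m) (fun _ => hm)) = (m : ℂ) - 1 := by
      rw [Pi.add_apply, Pi.smul_apply, Pi.smul_apply, smul_eq_mul, smul_eq_mul,
        vA0_base hm, vA1_base hm]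
      ring
    rw [hval] at h3
    exact smul_cancel _ _ (m_sub_one_ne hm) h3
  have step2 : vA2 m ∈ U → vA0 m ∈ U := by
    intro h1
    have h2 := hinv _ hgA2 _ h1
    rw [a2_vA2 hm] at h2
    have h3 := hinv _ hgE0 _ h2
    rw [e0_any hm] at h3
    have hval : (((m : ℂ) * ((m : ℂ) - 1)) • vA0 m + ((m : ℂ) * ((m : ℂ) - 1)) • vA1 m
        + ((m : ℂ) * ((m : ℂ) - 2)) • vA2 m) (wBase 2 (n2 m) (fun _ => hm))
          = (m : ℂ) * ((m : ℂ) - 1) := by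
      rw [Pi.add_apply, Pi.add_apply, Pi.smul_apply, Pi.smul_apply, Pi.smul_apply,
        smul_eq_mul, smul_eq_mul, smul_eq_mul, vA0_base hm, vA1_base hm, vA2_base hm]
      ring
    rw [hval] at h3
    exact smul_cancel _ _ (mul_ne_zero (m_ne hm) (m_sub_one_ne hm)) h3
  have hvA0 : vA0 m ∈ U := by
    obtain ⟨u, huU, hune⟩ := Submodule.exists_mem_ne_zero_of_ne_bot hU
    obtain ⟨a, b, c, rfl⟩ := mem_span_triple (hle huU)
    by_cases ha : a = 0
    · by_cases hb : b = 0
      · have hc : c ≠ 0 := by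
          intro hc
          exact hune (by rw [ha, hb, hc]; simp)
        have h2 := hinv _ hgE2 _ huU
        rw [e2_combo hm] at h2
        exact step2 (smul_cancel c _ hc h2)
      · have h2 := hinv _ hgE1 _ huU
        rw [e1_combo hm] at h2
        exact step1 (smul_cancel b _ hb h2)
    · have h2 := hinv _ hgE0 _ huU
      rw [e0_any hm] at h2
      have hval : (a • vA0 m + b • vA1 m + c • vA2 m)
          (wBase 2 (n2 m) (fun _ => hm)) = a := by
        rw [Pi.add_apply, Pi.add_apply, Pi.smul_apply, Pi.smul_apply, Pi.smul_apply,
          smul_eq_mul, smul_eq_mul, smul_eq_mul, vA0_base hm, vA1_base hm, vA2_base hm]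
        ring
      rw [hval] at h2
      exact smul_cancel a _ ha h2
  have hvA1 : vA1 m ∈ U := by
    have h2 := hinv _ hgA1 _ hvA0
    rwa [a1_vA0 hm] at h2
  have hvA2 : vA2 m ∈ U := by
    have h2 := hinv _ hgA2 _ hvA0
    rwa [a2_vA0 hm] at h2
  refine le_antisymm hle ?_
  rw [show Wfam m (Sum.inl ()) = Submodule.span ℂ {vA0 m, vA1 m, vA2 m} from rfl,
    Submodule.span_le]
  intro x hx
  simp only [Set.mem_insert_iff, Set.mem_singleton_iff] at hx
  rcases hx with rfl | rfl | rfl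
  · exact hvA0
  · exact hvA1
  · exact hvA2

lemma card_It (hm : 2 ≤ m) : Fintype.card (Fin (m ^ 2 - 2)) = Fintype.card (It m) := by
  rw [Fintype.card_fin]
  obtain ⟨k, rfl⟩ : ∃ k, m = k + 2 := ⟨m - 2, by omega⟩
  simp only [Fintype.card_sum, Fintype.card_prod, Fintype.card_fin, Fintype.card_unit]
  have h1 : k + 2 - 2 = k := by omega
  have h2 : k + 2 - 1 = k + 1 := by omega
  have h3 : (k + 2) ^ 2 = k * k + 4 * k + 4 := by ring
  have h4 : (k + 1) * (k + 1) = k * k + 2 * k + 1 := by ring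
  rw [h1, h2, h3, h4]
  omega

end WS

/-- For the wreath square `(K_m)^{≀2}`, the standard module
`ℂ^X` decomposes as an orthogonal direct sum (w.r.t. the standard Hermitian
inner product) of `m² - 2` subspaces, each invariant under every matrix of
the Terwilliger algebra `T`, exactly one of which has dimension `3` and the
remaining `m² - 3` have dimension `1`; the `3`-dimensional subspace has no
`T`-invariant subspace other than `{0}` and itself. -/
theorem standard_module_decomposition_wreath_square (m : ℕ) (hm : 2 ≤ m) :
    ∃ (W : Fin (m ^ 2 - 2) → Submodule ℂ ((∀ k : Fin 2, Fin (n2 m k)) → ℂ))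
      (i₀ : Fin (m ^ 2 - 2)),
      (∀ i j, i ≠ j → ∀ u ∈ W i, ∀ w ∈ W j,
        ∑ y, u y * (starRingEnd ℂ) (w y) = 0) ∧
      (⨆ i, W i) = ⊤ ∧
      (∀ i, ∀ M ∈ T2 m hm, ∀ v ∈ W i, M.mulVec v ∈ W i) ∧
      Module.finrank ℂ ↥(W i₀) = 3 ∧
      (∀ i, i ≠ i₀ → Module.finrank ℂ ↥(W i) = 1) ∧
      (∀ U : Submodule ℂ ((∀ k : Fin 2, Fin (n2 m k)) → ℂ), U ≤ W i₀ →
        (∀ M ∈ T2 m hm, ∀ v ∈ U, M.mulVec v ∈ U) → U = ⊥ ∨ U = W i₀) := by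
  classical
  obtain e : Fin (m ^ 2 - 2) ≃ WS.It m := Fintype.equivOfCardEq (WS.card_It hm)
  refine ⟨fun i => WS.Wfam m (e i), e.symm (Sum.inl ()), ?_, ?_, ?_, ?_, ?_, ?_⟩
  · intro i j hij u hu w hw
    exact WS.Wfam_orth hm (fun h => hij (e.injective h)) u hu w hw
  · rw [e.iSup_comp]
    exact WS.Wfam_sup hm
  · intro i
    exact WS.Wfam_inv hm (e i)
  · show Module.finrank ℂ (WS.Wfam m (e (e.symm (Sum.inl ())))) = 3
    rw [Equiv.apply_symm_apply]
    exact WS.finrank_W0 hm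
  · intro i hii
    rcases he : e i with u | s
    · exfalso
      apply hii
      rcases u
      have h2 : e.symm (e i) = e.symm (Sum.inl ()) := by rw [he]
      rwa [Equiv.symm_apply_apply] at h2
    · show Module.finrank ℂ (WS.Wfam m (e i)) = 1
      rw [he]
      exact WS.finrank_line hm s
  · intro U hle hinvU
    have hle' : U ≤ WS.Wfam m (Sum.inl ()) := by
      have h2 : (fun i => WS.Wfam m (e i)) (e.symm (Sum.inl ()))
          = WS.Wfam m (Sum.inl ()) := by
        show WS.Wfam m (e (e.symm (Sum.inl ()))) = _
        rw [Equiv.apply_symm_apply]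
      rwa [h2] at hle
    have h := WS.W0_irred hm U hle' hinvU
    rcases h with h | h
    · exact Or.inl h
    · right
      show U = WS.Wfam m (e (e.symm (Sum.inl ())))
      rw [Equiv.apply_symm_apply]
      exact h
end
end

section
/- Let d ≥ 1. The Terwilliger algebra T of the wreath power (K_2)^{≀d} has ℂ-dimension (d+1)^2 + d(d−1)/2 and is isomorphic as a ℂ-algebra to M_{d+1}(ℂ) × ℂ^{d(d−1)/2} (i.e., M_{d+1}(ℂ) ⊕ M_1(ℂ)^{⊕ d(d−1)/2}). -/
open scoped Classical

noncomputable section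

/-- The constant family for the wreath power `(K_2)^{≀d}`: `n_k = 2` for all `k`. -/
abbrev nc (d m : ℕ) : Fin d → ℕ := fun _ => m

/-- The Terwilliger algebra of the wreath power `(K_m)^{≀d}`. -/
def Tpow (d m : ℕ) (hm : 2 ≤ m) :
    Subalgebra ℂ (Matrix (∀ k : Fin d, Fin (nc d m k)) (∀ k : Fin d, Fin (nc d m k)) ℂ) :=
  wT d (nc d m) fun _ => hm

-- chunk 1 : rho basics
namespace TW
open Finset

variable {d : ℕ}

abbrev XX (d : ℕ) := ∀ k : Fin d, Fin (nc d 2 k)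

def hn2 (d : ℕ) : ∀ k : Fin d, 2 ≤ nc d 2 k := fun _ => le_rfl

def x0 (d : ℕ) : XX d := wBase d (nc d 2) (hn2 d)

lemma x0_apply (k : Fin d) : x0 d k = 0 := rfl

/-- index of the relation containing `(x,y)` : `0` if `x = y`, else
(largest differing coordinate)+1. -/
def rho (x y : XX d) : ℕ :=
  if h : (Finset.univ.filter fun k => x k ≠ y k).Nonempty
  then (((Finset.univ.filter fun k => x k ≠ y k).max' h : Fin d) : ℕ) + 1 else 0

lemma rho_symm (x y : XX d) : rho x y = rho y x := by
  have : (Finset.univ.filter fun k => x k ≠ y k)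
      = (Finset.univ.filter fun k => y k ≠ x k) := by
    apply Finset.filter_congr; intro k _; simp [ne_comm]
  simp only [rho, this]

lemma rho_eq_zero_iff {x y : XX d} : rho x y = 0 ↔ x = y := by
  unfold rho
  split_ifs with h
  · simp only [Nat.succ_ne_zero, false_iff]
    obtain ⟨k, hk⟩ := h
    simp only [mem_filter, mem_univ, true_and] at hk
    intro hxy; exact hk (by rw [hxy])
  · simp only [Finset.not_nonempty_iff_eq_empty, Finset.filter_eq_empty_iff] at h
    simp only [true_iff]
    funext k
    have := h (Finset.mem_univ k)
    simpa using this
  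
lemma rho_le_d (x y : XX d) : rho x y ≤ d := by
  unfold rho
  split_ifs with h
  · exact Nat.succ_le_of_lt (Fin.is_lt _)
  · omega

lemma rho_le_iff {x y : XX d} {m : ℕ} :
    rho x y ≤ m ↔ ∀ k : Fin d, m ≤ (k : ℕ) → x k = y k := by
  constructor
  · intro h k hk
    by_contra hne
    have hmem : k ∈ Finset.univ.filter fun k => x k ≠ y k := by simp [hne]
    have hne' : (Finset.univ.filter fun k => x k ≠ y k).Nonempty := ⟨k, hmem⟩
    have hle := Finset.le_max' _ k hmem
    unfold rho at h
    rw [dif_pos hne'] at h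
    have : (k : ℕ) ≤ ((Finset.univ.filter fun k => x k ≠ y k).max' hne' : ℕ) := hle
    omega
  · intro h
    unfold rho
    split_ifs with hne
    · have hmem := Finset.max'_mem _ hne
      simp only [mem_filter, mem_univ, true_and] at hmem
      by_contra hcon
      push_neg at hcon
      exact hmem (h _ (by omega))
    · omega

lemma rho_eq_iff {x y : XX d} {i : ℕ} (h1 : 1 ≤ i) (hid : i ≤ d) :
    rho x y = i ↔ (x ⟨i - 1, by omega⟩ ≠ y ⟨i - 1, by omega⟩ ∧
      ∀ k : Fin d, i ≤ (k : ℕ) → x k = y k) := by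
  constructor
  · intro h
    refine ⟨?_, rho_le_iff.mp (le_of_eq h)⟩
    intro heq
    have : rho x y ≤ i - 1 := by
      rw [rho_le_iff]
      intro k hk
      rcases Nat.lt_or_ge (k : ℕ) i with hlt | hge
      · have : (k : ℕ) = i - 1 := by omega
        have : k = ⟨i - 1, by omega⟩ := Fin.ext this
        rw [this]; exact heq
      · exact rho_le_iff.mp (le_of_eq h) k hge
    omega
  · rintro ⟨hne, hag⟩
    have hub : rho x y ≤ i := rho_le_iff.mpr hag
    have hlb : ¬ rho x y ≤ i - 1 := by
      intro hcon
      exact hne (rho_le_iff.mp hcon ⟨i - 1, by omega⟩ (by simp))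
    omega

lemma wRel_iff {x y : XX d} {i : ℕ} (hid : i ≤ d) :
    wRel d (nc d 2) i x y ↔ rho x y = i := by
  unfold wRel
  split_ifs with h
  · rw [rho_eq_iff h.1 h.2]
    constructor
    · rintro ⟨a, b⟩; exact ⟨a, fun k hk => b k (by omega)⟩
    · rintro ⟨a, b⟩; exact ⟨a, fun k hk => b k (by omega)⟩
  · have hi0 : i = 0 := by omega
    subst hi0
    exact rho_eq_zero_iff.symm

end TW
namespace TW
open Finset

variable {d : ℕ}

lemma x0_eq : wBase d (nc d 2) (hn2 d) = x0 d := rfl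

/-- sphere membership characterisation -/
lemma sphere_iff {x : XX d} {i : ℕ} (h1 : 1 ≤ i) (hid : i ≤ d) :
    rho (x0 d) x = i ↔ (x ⟨i - 1, by omega⟩ = 1 ∧
      ∀ k : Fin d, i ≤ (k : ℕ) → x k = 0) := by
  rw [rho_eq_iff h1 hid]
  have hlt : ((x ⟨i - 1, by omega⟩ : Fin (nc d 2 ⟨i - 1, by omega⟩)) : ℕ) < 2 :=
    Fin.is_lt _
  have hv0 : ((x0 d ⟨i - 1, by omega⟩ : Fin (nc d 2 ⟨i - 1, by omega⟩)) : ℕ) = 0 := rfl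
  have hv1 : ((1 : Fin (nc d 2 ⟨i - 1, by omega⟩)) : ℕ) = 1 := rfl
  constructor
  · rintro ⟨a, b⟩
    refine ⟨?_, fun k hk => (b k hk).symm⟩
    have hne : ((x ⟨i - 1, by omega⟩) : ℕ) ≠ 0 := by
      intro hc
      exact a (Fin.val_injective (by rw [hv0, hc]))
    exact Fin.val_injective (by rw [hv1]; omega)
  · rintro ⟨a, b⟩
    refine ⟨?_, fun k hk => (b k hk).symm⟩
    intro hc
    have hv := congrArg Fin.val (hc.trans a)
    rw [hv0, hv1] at hv
    exact absurd hv (by omega)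

/-- canonical point of the `i`-th sphere. -/
def pt (d i : ℕ) : XX d := fun k => if (k : ℕ) = i - 1 ∧ 1 ≤ i then 1 else 0

lemma rho_pt {i : ℕ} (hid : i ≤ d) : rho (x0 d) (pt d i) = i := by
  rcases Nat.eq_zero_or_pos i with h0 | h1
  · subst h0
    rw [rho_eq_zero_iff]
    funext k
    simp [x0_apply, pt]
  · rw [sphere_iff h1 hid]
    constructor
    · show (if ((⟨i - 1, by omega⟩ : Fin d) : ℕ) = i - 1 ∧ 1 ≤ i then (1 : Fin 2) else 0) = 1
      rw [if_pos ⟨rfl, h1⟩]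
    · intro k hk
      simp only [pt, ite_eq_right_iff, and_imp]
      intro h _; omega

/-- the indicator vector of the `i`-th sphere. -/
def uu (i : ℕ) : XX d → ℂ := fun x => if rho (x0 d) x = i then 1 else 0

lemma uu_pt {i i' : ℕ} (hid : i' ≤ d) : uu i (pt d i') = if i = i' then 1 else 0 := by
  unfold uu
  rw [rho_pt hid]
  by_cases h : i = i' <;> simp [h, eq_comm]

def Ee (d i : ℕ) : Matrix (XX d) (XX d) ℂ := wE d (nc d 2) (hn2 d) i

def Aa (d j : ℕ) : Matrix (XX d) (XX d) ℂ := wA d (nc d 2) j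

lemma Ee_apply {i : ℕ} (hid : i ≤ d) (x y : XX d) :
    Ee d i x y = if x = y then uu i x else 0 := by
  have key : wRel d (nc d 2) i (wBase d (nc d 2) (hn2 d)) x ↔ rho (x0 d) x = i := by
    rw [wRel_iff hid, x0_eq]
  show (if x = y ∧ wRel d (nc d 2) i (wBase d (nc d 2) (hn2 d)) x then (1:ℂ) else 0) = _
  rw [if_congr (and_congr_right fun _ => key) rfl rfl, ite_and]
  rfl

lemma Aa_apply {j : ℕ} (hjd : j ≤ d) (x y : XX d) :
    Aa d j x y = if rho x y = j then 1 else 0 := by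
  show (if wRel d (nc d 2) j x y then (1:ℂ) else 0) = _
  rw [if_congr (wRel_iff hjd) rfl rfl]

lemma Aa_zero : Aa d 0 = 1 := by
  ext x y
  rw [Aa_apply (Nat.zero_le d), Matrix.one_apply]
  exact if_congr rho_eq_zero_iff rfl rfl

lemma Ee_mul {i : ℕ} (hid : i ≤ d) (M : Matrix (XX d) (XX d) ℂ) (x y : XX d) :
    (Ee d i * M) x y = uu i x * M x y := by
  rw [Matrix.mul_apply]
  have : ∀ z, Ee d i x z * M z y = if x = z then uu i x * M z y else 0 := by
    intro z
    rw [Ee_apply hid]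
    by_cases h : x = z <;> simp [h]
  simp_rw [this]
  rw [Finset.sum_ite_eq univ x (fun z => uu i x * M z y)]
  simp

lemma mul_Ee {h : ℕ} (hhd : h ≤ d) (M : Matrix (XX d) (XX d) ℂ) (x y : XX d) :
    (M * Ee d h) x y = M x y * uu h y := by
  rw [Matrix.mul_apply]
  have : ∀ z, M x z * Ee d h z y = if z = y then M x z * uu h y else 0 := by
    intro z
    rw [Ee_apply hhd]
    by_cases hz : z = y <;> simp [hz]
  simp_rw [this]
  rw [Finset.sum_ite_eq' univ y (fun z => M x z * uu h y)]
  simp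

lemma EME {i h : ℕ} (hid : i ≤ d) (hhd : h ≤ d) (M : Matrix (XX d) (XX d) ℂ)
    (x y : XX d) : (Ee d i * M * Ee d h) x y = uu i x * M x y * uu h y := by
  rw [mul_Ee hhd, Ee_mul hid]

lemma Ee_idem {i : ℕ} (hid : i ≤ d) : Ee d i * Ee d i = Ee d i := by
  ext x y
  rw [Ee_mul hid, Ee_apply hid]
  by_cases h1 : x = y
  · subst h1
    unfold uu
    by_cases h2 : rho (x0 d) x = i <;> simp [h2]
  · simp [h1]

end TW
namespace TW
open Finset

variable {d : ℕ}

def Jall (d : ℕ) : Matrix (XX d) (XX d) ℂ := Matrix.of fun _ _ => 1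

def Jm (d : ℕ) (i h : ℕ) : Matrix (XX d) (XX d) ℂ := Matrix.of fun x y => uu i x * uu h y

/-- size of the `i`-th sphere -/
def sc (i : ℕ) : ℂ := if i = 0 then 1 else 2 ^ (i - 1)

lemma sc_ne_zero (i : ℕ) : sc i ≠ 0 := by
  unfold sc; split_ifs <;> simp [pow_ne_zero]

def Fm (d : ℕ) (i h : ℕ) : Matrix (XX d) (XX d) ℂ := (sc h)⁻¹ • Jm d i h

def sg (m : ℕ) (x : XX d) : ℂ := if hm : m < d then (-1 : ℂ) ^ ((x ⟨m, hm⟩ : ℕ)) else 1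

/-- `x` and `y` agree at all coordinates `≥ j`. -/
def agr (j : ℕ) (x y : XX d) : Prop := ∀ k : Fin d, j ≤ (k : ℕ) → x k = y k

lemma agr_iff_rho_le {j : ℕ} {x y : XX d} : agr j x y ↔ rho x y ≤ j := by
  rw [rho_le_iff]; rfl

def Pm (d : ℕ) (i j : ℕ) : Matrix (XX d) (XX d) ℂ := Matrix.of fun x y =>
  if rho (x0 d) x = i ∧ rho (x0 d) y = i ∧ agr j x y
  then sg (j - 1) x * sg (j - 1) y * ((2 : ℂ) ^ j)⁻¹ else 0

-- Fin 2 helpers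
lemma fin2_zero_ne_one {k : Fin d} : (0 : Fin (nc d 2 k)) ≠ 1 := by
  intro hc
  have h : (0 : ℕ) = 1 := congrArg Fin.val hc
  exact absurd h (by decide)

lemma fin2_val_lt {k : Fin d} (v : Fin (nc d 2 k)) : (v : ℕ) < 2 := v.is_lt

lemma fin2_eq_zero_or_one {k : Fin d} (v : Fin (nc d 2 k)) : v = 0 ∨ v = 1 := by
  have h := fin2_val_lt v
  rcases Nat.lt_or_ge (v : ℕ) 1 with h1 | h1
  · left; exact Fin.val_injective (by show (v : ℕ) = 0; omega)
  · right; exact Fin.val_injective (by show (v : ℕ) = 1; omega)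

-- workhorse : sum over the cube of a product over coordinates
lemma sum_prod_fin2 (g : (k : Fin d) → Fin (nc d 2 k) → ℂ) :
    ∑ x : XX d, ∏ k, g k (x k) = ∏ k, (g k 0 + g k 1) := by
  have h2 : ∀ k : Fin d, (∑ v ∈ (univ : Finset (Fin (nc d 2 k))), g k v) = g k 0 + g k 1 := by
    intro k
    exact Fin.sum_univ_two (g k)
  calc ∑ x : XX d, ∏ k, g k (x k)
      = ∑ x ∈ Fintype.piFinset (fun k : Fin d => (univ : Finset (Fin (nc d 2 k)))),
          ∏ k, g k (x k) := by rw [Fintype.piFinset_univ]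
    _ = ∏ k : Fin d, ∑ v ∈ (univ : Finset (Fin (nc d 2 k))), g k v :=
        (Finset.prod_univ_sum _ _).symm
    _ = ∏ k : Fin d, (g k 0 + g k 1) := Finset.prod_congr rfl fun k _ => h2 k

lemma prod_ite_two {m : ℕ} (hm : m ≤ d) :
    (∏ k : Fin d, (if (k : ℕ) < m then (2 : ℂ) else 1)) = 2 ^ m := by
  rw [Fin.prod_univ_eq_prod_range (fun i => if i < m then (2 : ℂ) else 1) d,
    ← Finset.prod_filter_mul_prod_filter_not (range d) (fun i => i < m)]
  have h1 : (range d).filter (fun i => i < m) = range m := by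
    ext a; simp only [Finset.mem_filter, Finset.mem_range]; omega
  rw [h1, Finset.prod_congr rfl (fun a ha => if_pos (Finset.mem_range.mp ha)),
      Finset.prod_congr rfl (fun a ha => if_neg (Finset.mem_filter.mp ha).2),
      Finset.prod_const, Finset.prod_const, one_pow, mul_one, Finset.card_range]

lemma sg_apply {m : ℕ} (hm : m < d) (x : XX d) :
    sg m x = (-1 : ℂ) ^ ((x ⟨m, hm⟩ : ℕ)) := dif_pos hm

lemma sg_mul_self (m : ℕ) (x : XX d) : sg m x * sg m x = 1 := by
  unfold sg
  split_ifs with h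
  · rw [← pow_add]
    exact Even.neg_one_pow ⟨_, rfl⟩
  · ring

lemma sg_mul_eq {m : ℕ} (hm : m < d) {x y : XX d} (h : x ⟨m, hm⟩ = y ⟨m, hm⟩) :
    sg m x * sg m y = 1 := by
  rw [sg_apply hm, sg_apply hm, h, ← pow_add]
  exact Even.neg_one_pow ⟨_, rfl⟩

lemma sg_mul_ne {m : ℕ} (hm : m < d) {x y : XX d} (h : x ⟨m, hm⟩ ≠ y ⟨m, hm⟩) :
    sg m x * sg m y = -1 := by
  rw [sg_apply hm, sg_apply hm]
  rcases fin2_eq_zero_or_one (x ⟨m, hm⟩) with hx | hx <;>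
    rcases fin2_eq_zero_or_one (y ⟨m, hm⟩) with hy | hy
  · exact absurd (hx.trans hy.symm) h
  · rw [hx, hy]; norm_num
  · rw [hx, hy]; norm_num
  · exact absurd (hx.trans hy.symm) h

private def guu (d i : ℕ) : (k : Fin d) → Fin (nc d 2 k) → ℂ := fun k v =>
  if (((k : ℕ) = i - 1 → v = 1) ∧ (i ≤ (k : ℕ) → v = 0)) then 1 else 0

private lemma guu_apply {i : ℕ} (k : Fin d) (v : Fin (nc d 2 k)) :
    guu d i k v = if (((k : ℕ) = i - 1 → v = 1) ∧ (i ≤ (k : ℕ) → v = 0)) then 1 else 0 := rfl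

lemma sum_uu {i : ℕ} (hid : i ≤ d) : ∑ x : XX d, uu i x = sc i := by
  rcases Nat.eq_zero_or_pos i with h0 | h1
  · subst h0
    unfold uu sc
    calc ∑ x : XX d, (if rho (x0 d) x = 0 then (1 : ℂ) else 0)
        = ∑ x : XX d, (if x0 d = x then (1 : ℂ) else 0) :=
          Finset.sum_congr rfl fun x _ => if_congr rho_eq_zero_iff rfl rfl
      _ = 1 := by rw [Finset.sum_ite_eq univ (x0 d) (fun _ => (1 : ℂ))]; simp
  · have hform : ∀ x : XX d, uu i x = ∏ k, guu d i k (x k) := by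
      intro x
      unfold uu
      by_cases hx : rho (x0 d) x = i
      · rw [if_pos hx]
        obtain ⟨a, b⟩ := (sphere_iff h1 hid).mp hx
        refine (Finset.prod_eq_one fun k _ => ?_).symm
        rw [guu_apply]
        refine if_pos ⟨fun hk => ?_, b k⟩
        have hkk : k = ⟨i - 1, by omega⟩ := Fin.val_injective hk
        rw [hkk]; exact a
      · rw [if_neg hx]
        rw [sphere_iff h1 hid] at hx
        by_cases ha : x ⟨i - 1, by omega⟩ = 1
        · have hb : ¬ ∀ k : Fin d, i ≤ (k : ℕ) → x k = 0 := fun hb => hx ⟨ha, hb⟩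
          push_neg at hb
          obtain ⟨k0, hk0, hxk0⟩ := hb
          refine (Finset.prod_eq_zero (Finset.mem_univ k0) ?_).symm
          rw [guu_apply]
          exact if_neg fun hc => hxk0 (hc.2 hk0)
        · refine (Finset.prod_eq_zero (Finset.mem_univ ⟨i - 1, by omega⟩) ?_).symm
          rw [guu_apply]
          exact if_neg fun hc => ha (hc.1 rfl)
    have hval : ∀ k : Fin d, guu d i k 0 + guu d i k 1
        = if (k : ℕ) < i - 1 then 2 else 1 := by
      intro k
      rw [guu_apply, guu_apply]
      by_cases hk1 : (k : ℕ) = i - 1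
      · rw [if_neg (fun hc => fin2_zero_ne_one (hc.1 hk1)),
          if_pos ⟨fun _ => rfl, fun hc => absurd hc (by omega)⟩,
          if_neg (show ¬ (k : ℕ) < i - 1 by omega)]
        ring
      · by_cases hk2 : i ≤ (k : ℕ)
        · rw [if_pos ⟨fun hc => absurd hc hk1, fun _ => rfl⟩,
            if_neg (fun hc => fin2_zero_ne_one ((hc.2 hk2).symm)),
            if_neg (show ¬ (k : ℕ) < i - 1 by omega)]
          ring
        · rw [if_pos ⟨fun hc => absurd hc hk1, fun hc => absurd hc hk2⟩,
            if_pos ⟨fun hc => absurd hc hk1, fun hc => absurd hc hk2⟩,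
            if_pos (show (k : ℕ) < i - 1 by omega)]
          ring
    calc ∑ x : XX d, uu i x = ∑ x : XX d, ∏ k, guu d i k (x k) :=
          Finset.sum_congr rfl fun x _ => hform x
      _ = ∏ k, (guu d i k 0 + guu d i k 1) := sum_prod_fin2 _
      _ = ∏ k : Fin d, (if (k : ℕ) < i - 1 then 2 else 1) :=
          Finset.prod_congr rfl fun k _ => hval k
      _ = 2 ^ (i - 1) := prod_ite_two (by omega)
      _ = sc i := by unfold sc; rw [if_neg (by omega)]

end TW
namespace TW
open Finset

variable {d : ℕ}

lemma uu_mul_self (i : ℕ) (x : XX d) : uu i x * uu i x = uu i x := by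
  unfold uu; split_ifs <;> ring

lemma uu_mul_ne {i h : ℕ} (hne : i ≠ h) (x : XX d) : uu i x * uu h x = 0 := by
  unfold uu
  split_ifs with h1 h2
  · exact absurd (h1.symm.trans h2) hne
  all_goals ring

lemma sum_uu_mul_uu {h i' : ℕ} (hh : h ≤ d) :
    ∑ z : XX d, uu h z * uu i' z = if h = i' then sc h else 0 := by
  by_cases he : h = i'
  · subst he
    rw [if_pos rfl, ← sum_uu hh]
    exact Finset.sum_congr rfl fun z _ => uu_mul_self h z
  · rw [if_neg he]
    exact Finset.sum_eq_zero fun z _ => uu_mul_ne he z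

lemma Jm_mul_Jm {i h i' h' : ℕ} (hh : h ≤ d) :
    Jm d i h * Jm d i' h' = (if h = i' then sc h else 0) • Jm d i h' := by
  ext x y
  rw [Matrix.mul_apply, Matrix.smul_apply]
  show ∑ z : XX d, (uu i x * uu h z) * (uu i' z * uu h' y)
      = (if h = i' then sc h else 0) • (uu i x * uu h' y)
  calc ∑ z : XX d, (uu i x * uu h z) * (uu i' z * uu h' y)
      = (uu i x * uu h' y) * ∑ z : XX d, uu h z * uu i' z := by
        rw [Finset.mul_sum]; exact Finset.sum_congr rfl fun z _ => by ring
    _ = _ := by rw [sum_uu_mul_uu hh, smul_eq_mul]; ring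

lemma Fm_mul_Fm {i h i' h' : ℕ} (hh : h ≤ d) :
    Fm d i h * Fm d i' h' = if h = i' then Fm d i h' else 0 := by
  unfold Fm
  rw [Matrix.smul_mul, Matrix.mul_smul, Jm_mul_Jm hh]
  by_cases he : h = i'
  · subst he
    rw [if_pos rfl, if_pos rfl, smul_smul, smul_smul]
    congr 1
    have h1 := sc_ne_zero h
    have h2 := sc_ne_zero h'
    field_simp
  · rw [if_neg he, if_neg he, zero_smul, smul_zero, smul_zero]

/-- two points in spheres `i < h` are in relation `h`. -/
lemma rho_spheres_lt {i h : ℕ} (hlt : i < h) (hhd : h ≤ d) {x y : XX d}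
    (hx : rho (x0 d) x = i) (hy : rho (x0 d) y = h) : rho x y = h := by
  have h1 : 1 ≤ h := by omega
  obtain ⟨ha, hb⟩ := (sphere_iff h1 hhd).mp hy
  have hx' : ∀ k : Fin d, h - 1 ≤ (k : ℕ) → x k = 0 := fun k hk =>
    ((rho_le_iff.mp (by omega : rho (x0 d) x ≤ h - 1) k hk).symm).trans (x0_apply k)
  rw [rho_eq_iff h1 hhd]
  constructor
  · rw [hx' ⟨h - 1, by omega⟩ (Nat.le_refl _), ha]
    exact fin2_zero_ne_one
  · intro k hk
    rw [hx' k (by omega), hb k hk]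

/-- two points of the sphere `i ≥ 1` agree at all coordinates `≥ i - 1`. -/
lemma sphere_agr {i : ℕ} (h1 : 1 ≤ i) (hid : i ≤ d) {x y : XX d}
    (hx : rho (x0 d) x = i) (hy : rho (x0 d) y = i) : agr (i - 1) x y := by
  obtain ⟨hxa, hxb⟩ := (sphere_iff h1 hid).mp hx
  obtain ⟨hya, hyb⟩ := (sphere_iff h1 hid).mp hy
  intro k hk
  by_cases hke : (k : ℕ) = i - 1
  · have hkk : k = ⟨i - 1, by omega⟩ := Fin.val_injective hke
    rw [hkk, hxa, hya]
  · rw [hxb k (by omega), hyb k (by omega)]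

lemma rho_sphere_diag_le {i : ℕ} (hid : i ≤ d) {x y : XX d}
    (hx : rho (x0 d) x = i) (hy : rho (x0 d) y = i) : rho x y ≤ i - 1 := by
  rcases Nat.eq_zero_or_pos i with h0 | h1
  · subst h0
    have : x = y := (rho_eq_zero_iff.mp hx).symm.trans (rho_eq_zero_iff.mp hy)
    rw [this] at *
    rw [rho_eq_zero_iff.mpr rfl]
  · exact agr_iff_rho_le.mp (sphere_agr h1 hid hx hy)

/-- if `y` is in sphere `i ≥ 1` and `x` agrees with `y` above `j ≤ i - 1`,
then `x` is in sphere `i` as well. -/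
lemma sphere_of_agr {i j : ℕ} (h1 : 1 ≤ i) (hid : i ≤ d) (hj : j ≤ i - 1)
    {x y : XX d} (hy : rho (x0 d) y = i) (ha : agr j x y) : rho (x0 d) x = i := by
  obtain ⟨hya, hyb⟩ := (sphere_iff h1 hid).mp hy
  rw [sphere_iff h1 hid]
  constructor
  · rw [ha ⟨i - 1, by omega⟩ hj, hya]
  · intro k hk
    rw [ha k (by omega), hyb k hk]

end TW
namespace TW
open Finset Matrix

variable {d : ℕ}

lemma Pm_apply (i j : ℕ) (x y : XX d) :
    Pm d i j x y = if rho (x0 d) x = i ∧ rho (x0 d) y = i ∧ agr j x y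
      then sg (j - 1) x * sg (j - 1) y * ((2 : ℂ) ^ j)⁻¹ else 0 := rfl

private def gP (d j : ℕ) (y : XX d) : (k : Fin d) → Fin (nc d 2 k) → ℂ := fun k v =>
  if j ≤ (k : ℕ) then (if v = y k then 1 else 0)
  else if (k : ℕ) = j - 1 then (-1 : ℂ) ^ ((v : ℕ)) else 1

private lemma gP_apply {j : ℕ} (y : XX d) (k : Fin d) (v : Fin (nc d 2 k)) :
    gP d j y k v = if j ≤ (k : ℕ) then (if v = y k then 1 else 0)
      else if (k : ℕ) = j - 1 then (-1 : ℂ) ^ ((v : ℕ)) else 1 := rfl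

lemma prod_indicator (p : Fin d → Prop) [DecidablePred p] [Decidable (∀ k, p k)] :
    (∏ k : Fin d, if p k then (1 : ℂ) else 0) = if (∀ k, p k) then 1 else 0 := by
  by_cases h : ∀ k, p k
  · rw [if_pos h]; exact Finset.prod_eq_one fun k _ => if_pos (h k)
  · rw [if_neg h]
    push_neg at h
    obtain ⟨k0, hk0⟩ := h
    exact Finset.prod_eq_zero (Finset.mem_univ k0) (if_neg hk0)

/-- key : indicator of agreement above `j` times the sign at `j-1`, as a product
over coordinates. -/
lemma indicator_sg_prod {j : ℕ} (h1 : 1 ≤ j) (hjd : j ≤ d) (y z : XX d) :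
    (if agr j z y then (1 : ℂ) else 0) * sg (j - 1) z = ∏ k, gP d j y k (z k) := by
  have hj1d : j - 1 < d := by omega
  by_cases hagr : agr j z y
  · rw [if_pos hagr, one_mul, sg_apply hj1d]
    rw [Finset.prod_eq_single ⟨j - 1, hj1d⟩ (fun k _ hk => ?_)
      (fun hc => absurd (Finset.mem_univ _) hc)]
    · rw [gP_apply, if_neg (show ¬ j ≤ j - 1 by omega), if_pos rfl]
    · rw [gP_apply]
      by_cases hk2 : j ≤ (k : ℕ)
      · rw [if_pos hk2, if_pos (hagr k hk2)]
      · rw [if_neg hk2, if_neg (fun hc : (k : ℕ) = j - 1 => hk (Fin.val_injective hc))]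
  · rw [if_neg hagr, zero_mul]
    unfold agr at hagr
    push_neg at hagr
    obtain ⟨k0, hk0, hne⟩ := hagr
    refine (Finset.prod_eq_zero (Finset.mem_univ k0) ?_).symm
    rw [gP_apply, if_pos hk0, if_neg hne]

lemma Pm_symm (i j : ℕ) (x y : XX d) : Pm d i j x y = Pm d i j y x := by
  show (if _ then _ else _) = (if _ then _ else _)
  refine if_congr ?_ (by ring) rfl
  constructor
  · rintro ⟨a, b, c⟩; exact ⟨b, a, fun k hk => (c k hk).symm⟩
  · rintro ⟨a, b, c⟩; exact ⟨b, a, fun k hk => (c k hk).symm⟩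

lemma Pm_transpose (i j : ℕ) : (Pm d i j)ᵀ = Pm d i j := by
  ext x y; exact Pm_symm i j y x

/-- column form of `Pm` when the column index lies in the sphere. -/
lemma Pm_col_form {i j : ℕ} (h1 : 1 ≤ j) (hj : j ≤ i - 1) (hi1 : 1 ≤ i) (hid : i ≤ d)
    {y : XX d} (hy : rho (x0 d) y = i) (z : XX d) :
    Pm d i j z y = (∏ k, gP d j y k (z k)) * (sg (j - 1) y * ((2 : ℂ) ^ j)⁻¹) := by
  have hcond : (rho (x0 d) z = i ∧ rho (x0 d) y = i ∧ agr j z y) ↔ agr j z y := by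
    constructor
    · rintro ⟨_, _, c⟩; exact c
    · intro c; exact ⟨sphere_of_agr hi1 hid hj hy c, hy, c⟩
  show (if _ then _ else _) = _
  rw [if_congr hcond rfl rfl, ← indicator_sg_prod h1 (by omega) y z]
  by_cases hagr : agr j z y
  · rw [if_pos hagr, if_pos hagr]; ring
  · rw [if_neg hagr, if_neg hagr]; ring

/-- columns of `Pm` sum to zero. -/
lemma sum_Pm_col {i j : ℕ} (h1 : 1 ≤ j) (hj : j ≤ i - 1) (hi1 : 1 ≤ i) (hid : i ≤ d)
    (y : XX d) : ∑ z : XX d, Pm d i j z y = 0 := by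
  by_cases hy : rho (x0 d) y = i
  · have hform := Pm_col_form h1 hj hi1 hid hy
    calc ∑ z : XX d, Pm d i j z y
        = (∑ z : XX d, ∏ k, gP d j y k (z k)) * (sg (j - 1) y * ((2 : ℂ) ^ j)⁻¹) := by
          rw [Finset.sum_mul]
          exact Finset.sum_congr rfl fun z _ => hform z
      _ = 0 := by
          rw [sum_prod_fin2]
          have hfac : gP d j y ⟨j - 1, by omega⟩ 0 + gP d j y ⟨j - 1, by omega⟩ 1 = 0 := by
            rw [gP_apply, gP_apply, if_neg (show ¬ j ≤ j - 1 by omega),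
              if_neg (show ¬ j ≤ j - 1 by omega), if_pos rfl, if_pos rfl]
            show (-1 : ℂ) ^ (0 : ℕ) + (-1 : ℂ) ^ (1 : ℕ) = 0
            norm_num
          rw [Finset.prod_eq_zero (Finset.mem_univ ⟨j - 1, by omega⟩) hfac, zero_mul]
  · exact Finset.sum_eq_zero fun z _ => if_neg (fun hc => hy hc.2.1)

lemma uu_mul_Pm (i j : ℕ) (z y : XX d) : uu i z * Pm d i j z y = Pm d i j z y := by
  unfold uu
  by_cases hz : rho (x0 d) z = i
  · rw [if_pos hz, one_mul]
  · have h0 : Pm d i j z y = 0 := by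
      rw [Pm_apply]; exact if_neg fun hc => hz hc.1
    rw [if_neg hz, zero_mul, h0]

lemma uu_mul_Pm_ne {b i : ℕ} (hne : b ≠ i) (j : ℕ) (z y : XX d) :
    uu b z * Pm d i j z y = 0 := by
  by_cases hz : rho (x0 d) z = b
  · have h0 : Pm d i j z y = 0 := by
      rw [Pm_apply]; exact if_neg fun hc => hne (hz.symm.trans hc.1)
    rw [h0, mul_zero]
  · unfold uu; rw [if_neg hz, zero_mul]

lemma Jm_mul_Pm {a b i j : ℕ} (h1 : 1 ≤ j) (hj : j ≤ i - 1) (hi1 : 1 ≤ i) (hid : i ≤ d) :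
    Jm d a b * Pm d i j = 0 := by
  ext x y
  rw [Matrix.mul_apply, Matrix.zero_apply]
  by_cases hbi : b = i
  · subst hbi
    calc ∑ z : XX d, Jm d a b x z * Pm d b j z y
        = uu a x * ∑ z : XX d, Pm d b j z y := by
          rw [Finset.mul_sum]
          refine Finset.sum_congr rfl fun z _ => ?_
          show (uu a x * uu b z) * Pm d b j z y = uu a x * Pm d b j z y
          rw [mul_assoc, uu_mul_Pm]
      _ = 0 := by rw [sum_Pm_col h1 hj hi1 hid, mul_zero]
  · refine Finset.sum_eq_zero fun z _ => ?_
    show (uu a x * uu b z) * Pm d i j z y = 0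
    rw [mul_assoc, uu_mul_Pm_ne hbi, mul_zero]

lemma Jm_transpose (a b : ℕ) : (Jm d a b)ᵀ = Jm d b a := by
  ext x y
  show uu a y * uu b x = uu b x * uu a y
  ring

lemma Pm_mul_Jm {a b i j : ℕ} (h1 : 1 ≤ j) (hj : j ≤ i - 1) (hi1 : 1 ≤ i) (hid : i ≤ d) :
    Pm d i j * Jm d a b = 0 := by
  have h := congrArg Matrix.transpose (Jm_mul_Pm (a := b) (b := a) h1 hj hi1 hid)
  rw [Matrix.transpose_mul, Pm_transpose, Jm_transpose, Matrix.transpose_zero] at h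
  exact h

lemma Pm_mul_Pm_sphere_ne {i i' j j' : ℕ} (hne : i ≠ i') :
    Pm d i j * Pm d i' j' = 0 := by
  ext x y
  rw [Matrix.mul_apply, Matrix.zero_apply]
  refine Finset.sum_eq_zero fun z _ => ?_
  by_cases hz : rho (x0 d) z = i
  · have h0 : Pm d i' j' z y = 0 := by
      rw [Pm_apply]; exact if_neg fun hc => hne (hz.symm.trans hc.1)
    rw [h0, mul_zero]
  · have h0 : Pm d i j x z = 0 := by
      rw [Pm_apply]; exact if_neg fun hc => hz hc.2.1
    rw [h0, zero_mul]

end TW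
namespace TW
open Finset Matrix

variable {d : ℕ}

/-- row form of `Pm` when the row index lies in the sphere. -/
lemma Pm_row_form {i j : ℕ} (h1 : 1 ≤ j) (hj : j ≤ i - 1) (hi1 : 1 ≤ i) (hid : i ≤ d)
    {x : XX d} (hx : rho (x0 d) x = i) (z : XX d) :
    Pm d i j x z = (∏ k, gP d j x k (z k)) * (sg (j - 1) x * ((2 : ℂ) ^ j)⁻¹) := by
  rw [Pm_symm]
  exact Pm_col_form h1 hj hi1 hid hx z

private lemma Pm_mul_Pm_entry {i j j' : ℕ} (h1 : 1 ≤ j) (hj : j ≤ i - 1)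
    (h1' : 1 ≤ j') (hj' : j' ≤ i - 1) (hi1 : 1 ≤ i) (hid : i ≤ d)
    {x y : XX d} (hx : rho (x0 d) x = i) (hy : rho (x0 d) y = i) :
    (Pm d i j * Pm d i j') x y
      = (∏ k : Fin d, (gP d j x k 0 * gP d j' y k 0 + gP d j x k 1 * gP d j' y k 1))
        * (sg (j - 1) x * ((2 : ℂ) ^ j)⁻¹ * (sg (j' - 1) y * ((2 : ℂ) ^ j')⁻¹)) := by
  rw [Matrix.mul_apply]
  calc ∑ z : XX d, Pm d i j x z * Pm d i j' z y
      = ∑ z : XX d, (∏ k : Fin d, gP d j x k (z k) * gP d j' y k (z k))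
          * (sg (j - 1) x * ((2 : ℂ) ^ j)⁻¹ * (sg (j' - 1) y * ((2 : ℂ) ^ j')⁻¹)) := by
        refine Finset.sum_congr rfl fun z _ => ?_
        rw [Pm_row_form h1 hj hi1 hid hx z, Pm_col_form h1' hj' hi1 hid hy z,
          Finset.prod_mul_distrib]
        ring
    _ = _ := by
        rw [← Finset.sum_mul, sum_prod_fin2 (fun k v => gP d j x k v * gP d j' y k v)]

lemma Pm_mul_Pm_lt {i j j' : ℕ} (h1 : 1 ≤ j) (hj : j ≤ i - 1)
    (h1' : 1 ≤ j') (hlt : j' < j) (hi1 : 1 ≤ i) (hid : i ≤ d) :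
    Pm d i j * Pm d i j' = 0 := by
  have hj' : j' ≤ i - 1 := by omega
  ext x y
  rw [Matrix.zero_apply]
  by_cases hx : rho (x0 d) x = i
  · by_cases hy : rho (x0 d) y = i
    · rw [Pm_mul_Pm_entry h1 hj h1' hj' hi1 hid hx hy]
      have hfac : gP d j x ⟨j' - 1, by omega⟩ 0 * gP d j' y ⟨j' - 1, by omega⟩ 0
          + gP d j x ⟨j' - 1, by omega⟩ 1 * gP d j' y ⟨j' - 1, by omega⟩ 1 = 0 := by
        rw [gP_apply, gP_apply, gP_apply, gP_apply,
          if_neg (show ¬ j ≤ j' - 1 by omega), if_neg (show ¬ j ≤ j' - 1 by omega),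
          if_neg (show ¬ (j' - 1 : ℕ) = j - 1 by omega),
          if_neg (show ¬ (j' - 1 : ℕ) = j - 1 by omega),
          if_neg (show ¬ j' ≤ j' - 1 by omega), if_neg (show ¬ j' ≤ j' - 1 by omega),
          if_pos rfl, if_pos rfl]
        show (1 : ℂ) * (-1 : ℂ) ^ (0 : ℕ) + (1 : ℂ) * (-1 : ℂ) ^ (1 : ℕ) = 0
        norm_num
      rw [Finset.prod_eq_zero (Finset.mem_univ ⟨j' - 1, by omega⟩) hfac, zero_mul]
    · rw [Matrix.mul_apply]
      refine Finset.sum_eq_zero fun z _ => ?_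
      show Pm d i j x z * Pm d i j' z y = 0
      have h0 : Pm d i j' z y = 0 := by
        rw [Pm_apply]; exact if_neg fun hc => hy hc.2.1
      rw [h0, mul_zero]
  · rw [Matrix.mul_apply]
    refine Finset.sum_eq_zero fun z _ => ?_
    show Pm d i j x z * Pm d i j' z y = 0
    have h0 : Pm d i j x z = 0 := by
      rw [Pm_apply]; exact if_neg fun hc => hx hc.1
    rw [h0, zero_mul]

lemma Pm_mul_Pm_self {i j : ℕ} (h1 : 1 ≤ j) (hj : j ≤ i - 1) (hi1 : 1 ≤ i) (hid : i ≤ d) :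
    Pm d i j * Pm d i j = Pm d i j := by
  ext x y
  by_cases hx : rho (x0 d) x = i
  · by_cases hy : rho (x0 d) y = i
    · rw [Pm_mul_Pm_entry h1 hj h1 hj hi1 hid hx hy]
      have hfac : ∀ k : Fin d, gP d j x k 0 * gP d j y k 0 + gP d j x k 1 * gP d j y k 1
          = (if j ≤ (k : ℕ) → x k = y k then (1 : ℂ) else 0) * (if (k : ℕ) < j then 2 else 1) := by
        intro k
        rw [gP_apply, gP_apply, gP_apply, gP_apply]
        by_cases hk : j ≤ (k : ℕ)
        · have hklt : ¬ (k : ℕ) < j := by omega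
          rw [if_pos hk, if_pos hk, if_pos hk, if_pos hk, if_neg hklt, mul_one,
            if_congr (show (j ≤ (k : ℕ) → x k = y k) ↔ (x k = y k) from
              ⟨fun hc => hc hk, fun hc _ => hc⟩) rfl rfl]
          rcases fin2_eq_zero_or_one (x k) with hxk | hxk <;>
            rcases fin2_eq_zero_or_one (y k) with hyk | hyk <;>
              rw [hxk, hyk] <;>
                simp [fin2_zero_ne_one, Ne.symm fin2_zero_ne_one]
        · rw [if_neg hk, if_neg hk, if_neg hk, if_neg hk,
            if_pos (show (k:ℕ) < j by omega),
            if_pos (show (j ≤ (k:ℕ) → x k = y k) from fun hc => absurd hc hk), one_mul]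
          by_cases hk2 : (k : ℕ) = j - 1
          · rw [if_pos hk2, if_pos hk2]
            show (-1 : ℂ) ^ (0:ℕ) * (-1 : ℂ) ^ (0:ℕ) + (-1 : ℂ) ^ (1:ℕ) * (-1 : ℂ) ^ (1:ℕ) = 2
            norm_num
          · rw [if_neg hk2, if_neg hk2]
            norm_num
      rw [Finset.prod_congr rfl fun k _ => hfac k, Finset.prod_mul_distrib]
      rw [prod_indicator (fun k : Fin d => j ≤ (k : ℕ) → x k = y k),
        prod_ite_two (by omega : j ≤ d)]
      rw [Pm_apply, if_congr (show (rho (x0 d) x = i ∧ rho (x0 d) y = i ∧ agr j x y) ↔ agr j x y from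
        ⟨fun hc => hc.2.2, fun hc => ⟨hx, hy, hc⟩⟩) rfl rfl]
      have h2j : (2 : ℂ) ^ j ≠ 0 := pow_ne_zero _ two_ne_zero
      by_cases hagr : agr j x y
      · rw [if_pos hagr, if_pos (show ∀ k : Fin d, j ≤ (k:ℕ) → x k = y k from hagr)]
        field_simp
      · rw [if_neg hagr, if_neg (show ¬ ∀ k : Fin d, j ≤ (k:ℕ) → x k = y k from hagr)]
        ring
    · rw [Matrix.mul_apply]
      have h0 : Pm d i j x y = 0 := by
        rw [Pm_apply]; exact if_neg fun hc => hy hc.2.1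
      rw [h0]
      refine Finset.sum_eq_zero fun z _ => ?_
      show Pm d i j x z * Pm d i j z y = 0
      have h0' : Pm d i j z y = 0 := by
        rw [Pm_apply]; exact if_neg fun hc => hy hc.2.1
      rw [h0', mul_zero]
  · rw [Matrix.mul_apply]
    have h0 : Pm d i j x y = 0 := by
      rw [Pm_apply]; exact if_neg fun hc => hx hc.1
    rw [h0]
    refine Finset.sum_eq_zero fun z _ => ?_
    show Pm d i j x z * Pm d i j z y = 0
    have h0' : Pm d i j x z = 0 := by
      rw [Pm_apply]; exact if_neg fun hc => hx hc.1
    rw [h0', zero_mul]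

/-- full multiplication rule for the `Pm`. -/
lemma Pm_mul_Pm {i j i' j' : ℕ} (h1 : 1 ≤ j) (hj : j ≤ i - 1) (hi1 : 1 ≤ i) (hid : i ≤ d)
    (h1' : 1 ≤ j') (hj' : j' ≤ i' - 1) (hi1' : 1 ≤ i') (hid' : i' ≤ d) :
    Pm d i j * Pm d i' j' = if i = i' ∧ j = j' then Pm d i j else 0 := by
  by_cases hii : i = i'
  · subst hii
    by_cases hjj : j = j'
    · subst hjj
      rw [if_pos ⟨rfl, rfl⟩]
      exact Pm_mul_Pm_self h1 hj hi1 hid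
    · rw [if_neg (fun hc => hjj hc.2)]
      rcases Nat.lt_or_ge j' j with hlt | hge
      · exact Pm_mul_Pm_lt h1 hj h1' hlt hi1 hid
      · have hlt : j < j' := by omega
        have h := congrArg Matrix.transpose (Pm_mul_Pm_lt h1' hj' h1 hlt hi1 hid)
        rw [Matrix.transpose_mul, Pm_transpose, Pm_transpose, Matrix.transpose_zero] at h
        exact h
  · rw [if_neg (fun hc => hii hc.1)]
    exact Pm_mul_Pm_sphere_ne hii

end TW
namespace TW
open Finset Matrix

variable {d : ℕ}

lemma sum_Ee : ∑ i ∈ range (d + 1), Ee d i = 1 := by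
  ext x y
  rw [Matrix.sum_apply, Matrix.one_apply]
  by_cases hxy : x = y
  · subst hxy
    rw [if_pos rfl]
    have hmem : rho (x0 d) x ∈ range (d + 1) := mem_range.mpr (by
      have := rho_le_d (x0 d) x; omega)
    calc ∑ i ∈ range (d + 1), Ee d i x x
        = ∑ i ∈ range (d + 1), (if rho (x0 d) x = i then (1:ℂ) else 0) := by
          refine Finset.sum_congr rfl fun i hi => ?_
          rw [Ee_apply (by simpa using Nat.lt_succ_iff.mp (mem_range.mp hi)), if_pos rfl]
          rfl
      _ = 1 := by rw [Finset.sum_ite_eq (range (d+1)) (rho (x0 d) x) (fun _ => (1:ℂ)),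
            if_pos hmem]
  · rw [if_neg hxy]
    refine Finset.sum_eq_zero fun i hi => ?_
    rw [Ee_apply (by simpa using Nat.lt_succ_iff.mp (mem_range.mp hi)), if_neg hxy]

lemma sum_Aa : ∑ j ∈ range (d + 1), Aa d j = Jall d := by
  ext x y
  rw [Matrix.sum_apply]
  show _ = (1 : ℂ)
  have hmem : rho x y ∈ range (d + 1) := mem_range.mpr (by have := rho_le_d x y; omega)
  calc ∑ j ∈ range (d + 1), Aa d j x y
      = ∑ j ∈ range (d + 1), (if rho x y = j then (1:ℂ) else 0) := by
        refine Finset.sum_congr rfl fun j hj => ?_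
        rw [Aa_apply (by simpa using Nat.lt_succ_iff.mp (mem_range.mp hj))]
    _ = 1 := by rw [Finset.sum_ite_eq (range (d+1)) (rho x y) (fun _ => (1:ℂ)), if_pos hmem]

lemma EJE {i h : ℕ} (hid : i ≤ d) (hhd : h ≤ d) :
    Ee d i * Jall d * Ee d h = Jm d i h := by
  ext x y
  rw [EME hid hhd]
  show uu i x * 1 * uu h y = uu i x * uu h y
  ring

lemma Jm_eq_sum_G {i h : ℕ} (hid : i ≤ d) (hhd : h ≤ d) :
    Jm d i h = ∑ j ∈ range (d + 1), Ee d i * Aa d j * Ee d h := by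
  rw [← EJE hid hhd, ← sum_Aa, Finset.mul_sum, Finset.sum_mul]

lemma rho_spheres_ne {i h : ℕ} (hne : i ≠ h) (hid : i ≤ d) (hhd : h ≤ d) {x y : XX d}
    (hx : rho (x0 d) x = i) (hy : rho (x0 d) y = h) : rho x y = max i h := by
  rcases Nat.lt_or_ge i h with hlt | hge
  · rw [Nat.max_eq_right (le_of_lt hlt)]
    exact rho_spheres_lt hlt hhd hx hy
  · have hlt : h < i := by omega
    rw [Nat.max_eq_left (le_of_lt hlt), rho_symm]
    exact rho_spheres_lt hlt hid hy hx

lemma G_offdiag {i h j : ℕ} (hne : i ≠ h) (hid : i ≤ d) (hhd : h ≤ d) (hjd : j ≤ d) :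
    Ee d i * Aa d j * Ee d h = if j = max i h then Jm d i h else 0 := by
  ext x y
  rw [EME hid hhd, Aa_apply hjd]
  by_cases hx : rho (x0 d) x = i
  · by_cases hy : rho (x0 d) y = h
    · rw [rho_spheres_ne hne hid hhd hx hy]
      have hu1 : uu i x = 1 := if_pos hx
      have hu2 : uu h y = 1 := if_pos hy
      by_cases hj : j = max i h
      · rw [if_pos (hj ▸ rfl : max i h = j), if_pos hj]
        show uu i x * 1 * uu h y = uu i x * uu h y
        ring
      · rw [if_neg (fun hc : max i h = j => hj hc.symm), if_neg hj]
        show uu i x * 0 * uu h y = (0 : Matrix (XX d) (XX d) ℂ) x y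
        rw [Matrix.zero_apply]; ring
    · have hu2 : uu h y = 0 := if_neg hy
      by_cases hj : j = max i h
      · rw [if_pos hj]
        show uu i x * (if rho x y = j then 1 else 0) * uu h y = uu i x * uu h y
        rw [hu2]; ring
      · rw [if_neg hj, Matrix.zero_apply, hu2]
        ring
  · have hu1 : uu i x = 0 := if_neg hx
    by_cases hj : j = max i h
    · rw [if_pos hj]
      show uu i x * (if rho x y = j then 1 else 0) * uu h y = uu i x * uu h y
      rw [hu1]; ring
    · rw [if_neg hj, Matrix.zero_apply, hu1]
      ring

lemma Gdiag_zero {i j : ℕ} (hid : i ≤ d) (h1 : 1 ≤ j) (hij : i ≤ j) (hjd : j ≤ d) :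
    Ee d i * Aa d j * Ee d i = 0 := by
  ext x y
  rw [EME hid hid, Aa_apply hjd, Matrix.zero_apply]
  by_cases hx : rho (x0 d) x = i
  · by_cases hy : rho (x0 d) y = i
    · have hle : rho x y ≤ i - 1 := rho_sphere_diag_le hid hx hy
      rw [if_neg (by omega : ¬ rho x y = j)]
      ring
    · have hu2 : uu i y = 0 := if_neg hy
      rw [hu2]; ring
  · have hu1 : uu i x = 0 := if_neg hx
    rw [hu1]; ring

/-- the defining identity for `Pm` in terms of the triple products. -/
lemma Pm_def {i j : ℕ} (h1 : 1 ≤ j) (hj : j ≤ i - 1) (hi1 : 1 ≤ i) (hid : i ≤ d) :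
    ((2 : ℂ) ^ j) • Pm d i j
      = (∑ l ∈ range j, Ee d i * Aa d l * Ee d i) - Ee d i * Aa d j * Ee d i := by
  have hjd : j ≤ d := by omega
  have h2j : (2 : ℂ) ^ j ≠ 0 := pow_ne_zero _ two_ne_zero
  ext x y
  rw [Matrix.smul_apply, Matrix.sub_apply, Matrix.sum_apply, Pm_apply]
  have hsum : ∑ l ∈ range j, (Ee d i * Aa d l * Ee d i) x y
      = uu i x * uu i y * (if rho x y < j then 1 else 0) := by
    calc ∑ l ∈ range j, (Ee d i * Aa d l * Ee d i) x y
        = ∑ l ∈ range j, uu i x * uu i y * (if rho x y = l then 1 else 0) := by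
          refine Finset.sum_congr rfl fun l hl => ?_
          rw [EME hid hid, Aa_apply (show l ≤ d by have := mem_range.mp hl; omega)]
          ring
      _ = uu i x * uu i y * ∑ l ∈ range j, (if rho x y = l then (1:ℂ) else 0) := by
          rw [Finset.mul_sum]
      _ = _ := by
          rw [Finset.sum_ite_eq (range j) (rho x y) (fun _ => (1:ℂ))]
          by_cases hlt : rho x y < j
          · rw [if_pos (mem_range.mpr hlt), if_pos hlt]
          · rw [if_neg (fun hc => hlt (mem_range.mp hc)), if_neg hlt]
  rw [hsum, EME hid hid, Aa_apply hjd]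
  by_cases hx : rho (x0 d) x = i
  · by_cases hy : rho (x0 d) y = i
    · have hu1 : uu i x = 1 := if_pos hx
      have hu2 : uu i y = 1 := if_pos hy
      rw [hu1, hu2]
      by_cases hagr : agr j x y
      · have hrle : rho x y ≤ j := agr_iff_rho_le.mp hagr
        by_cases hcoord : x ⟨j - 1, by omega⟩ = y ⟨j - 1, by omega⟩
        · have hrlt : rho x y ≤ j - 1 := by
            rw [rho_le_iff]
            intro k hk
            by_cases hke : (k : ℕ) = j - 1
            · have hkk : k = ⟨j - 1, by omega⟩ := Fin.val_injective hke
              rw [hkk]; exact hcoord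
            · exact hagr k (by omega)
          have hsg := sg_mul_eq (show j - 1 < d by omega) hcoord
          rw [if_pos ⟨hx, hy, hagr⟩, if_pos (show rho x y < j by omega),
            if_neg (show ¬ rho x y = j by omega), smul_eq_mul, hsg]
          field_simp
          ring
        · have hreq : rho x y = j := by
            rw [rho_eq_iff h1 hjd]
            exact ⟨hcoord, fun k hk => hagr k hk⟩
          have hsg := sg_mul_ne (show j - 1 < d by omega) hcoord
          rw [if_pos ⟨hx, hy, hagr⟩, if_neg (show ¬ rho x y < j by omega),
            if_pos hreq, smul_eq_mul, hsg]
          field_simp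
          ring
      · have hgt : ¬ rho x y ≤ j := fun hc => hagr (agr_iff_rho_le.mpr hc)
        rw [if_neg (fun hc => hagr hc.2.2), if_neg (show ¬ rho x y < j by omega),
          if_neg (show ¬ rho x y = j by omega), smul_zero]
        ring
    · have hu2 : uu i y = 0 := if_neg hy
      rw [hu2, if_neg (fun hc => hy hc.2.1), smul_zero]
      ring
  · have hu1 : uu i x = 0 := if_neg hx
    rw [hu1, if_neg (fun hc => hx hc.1), smul_zero]
    ring

end TW
namespace TW
open Finset Matrix

variable {d : ℕ}

lemma E_decomp {i : ℕ} (hid : i ≤ d) :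
    Ee d i = Fm d i i + ∑ j ∈ Icc 1 (i - 1), Pm d i j := by
  rcases Nat.eq_zero_or_pos i with h0 | hi1
  · subst h0
    rw [show Icc 1 (0 - 1) = (∅ : Finset ℕ) from rfl, Finset.sum_empty, add_zero]
    ext x y
    rw [Ee_apply (Nat.zero_le d)]
    show _ = (sc 0)⁻¹ • (uu 0 x * uu 0 y)
    rw [show sc 0 = 1 from rfl, inv_one, one_smul]
    by_cases hx : rho (x0 d) x = 0
    · by_cases hy : rho (x0 d) y = 0
      · have hxy : x = y := (rho_eq_zero_iff.mp hx).symm.trans (rho_eq_zero_iff.mp hy)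
        have hu1 : uu 0 x = 1 := if_pos hx
        have hu2 : uu 0 y = 1 := if_pos hy
        rw [if_pos hxy, hu1, hu2, mul_one]
      · have hxy : ¬ x = y := fun hc => hy (hc ▸ hx)
        have hu2 : uu 0 y = 0 := if_neg hy
        rw [if_neg hxy, hu2, mul_zero]
    · have hu1 : uu 0 x = 0 := if_neg hx
      by_cases hxy : x = y
      · rw [if_pos hxy, ← hxy, hu1, zero_mul]
      · rw [if_neg hxy, hu1, zero_mul]
  · -- main case `1 ≤ i`
    set G : ℕ → Matrix (XX d) (XX d) ℂ := fun l => Ee d i * Aa d l * Ee d i with hG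
    set f : ℕ → Matrix (XX d) (XX d) ℂ :=
      fun m => ((2 : ℂ) ^ m)⁻¹ • ∑ l ∈ range (m + 1), G l with hf
    have hstep : ∀ j ∈ Icc 1 (i - 1), Pm d i j = f (j - 1) - f j := by
      intro j hj
      obtain ⟨hj1, hj2⟩ := Finset.mem_Icc.mp hj
      have h2j : (2 : ℂ) ^ j ≠ 0 := pow_ne_zero _ two_ne_zero
      have hPm : Pm d i j = ((2 : ℂ) ^ j)⁻¹ • ((∑ l ∈ range j, G l) - G j) := by
        rw [hG, ← Pm_def hj1 hj2 hi1 hid, smul_smul, inv_mul_cancel₀ h2j, one_smul]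
      have hC1 : ∑ l ∈ range (j - 1 + 1), G l = ∑ l ∈ range j, G l := by
        have he : j - 1 + 1 = j := by omega
        rw [he]
      have hC2 : ∑ l ∈ range (j + 1), G l = (∑ l ∈ range j, G l) + G j :=
        Finset.sum_range_succ G j
      rw [hPm, hf]
      show _ = ((2 : ℂ) ^ (j-1))⁻¹ • ∑ l ∈ range (j - 1 + 1), G l
        - ((2 : ℂ) ^ j)⁻¹ • ∑ l ∈ range (j + 1), G l
      rw [hC1, hC2]
      have h2inv : ((2 : ℂ) ^ (j - 1))⁻¹ = 2 * ((2 : ℂ) ^ j)⁻¹ := by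
        have h2 : (2 : ℂ) ^ j = 2 * 2 ^ (j - 1) := by
          rw [← pow_succ']
          congr 1
          omega
        rw [h2, mul_inv, ← mul_assoc, mul_inv_cancel₀ (two_ne_zero), one_mul]
      rw [h2inv]
      module
    have htel : ∑ j ∈ Icc 1 (i - 1), Pm d i j = f 0 - f (i - 1) := by
      rw [Finset.sum_congr rfl hstep,
        show Icc 1 (i - 1) = Ico 1 i by ext a; simp only [mem_Icc, mem_Ico]; omega,
        Finset.sum_Ico_eq_sum_range]
      have he : ∀ l : ℕ, f (1 + l - 1) - f (1 + l) = f l - f (l + 1) := by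
        intro l
        have e1 : 1 + l - 1 = l := by omega
        have e2 : 1 + l = l + 1 := by omega
        rw [e1, e2]
      rw [Finset.sum_congr rfl fun l _ => he l, Finset.sum_range_sub' f (i - 1)]
    have hf0 : f 0 = Ee d i := by
      rw [hf]
      show ((2 : ℂ) ^ 0)⁻¹ • ∑ l ∈ range 1, G l = Ee d i
      rw [pow_zero, inv_one, one_smul, Finset.sum_range_one, hG]
      show Ee d i * Aa d 0 * Ee d i = Ee d i
      rw [Aa_zero, mul_one, Ee_idem hid]
    have hfi : f (i - 1) = Fm d i i := by
      rw [hf]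
      show ((2 : ℂ) ^ (i - 1))⁻¹ • ∑ l ∈ range (i - 1 + 1), G l = Fm d i i
      have hrange : ∑ l ∈ range (i - 1 + 1), G l = ∑ l ∈ range (d + 1), G l := by
        refine Finset.sum_subset ?_ ?_
        · intro a ha
          rw [mem_range] at *
          omega
        · intro l hl hnl
          rw [mem_range] at hl hnl
          exact Gdiag_zero hid (by omega) (by omega) (by omega)
      rw [hrange, hG, ← Jm_eq_sum_G hid hid]
      unfold Fm sc
      rw [if_neg (by omega : ¬ i = 0)]
    rw [htel, hf0, hfi]
    abel
end TW
namespace TW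
open Finset Matrix

variable {d : ℕ}

lemma fle (a : Fin (d + 1)) : (a : ℕ) ≤ d := Nat.lt_succ_iff.mp a.is_lt

/-- index set for the one-dimensional blocks: pairs `(i,j)` with `1 ≤ j < i ≤ d`. -/
abbrev sig (d : ℕ) : Type :=
  {q : Fin (d + 1) × Fin (d + 1) // 1 ≤ ((q.2 : ℕ)) ∧ (q.2 : ℕ) < (q.1 : ℕ)}

def Pq (q : sig d) : Matrix (XX d) (XX d) ℂ := Pm d ((q.1.1 : ℕ)) ((q.1.2 : ℕ))

lemma Pq_bounds (q : sig d) : 1 ≤ (q.1.2 : ℕ) ∧ (q.1.2 : ℕ) ≤ (q.1.1 : ℕ) - 1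
    ∧ 1 ≤ (q.1.1 : ℕ) ∧ (q.1.1 : ℕ) ≤ d := by
  obtain ⟨h1, h2⟩ := q.2
  exact ⟨h1, by omega, by omega, fle q.1.1⟩

lemma Fm_mul_Pq (a b : ℕ) (hb : b ≤ d) (q : sig d) : Fm d a b * Pq q = 0 := by
  obtain ⟨h1, h2, h3, h4⟩ := Pq_bounds q
  unfold Fm Pq
  rw [Matrix.smul_mul, Jm_mul_Pm h1 h2 h3 h4, smul_zero]

lemma Pq_mul_Fm (a b : ℕ) (q : sig d) : Pq q * Fm d a b = 0 := by
  obtain ⟨h1, h2, h3, h4⟩ := Pq_bounds q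
  unfold Fm Pq
  rw [Matrix.mul_smul, Pm_mul_Jm h1 h2 h3 h4, smul_zero]

lemma Pq_mul_Pq (q q' : sig d) : Pq q * Pq q' = if q = q' then Pq q else 0 := by
  obtain ⟨h1, h2, h3, h4⟩ := Pq_bounds q
  obtain ⟨h1', h2', h3', h4'⟩ := Pq_bounds q'
  unfold Pq
  rw [Pm_mul_Pm h1 h2 h3 h4 h1' h2' h3' h4']
  refine if_congr ?_ rfl rfl
  constructor
  · rintro ⟨ha, hb⟩
    exact Subtype.ext (Prod.ext (Fin.val_injective ha) (Fin.val_injective hb))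
  · intro hqq
    rw [hqq]
    exact ⟨rfl, rfl⟩

/-- the model algebra. -/
abbrev MA (d : ℕ) : Type := Matrix (Fin (d + 1)) (Fin (d + 1)) ℂ × (sig d → ℂ)

def psi (d : ℕ) (p : MA d) : Matrix (XX d) (XX d) ℂ :=
  (∑ t : Fin (d + 1) × Fin (d + 1), p.1 t.1 t.2 • Fm d (t.1 : ℕ) (t.2 : ℕ))
    + ∑ q : sig d, p.2 q • Pq q

lemma psi_add (p p' : MA d) : psi d (p + p') = psi d p + psi d p' := by
  unfold psi
  simp only [Prod.fst_add, Prod.snd_add, Matrix.add_apply, Pi.add_apply, add_smul,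
    Finset.sum_add_distrib]
  abel

lemma psi_smul (r : ℂ) (p : MA d) : psi d (r • p) = r • psi d p := by
  unfold psi
  simp only [Prod.smul_fst, Prod.smul_snd, Matrix.smul_apply, Pi.smul_apply,
    smul_eq_mul, ← smul_smul, ← Finset.smul_sum, smul_add]

lemma psi_one : psi d 1 = 1 := by
  unfold psi
  have h1 : ∀ t : Fin (d + 1) × Fin (d + 1),
      (1 : MA d).1 t.1 t.2 • Fm d (t.1 : ℕ) (t.2 : ℕ)
        = if t.1 = t.2 then Fm d (t.1 : ℕ) (t.2 : ℕ) else 0 := by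
    intro t
    rw [Prod.fst_one, Matrix.one_apply]
    split_ifs <;> simp
  rw [Finset.sum_congr rfl fun t _ => h1 t, Fintype.sum_prod_type]
  have h2 : ∀ i : Fin (d + 1),
      (∑ h : Fin (d + 1), if i = h then Fm d (i : ℕ) (h : ℕ) else 0) = Fm d (i : ℕ) (i : ℕ) := by
    intro i
    rw [Finset.sum_ite_eq univ i (fun h => Fm d (i : ℕ) (h : ℕ)), if_pos (mem_univ _)]
  rw [Finset.sum_congr rfl fun i _ => h2 i]
  have h3 : ∀ q : sig d, (1 : MA d).2 q • Pq q = Pq q := by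
    intro q
    rw [Prod.snd_one, Pi.one_apply, one_smul]
  rw [Finset.sum_congr rfl fun q _ => h3 q]
  -- now reduce to the decomposition of the identity
  have h4 : ∑ q : sig d, Pq q
      = ∑ i ∈ range (d + 1), ∑ j ∈ Icc 1 (i - 1), Pm d i j := by
    have h40 : ∀ q : sig d, Pq q = Pm d ((q.1.1 : ℕ)) ((q.1.2 : ℕ)) := fun _ => rfl
    rw [Finset.sum_congr rfl fun q _ => h40 q, ← Finset.sum_subtype
      (p := fun t : Fin (d + 1) × Fin (d + 1) => 1 ≤ (t.2 : ℕ) ∧ (t.2 : ℕ) < (t.1 : ℕ))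
      (univ.filter fun t : Fin (d + 1) × Fin (d + 1) => 1 ≤ (t.2 : ℕ) ∧ (t.2 : ℕ) < (t.1 : ℕ))
      (by intro t; simp) (fun t => Pm d (t.1 : ℕ) (t.2 : ℕ)), Finset.sum_filter,
      Fintype.sum_prod_type]
    have h5 : ∀ i : Fin (d + 1),
        (∑ h : Fin (d + 1), if 1 ≤ (h : ℕ) ∧ (h : ℕ) < (i : ℕ) then Pm d (i : ℕ) (h : ℕ) else 0)
          = ∑ j ∈ Icc 1 ((i : ℕ) - 1), Pm d (i : ℕ) j := by
      intro i
      rw [Fin.sum_univ_eq_sum_range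
        (fun h => if 1 ≤ h ∧ h < (i : ℕ) then Pm d (i : ℕ) h else 0) (d + 1),
        ← Finset.sum_filter]
      congr 1
      have hi := Nat.lt_succ_iff.mp i.is_lt
      ext a
      simp only [Finset.mem_filter, Finset.mem_range, Finset.mem_Icc]
      omega
    rw [Finset.sum_congr rfl fun i _ => h5 i,
      Fin.sum_univ_eq_sum_range (fun n => ∑ j ∈ Icc 1 (n - 1), Pm d n j) (d + 1)]
  rw [h4, Fin.sum_univ_eq_sum_range (fun n => Fm d n n) (d + 1), ← Finset.sum_add_distrib,
    ← sum_Ee]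
  refine Finset.sum_congr rfl fun i hi => ?_
  rw [E_decomp (by have := mem_range.mp hi; omega)]

lemma psi_mul (p p' : MA d) : psi d (p * p') = psi d p * psi d p' := by
  unfold psi
  rw [add_mul, mul_add, mul_add]
  have hAB : (∑ t : Fin (d + 1) × Fin (d + 1), p.1 t.1 t.2 • Fm d (t.1 : ℕ) (t.2 : ℕ))
      * (∑ q : sig d, p'.2 q • Pq q) = 0 := by
    rw [Finset.sum_mul_sum]
    refine Finset.sum_eq_zero fun t _ => Finset.sum_eq_zero fun q _ => ?_
    rw [smul_mul_smul_comm, Fm_mul_Pq _ _ (fle t.2) q, smul_zero]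
  have hBA : (∑ q : sig d, p.2 q • Pq q)
      * (∑ t : Fin (d + 1) × Fin (d + 1), p'.1 t.1 t.2 • Fm d (t.1 : ℕ) (t.2 : ℕ)) = 0 := by
    rw [Finset.sum_mul_sum]
    refine Finset.sum_eq_zero fun q _ => Finset.sum_eq_zero fun t _ => ?_
    rw [smul_mul_smul_comm, Pq_mul_Fm _ _ q, smul_zero]
  have hBB : (∑ q : sig d, p.2 q • Pq q) * (∑ q : sig d, p'.2 q • Pq q)
      = ∑ q : sig d, (p * p').2 q • Pq q := by
    rw [Finset.sum_mul_sum]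
    have key : ∀ q q' : sig d, (p.2 q • Pq q) * (p'.2 q' • Pq q')
        = if q = q' then (p.2 q * p'.2 q') • Pq q else 0 := by
      intro q q'
      rw [smul_mul_smul_comm, Pq_mul_Pq q q']
      split_ifs <;> simp
    rw [Finset.sum_congr rfl fun q _ => Finset.sum_congr rfl fun q' _ => key q q']
    refine Finset.sum_congr rfl fun q _ => ?_
    rw [Finset.sum_ite_eq univ q (fun q' => (p.2 q * p'.2 q') • Pq q), if_pos (mem_univ _)]
    rfl
  have hAA : (∑ t : Fin (d + 1) × Fin (d + 1), p.1 t.1 t.2 • Fm d (t.1 : ℕ) (t.2 : ℕ))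
      * (∑ t : Fin (d + 1) × Fin (d + 1), p'.1 t.1 t.2 • Fm d (t.1 : ℕ) (t.2 : ℕ))
      = ∑ t : Fin (d + 1) × Fin (d + 1), (p * p').1 t.1 t.2 • Fm d (t.1 : ℕ) (t.2 : ℕ) := by
    rw [Finset.sum_mul_sum]
    have key : ∀ t t' : Fin (d + 1) × Fin (d + 1),
        (p.1 t.1 t.2 • Fm d (t.1 : ℕ) (t.2 : ℕ)) * (p'.1 t'.1 t'.2 • Fm d (t'.1 : ℕ) (t'.2 : ℕ))
          = if t.2 = t'.1 then (p.1 t.1 t.2 * p'.1 t'.1 t'.2) • Fm d (t.1 : ℕ) (t'.2 : ℕ)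
            else 0 := by
      intro t t'
      rw [smul_mul_smul_comm, Fm_mul_Fm (fle t.2)]
      by_cases hc : (t.2 : ℕ) = (t'.1 : ℕ)
      · rw [if_pos hc, if_pos (Fin.val_injective hc)]
      · rw [if_neg hc, if_neg (fun hh : t.2 = t'.1 => hc (by rw [hh])), smul_zero]
    calc ∑ t : Fin (d + 1) × Fin (d + 1), ∑ t' : Fin (d + 1) × Fin (d + 1),
            (p.1 t.1 t.2 • Fm d (t.1 : ℕ) (t.2 : ℕ)) * (p'.1 t'.1 t'.2 • Fm d (t'.1 : ℕ) (t'.2 : ℕ))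
        = ∑ t : Fin (d + 1) × Fin (d + 1), ∑ i' : Fin (d + 1), ∑ h' : Fin (d + 1),
            (if t.2 = i' then (p.1 t.1 t.2 * p'.1 i' h') • Fm d (t.1 : ℕ) (h' : ℕ) else 0) := by
          refine Finset.sum_congr rfl fun t _ => ?_
          rw [Finset.sum_congr rfl fun t' (_ : t' ∈ univ) => key t t', Fintype.sum_prod_type]
      _ = ∑ t : Fin (d + 1) × Fin (d + 1), ∑ h' : Fin (d + 1), ∑ i' : Fin (d + 1),
            (if t.2 = i' then (p.1 t.1 t.2 * p'.1 i' h') • Fm d (t.1 : ℕ) (h' : ℕ) else 0) :=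
          Finset.sum_congr rfl fun t _ => Finset.sum_comm
      _ = ∑ t : Fin (d + 1) × Fin (d + 1), ∑ h' : Fin (d + 1),
            (p.1 t.1 t.2 * p'.1 t.2 h') • Fm d (t.1 : ℕ) (h' : ℕ) := by
          refine Finset.sum_congr rfl fun t _ => Finset.sum_congr rfl fun h' _ => ?_
          rw [Finset.sum_ite_eq univ t.2
            (fun i' => (p.1 t.1 t.2 * p'.1 i' h') • Fm d (t.1 : ℕ) (h' : ℕ)), if_pos (mem_univ _)]
      _ = ∑ i : Fin (d + 1), ∑ h : Fin (d + 1), ∑ h' : Fin (d + 1),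
            (p.1 i h * p'.1 h h') • Fm d (i : ℕ) (h' : ℕ) := by
          rw [Fintype.sum_prod_type]
      _ = ∑ i : Fin (d + 1), ∑ h' : Fin (d + 1), ∑ h : Fin (d + 1),
            (p.1 i h * p'.1 h h') • Fm d (i : ℕ) (h' : ℕ) :=
          Finset.sum_congr rfl fun i _ => Finset.sum_comm
      _ = ∑ i : Fin (d + 1), ∑ h' : Fin (d + 1),
            ((p.1 * p'.1) i h') • Fm d (i : ℕ) (h' : ℕ) := by
          refine Finset.sum_congr rfl fun i _ => Finset.sum_congr rfl fun h' _ => ?_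
          rw [← Finset.sum_smul, Matrix.mul_apply]
      _ = ∑ t : Fin (d + 1) × Fin (d + 1), (p * p').1 t.1 t.2 • Fm d (t.1 : ℕ) (t.2 : ℕ) := by
          rw [Fintype.sum_prod_type]
          rfl
  rw [hAA, hAB, hBA, hBB]
  abel

def Psi (d : ℕ) : MA d →ₐ[ℂ] Matrix (XX d) (XX d) ℂ where
  toFun := psi d
  map_one' := psi_one
  map_mul' := psi_mul
  map_zero' := by
    have := psi_smul (d := d) 0 0
    simpa using this
  map_add' := psi_add
  commutes' := by
    intro r
    show psi d (algebraMap ℂ (MA d) r) = algebraMap ℂ _ r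
    rw [Algebra.algebraMap_eq_smul_one, Algebra.algebraMap_eq_smul_one, psi_smul, psi_one]

lemma Psi_apply (p : MA d) : Psi d p = psi d p := rfl

end TW
namespace TW
open Finset Matrix

variable {d : ℕ}

def TT (d : ℕ) : Subalgebra ℂ (Matrix (XX d) (XX d) ℂ) := wT d (nc d 2) (hn2 d)

lemma Aa_mem {j : ℕ} (hj : j ≤ d) : Aa d j ∈ TT d :=
  Algebra.subset_adjoin (Set.mem_union_left _ ⟨j, hj, rfl⟩)

lemma Ee_mem {i : ℕ} (hi : i ≤ d) : Ee d i ∈ TT d :=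
  Algebra.subset_adjoin (Set.mem_union_right _ ⟨i, hi, rfl⟩)

lemma G_mem {i j h : ℕ} (hi : i ≤ d) (hj : j ≤ d) (hh : h ≤ d) :
    Ee d i * Aa d j * Ee d h ∈ TT d :=
  mul_mem (mul_mem (Ee_mem hi) (Aa_mem hj)) (Ee_mem hh)

lemma Jm_mem {i h : ℕ} (hi : i ≤ d) (hh : h ≤ d) : Jm d i h ∈ TT d := by
  rw [Jm_eq_sum_G hi hh]
  exact Subalgebra.sum_mem _ fun j hj =>
    G_mem hi (by have := mem_range.mp hj; omega) hh

lemma Fm_mem {i h : ℕ} (hi : i ≤ d) (hh : h ≤ d) : Fm d i h ∈ TT d :=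
  Submodule.smul_mem (Subalgebra.toSubmodule (TT d)) _ (Jm_mem hi hh)

lemma Pm_mem {i j : ℕ} (h1 : 1 ≤ j) (hj : j ≤ i - 1) (hi1 : 1 ≤ i) (hid : i ≤ d) :
    Pm d i j ∈ TT d := by
  have h2j : (2 : ℂ) ^ j ≠ 0 := pow_ne_zero _ two_ne_zero
  have hPm : Pm d i j = ((2 : ℂ) ^ j)⁻¹
      • ((∑ l ∈ range j, Ee d i * Aa d l * Ee d i) - Ee d i * Aa d j * Ee d i) := by
    rw [← Pm_def h1 hj hi1 hid, smul_smul, inv_mul_cancel₀ h2j, one_smul]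
  rw [hPm]
  refine Submodule.smul_mem (Subalgebra.toSubmodule (TT d)) _ (sub_mem ?_ ?_)
  · exact Subalgebra.sum_mem _ fun l hl =>
      G_mem hid (by have := mem_range.mp hl; omega) hid
  · exact G_mem hid (by omega) hid

lemma range_le : (Psi d).range ≤ TT d := by
  rintro x ⟨p, rfl⟩
  show psi d p ∈ TT d
  refine add_mem (Subalgebra.sum_mem _ fun t _ => ?_) (Subalgebra.sum_mem _ fun q _ => ?_)
  · exact Submodule.smul_mem (Subalgebra.toSubmodule (TT d)) _ (Fm_mem (fle t.1) (fle t.2))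
  · obtain ⟨h1, h2, h3, h4⟩ := Pq_bounds q
    exact Submodule.smul_mem (Subalgebra.toSubmodule (TT d)) _ (Pm_mem h1 h2 h3 h4)

lemma Fm_mem_range (i h : Fin (d + 1)) : Fm d (i : ℕ) (h : ℕ) ∈ (Psi d).range := by
  refine ⟨(Matrix.of fun a b => if (i, h) = (a, b) then (1 : ℂ) else 0, 0), ?_⟩
  show psi d _ = _
  unfold psi
  have h2 : (∑ q : sig d, (0 : sig d → ℂ) q • Pq q) = 0 := by
    refine Finset.sum_eq_zero fun q _ => ?_
    rw [Pi.zero_apply, zero_smul]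
  rw [h2, add_zero]
  have h1 : ∀ t : Fin (d + 1) × Fin (d + 1),
      (Matrix.of fun a b => if (i, h) = (a, b) then (1 : ℂ) else 0) t.1 t.2
          • Fm d (t.1 : ℕ) (t.2 : ℕ)
        = if (i, h) = t then Fm d (t.1 : ℕ) (t.2 : ℕ) else 0 := by
    intro t
    show (if (i, h) = (t.1, t.2) then (1 : ℂ) else 0) • Fm d (t.1 : ℕ) (t.2 : ℕ) = _
    rw [show ((t.1, t.2) : Fin (d+1) × Fin (d+1)) = t from rfl]
    split_ifs <;> simp
  rw [Finset.sum_congr rfl fun t _ => h1 t,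
    Finset.sum_ite_eq univ (i, h) (fun t => Fm d (t.1 : ℕ) (t.2 : ℕ)), if_pos (mem_univ _)]

lemma Pq_mem_range (q : sig d) : Pq q ∈ (Psi d).range := by
  refine ⟨(0, Pi.single q 1), ?_⟩
  show psi d _ = _
  unfold psi
  have h1 : (∑ t : Fin (d + 1) × Fin (d + 1),
      (0 : Matrix (Fin (d+1)) (Fin (d+1)) ℂ) t.1 t.2 • Fm d (t.1 : ℕ) (t.2 : ℕ)) = 0 := by
    refine Finset.sum_eq_zero fun t _ => ?_
    rw [Matrix.zero_apply, zero_smul]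
  rw [h1, zero_add]
  have h2 : ∀ q' : sig d, (Pi.single q 1 : sig d → ℂ) q' • Pq q' = if q' = q then Pq q' else 0 := by
    intro q'
    rw [Pi.single_apply]
    split_ifs <;> simp
  rw [Finset.sum_congr rfl fun q' _ => h2 q',
    Finset.sum_ite_eq' univ q (fun q' => Pq q'), if_pos (mem_univ _)]

lemma Ee_mem_range {i : ℕ} (hi : i ≤ d) : Ee d i ∈ (Psi d).range := by
  rw [E_decomp hi]
  refine add_mem ?_ (Subalgebra.sum_mem _ fun j hj => ?_)
  · exact Fm_mem_range ⟨i, by omega⟩ ⟨i, by omega⟩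
  · obtain ⟨hj1, hj2⟩ := Finset.mem_Icc.mp hj
    exact Pq_mem_range ⟨(⟨i, by omega⟩, ⟨j, by omega⟩), ⟨hj1, show j < i by omega⟩⟩

lemma Jm_mem_range (i h : Fin (d + 1)) : Jm d (i : ℕ) (h : ℕ) ∈ (Psi d).range := by
  have hJ : Jm d (i : ℕ) (h : ℕ) = sc (h : ℕ) • Fm d (i : ℕ) (h : ℕ) := by
    unfold Fm
    rw [smul_smul, mul_inv_cancel₀ (sc_ne_zero _), one_smul]
  rw [hJ]
  exact Submodule.smul_mem (Subalgebra.toSubmodule (Psi d).range) _ (Fm_mem_range i h)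

lemma Gdiag_mem_range {i : ℕ} (hi : i ≤ d) (j : ℕ) :
    Ee d i * Aa d j * Ee d i ∈ (Psi d).range := by
  induction j using Nat.strong_induction_on with
  | _ j IH =>
    rcases Nat.eq_zero_or_pos j with h0 | hj1
    · subst h0
      rw [Aa_zero, mul_one, Ee_idem hi]
      exact Ee_mem_range hi
    · rcases Nat.lt_or_ge j i with hji | hji
      · -- 1 ≤ j ≤ i - 1
        have hstep : Ee d i * Aa d j * Ee d i
            = (∑ l ∈ range j, Ee d i * Aa d l * Ee d i) - (2 : ℂ) ^ j • Pm d i j := by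
          rw [Pm_def hj1 (by omega) (by omega) hi]
          abel
        rw [hstep]
        refine sub_mem (Subalgebra.sum_mem _ fun l hl => IH l (mem_range.mp hl)) ?_
        exact Submodule.smul_mem (Subalgebra.toSubmodule (Psi d).range) _
          (Pq_mem_range ⟨(⟨i, by omega⟩, ⟨j, by omega⟩), ⟨hj1, show j < i by omega⟩⟩)
      · rcases Nat.lt_or_ge d j with hjd | hjd
        · -- j > d : the relation is empty, so `A j` is the identity by convention
          have hA : Aa d j = 1 := by
            ext x y
            have hw : wRel d (nc d 2) j x y ↔ x = y := by
              unfold wRel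
              rw [dif_neg (by omega : ¬(1 ≤ j ∧ j ≤ d))]
            show (if wRel d (nc d 2) j x y then (1:ℂ) else 0) = _
            rw [Matrix.one_apply]
            exact if_congr hw rfl rfl
          rw [hA, mul_one, Ee_idem hi]
          exact Ee_mem_range hi
        · rw [Gdiag_zero hi hj1 hji hjd]
          exact zero_mem _

end TW
namespace TW
open Finset Matrix

variable {d : ℕ}

lemma Aa_mem_range {j : ℕ} (hj : j ≤ d) : Aa d j ∈ (Psi d).range := by
  have hA : Aa d j = ∑ i ∈ range (d + 1), ∑ h ∈ range (d + 1), Ee d i * Aa d j * Ee d h := by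
    calc Aa d j
        = (∑ i ∈ range (d + 1), Ee d i) * (Aa d j * (∑ h ∈ range (d + 1), Ee d h)) := by
          rw [sum_Ee, one_mul, mul_one]
      _ = ∑ i ∈ range (d + 1), Ee d i * (Aa d j * (∑ h ∈ range (d + 1), Ee d h)) :=
          Finset.sum_mul _ _ _
      _ = ∑ i ∈ range (d + 1), ∑ h ∈ range (d + 1), Ee d i * Aa d j * Ee d h := by
          refine Finset.sum_congr rfl fun i _ => ?_
          rw [Finset.mul_sum, Finset.mul_sum]
          exact Finset.sum_congr rfl fun h _ => (mul_assoc _ _ _).symm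
  rw [hA]
  refine Subalgebra.sum_mem _ fun i hi => Subalgebra.sum_mem _ fun h hh => ?_
  rw [mem_range] at hi hh
  have hi' : i ≤ d := by omega
  have hh' : h ≤ d := by omega
  by_cases hih : i = h
  · subst hih
    exact Gdiag_mem_range hi' j
  · rw [G_offdiag hih hi' hh' hj]
    split_ifs with hmax
    · exact Jm_mem_range ⟨i, by omega⟩ ⟨h, by omega⟩
    · exact zero_mem _

lemma range_eq : (Psi d).range = TT d := by
  refine le_antisymm range_le ?_
  show wT d (nc d 2) (hn2 d) ≤ (Psi d).range
  unfold wT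
  refine Algebra.adjoin_le ?_
  rintro M (⟨j, hj, rfl⟩ | ⟨i, hi, rfl⟩)
  · exact Aa_mem_range hj
  · exact Ee_mem_range hi

lemma psi_injective : Function.Injective (Psi d) := by
  rw [injective_iff_map_eq_zero]
  intro p hp
  have hp' : psi d p = 0 := hp
  have hC : ∀ i0 h0 : Fin (d + 1), p.1 i0 h0 = 0 := by
    have h1 : ∀ h0 : Fin (d + 1),
        (∑ i : Fin (d + 1), p.1 i h0 • Fm d (i : ℕ) (h0 : ℕ)) = 0 := by
      intro h0
      have e1 : psi d p * Fm d (h0 : ℕ) (h0 : ℕ)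
          = ∑ i : Fin (d + 1), p.1 i h0 • Fm d (i : ℕ) (h0 : ℕ) := by
        unfold psi
        rw [add_mul, Finset.sum_mul, Finset.sum_mul]
        have hz : ∀ q : sig d, (p.2 q • Pq q) * Fm d (h0 : ℕ) (h0 : ℕ) = 0 := fun q => by
          rw [smul_mul_assoc, Pq_mul_Fm, smul_zero]
        rw [Finset.sum_congr rfl fun q _ => hz q, Finset.sum_const_zero, add_zero]
        have hf : ∀ t : Fin (d + 1) × Fin (d + 1),
            (p.1 t.1 t.2 • Fm d (t.1 : ℕ) (t.2 : ℕ)) * Fm d (h0 : ℕ) (h0 : ℕ)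
              = if t.2 = h0 then p.1 t.1 t.2 • Fm d (t.1 : ℕ) (h0 : ℕ) else 0 := by
          intro t
          rw [smul_mul_assoc, Fm_mul_Fm (fle t.2)]
          by_cases hc2 : (t.2 : ℕ) = (h0 : ℕ)
          · rw [if_pos hc2, if_pos (Fin.val_injective hc2)]
          · rw [if_neg hc2, if_neg (fun hh : t.2 = h0 => hc2 (by rw [hh])), smul_zero]
        rw [Finset.sum_congr rfl fun t _ => hf t, Fintype.sum_prod_type]
        refine Finset.sum_congr rfl fun i _ => ?_
        rw [Finset.sum_ite_eq' univ h0 (fun h => p.1 i h • Fm d (i : ℕ) (h0 : ℕ)),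
          if_pos (mem_univ _)]
      rw [← e1, hp', zero_mul]
    intro i0 h0
    have h2 : (∑ i : Fin (d + 1), p.1 i h0 • Fm d (i : ℕ) (h0 : ℕ))
        (pt d (i0 : ℕ)) (pt d (h0 : ℕ)) = 0 := by
      rw [h1 h0, Matrix.zero_apply]
    rw [Matrix.sum_apply] at h2
    have h3 : ∀ i : Fin (d + 1),
        (p.1 i h0 • Fm d (i : ℕ) (h0 : ℕ)) (pt d (i0 : ℕ)) (pt d (h0 : ℕ))
          = if i = i0 then p.1 i h0 * (sc (h0 : ℕ))⁻¹ else 0 := by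
      intro i
      show p.1 i h0 • ((sc (h0 : ℕ))⁻¹
          • (uu (i : ℕ) (pt d (i0 : ℕ)) * uu (h0 : ℕ) (pt d (h0 : ℕ)))) = _
      rw [uu_pt (fle i0), uu_pt (fle h0), if_pos rfl]
      by_cases hii : (i : ℕ) = (i0 : ℕ)
      · rw [if_pos hii, if_pos (Fin.val_injective hii), smul_eq_mul, smul_eq_mul]; ring
      · rw [if_neg hii, if_neg (fun hh : i = i0 => hii (by rw [hh])), smul_eq_mul,
          smul_eq_mul]; ring
    rw [Finset.sum_congr rfl fun i _ => h3 i,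
      Finset.sum_ite_eq' univ i0 (fun i => p.1 i h0 * (sc (h0 : ℕ))⁻¹),
      if_pos (mem_univ _)] at h2
    exact (mul_eq_zero.mp h2).resolve_right (inv_ne_zero (sc_ne_zero _))
  have hsum0 : (∑ q : sig d, p.2 q • Pq q) = 0 := by
    have e0 : psi d p = ∑ q : sig d, p.2 q • Pq q := by
      unfold psi
      have hz : (∑ t : Fin (d + 1) × Fin (d + 1),
          p.1 t.1 t.2 • Fm d (t.1 : ℕ) (t.2 : ℕ)) = 0 :=
        Finset.sum_eq_zero fun t _ => by rw [hC t.1 t.2, zero_smul]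
      rw [hz, zero_add]
    rw [← e0, hp']
  have hc : ∀ q0 : sig d, p.2 q0 = 0 := by
    intro q0
    obtain ⟨hb1, hb2, hb3, hb4⟩ := Pq_bounds q0
    have e2 : (∑ q : sig d, p.2 q • Pq q) * Pq q0 = p.2 q0 • Pq q0 := by
      rw [Finset.sum_mul]
      have hq : ∀ q : sig d, (p.2 q • Pq q) * Pq q0
          = if q = q0 then p.2 q • Pq q0 else 0 := fun q => by
        rw [smul_mul_assoc, Pq_mul_Pq]
        split_ifs with hqq
        · rw [hqq]
        · rw [smul_zero]
      rw [Finset.sum_congr rfl fun q _ => hq q,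
        Finset.sum_ite_eq' univ q0 (fun q => p.2 q • Pq q0), if_pos (mem_univ _)]
    rw [hsum0, zero_mul] at e2
    have h6 : Pq q0 (pt d ((q0.1.1 : ℕ))) (pt d ((q0.1.1 : ℕ)))
        = ((2 : ℂ) ^ ((q0.1.2 : ℕ)))⁻¹ := by
      unfold Pq
      rw [Pm_apply, if_pos ⟨rho_pt hb4, rho_pt hb4, fun k _ => rfl⟩, sg_mul_self, one_mul]
    have h7 := congrArg (fun M : Matrix (XX d) (XX d) ℂ =>
      M (pt d ((q0.1.1 : ℕ))) (pt d ((q0.1.1 : ℕ)))) e2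
    simp only [Matrix.zero_apply, Matrix.smul_apply] at h7
    rw [h6, smul_eq_mul] at h7
    exact (mul_eq_zero.mp h7.symm).resolve_right
      (inv_ne_zero (pow_ne_zero _ two_ne_zero))
  have hp1 : p.1 = 0 := by
    ext i h
    rw [hC i h, Matrix.zero_apply]
  have hp2 : p.2 = 0 := funext fun q => hc q
  exact Prod.ext_iff.mpr ⟨hp1, hp2⟩

end TW
namespace TW
open Finset Matrix

variable {d : ℕ}

lemma card_sig : Fintype.card (sig d) = d * (d - 1) / 2 := by
  rw [Fintype.card_subtype, Finset.card_filter, Fintype.sum_prod_type]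
  have h1 : ∀ i : Fin (d + 1),
      (∑ h : Fin (d + 1), if 1 ≤ (h : ℕ) ∧ (h : ℕ) < (i : ℕ) then 1 else 0) = (i : ℕ) - 1 := by
    intro i
    rw [Fin.sum_univ_eq_sum_range (fun h => if 1 ≤ h ∧ h < (i : ℕ) then 1 else 0) (d + 1),
      ← Finset.sum_filter]
    have hi := i.is_lt
    have hset : (range (d + 1)).filter (fun h => 1 ≤ h ∧ h < (i : ℕ)) = Ico 1 (i : ℕ) := by
      ext a
      simp only [Finset.mem_filter, Finset.mem_range, Finset.mem_Ico]
      omega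
    rw [hset, Finset.sum_const, Nat.card_Ico, smul_eq_mul, mul_one]
  rw [Finset.sum_congr rfl fun i _ => h1 i,
    Fin.sum_univ_eq_sum_range (fun n => n - 1) (d + 1), Finset.sum_range_succ']
  simp only [Nat.add_sub_cancel, Nat.zero_sub, add_zero]
  exact Finset.sum_range_id d

lemma finrank_MA : Module.finrank ℂ (MA d) = (d + 1) ^ 2 + d * (d - 1) / 2 := by
  rw [Module.finrank_prod, Module.finrank_matrix, Module.finrank_pi, card_sig,
    Module.finrank_self, Fintype.card_fin]
  have : (d + 1) * (d + 1) * 1 = (d + 1) ^ 2 := by ring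
  rw [this]

/-- reindexing of a function algebra along an equivalence of index types. -/
def piCongr {α β : Type} (e : α ≃ β) : (α → ℂ) ≃ₐ[ℂ] (β → ℂ) where
  toFun f := f ∘ e.symm
  invFun g := g ∘ e
  left_inv f := by funext a; simp
  right_inv g := by funext b; simp
  map_mul' f g := rfl
  map_add' f g := rfl
  commutes' r := rfl

/-- congruence of the second factor of a product algebra. -/
def prodCongrRight (A : Type*) {B C : Type*} [Semiring A] [Semiring B] [Semiring C]
    [Algebra ℂ A] [Algebra ℂ B] [Algebra ℂ C] (e : B ≃ₐ[ℂ] C) : (A × B) ≃ₐ[ℂ] (A × C) where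
  toFun p := (p.1, e p.2)
  invFun p := (p.1, e.symm p.2)
  left_inv p := by simp
  right_inv p := by simp
  map_mul' p q := Prod.ext_iff.mpr ⟨rfl, map_mul e _ _⟩
  map_add' p q := Prod.ext_iff.mpr ⟨rfl, map_add e _ _⟩
  commutes' r := Prod.ext_iff.mpr ⟨rfl, e.commutes r⟩

end TW

/-- For `d ≥ 1`, the Terwilliger algebra of the wreath power
`(K_2)^{≀d}` has `ℂ`-dimension `(d+1)² + d(d-1)/2` and is isomorphic as a
`ℂ`-algebra to `M_{d+1}(ℂ) × ℂ^{d(d-1)/2}`. -/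
theorem terwilliger_wreath_power_K2 (d : ℕ) (hd : 1 ≤ d) :
    Module.finrank ℂ ↥(Tpow d 2 le_rfl) = (d + 1) ^ 2 + d * (d - 1) / 2 ∧
      Nonempty (↥(Tpow d 2 le_rfl) ≃ₐ[ℂ]
        Matrix (Fin (d + 1)) (Fin (d + 1)) ℂ × (Fin (d * (d - 1) / 2) → ℂ)) := by
  have hT : TW.TT d = Tpow d 2 le_rfl := rfl
  have hcard : Fintype.card (TW.sig d) = d * (d - 1) / 2 := TW.card_sig
  let e0 : TW.MA d ≃ₐ[ℂ] (TW.Psi d).range :=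
    AlgEquiv.ofInjective (TW.Psi d) TW.psi_injective
  let e1 : ((TW.Psi d).range : Subalgebra ℂ (Matrix (TW.XX d) (TW.XX d) ℂ))
      ≃ₐ[ℂ] (Tpow d 2 le_rfl) :=
    Subalgebra.equivOfEq _ _ (TW.range_eq.trans hT)
  let eT : TW.MA d ≃ₐ[ℂ] ↥(Tpow d 2 le_rfl) := e0.trans e1
  constructor
  · rw [← eT.toLinearEquiv.finrank_eq]
    exact TW.finrank_MA
  · refine ⟨eT.symm.trans ?_⟩
    exact TW.prodCongrRight _ (TW.piCongr (Fintype.equivFinOfCardEq hcard))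
end
end
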